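/- arXiv:1612.03875 — 2 statements merged into one kernel-verified Lean document; each statement's English description precedes it below -/
import Mathlib

section
/- Intrinsic steerability is convex: let {ρ̂^{a,x}} and {σ̂^{a,x}} be assemblages with the same input set Fin s, output set Fin r, and Bob space ℂ^{dB}, and let λ ∈ [0,1]. Then the mixture τ̂^{a,x} := λ·ρ̂^{a,x} + (1-λ)·σ̂^{a,x} is an assemblage and S(Ā;B)_τ̂ ≤ λ·S(Ā;B)_ρ̂ + (1-λ)·S(Ā;B)_σ̂. -/
open scoped BigOperators
open Matrix Kronecker
open scoped ComplexOrder

noncomputable section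

/-- `φ(t) = -t·log₂ t`. -/
noncomputable def entPhi (t : ℝ) : ℝ := -(t * Real.logb 2 t)

/-- von Neumann entropy (in bits) of a Hermitian matrix, via its eigenvalues. -/
noncomputable def vnEntropy {n : Type*} [Fintype n] [DecidableEq n] (ρ : Matrix n n ℂ) : ℝ :=
  if h : ρ.IsHermitian then ∑ i, entPhi (h.eigenvalues i) else 0

/-- Partial trace over the second factor. -/
def ptrace2 {I J : Type*} [Fintype J] (ρ : Matrix (I × J) (I × J) ℂ) : Matrix I I ℂ :=
  Matrix.of fun i i' => ∑ j, ρ (i, j) (i', j)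

/-- Partial trace over the first factor. -/
def ptrace1 {I J : Type*} [Fintype I] (ρ : Matrix (I × J) (I × J) ℂ) : Matrix J J ℂ :=
  Matrix.of fun j j' => ∑ i, ρ (i, j) (i, j')

/-- Marginal on `K × M` of a state on `K × L × M`. -/
def margKM {K L M : Type*} [Fintype L] (σ : Matrix (K × L × M) (K × L × M) ℂ) :
    Matrix (K × M) (K × M) ℂ :=
  Matrix.of fun p q => ∑ l, σ (p.1, l, p.2) (q.1, l, q.2)

/-- Marginal on `L × M` of a state on `K × L × M`. -/
def margLM {K L M : Type*} [Fintype K] (σ : Matrix (K × L × M) (K × L × M) ℂ) :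
    Matrix (L × M) (L × M) ℂ :=
  Matrix.of fun p q => ∑ k, σ (k, p.1, p.2) (k, q.1, q.2)

/-- Marginal on `M` of a state on `K × L × M`. -/
def margM {K L M : Type*} [Fintype K] [Fintype L] (σ : Matrix (K × L × M) (K × L × M) ℂ) :
    Matrix M M ℂ :=
  Matrix.of fun m m' => ∑ k, ∑ l, σ (k, l, m) (k, l, m')

/-- Conditional mutual information `I(K;L|M)` of a state on `K × L × M`. -/
noncomputable def CMI {K L M : Type*} [Fintype K] [Fintype L] [Fintype M]
    [DecidableEq K] [DecidableEq L] [DecidableEq M]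
    (σ : Matrix (K × L × M) (K × L × M) ℂ) : ℝ :=
  vnEntropy (margKM σ) + vnEntropy (margLM σ) - vnEntropy σ - vnEntropy (margM σ)

def IsProbDist {X : Type*} [Fintype X] (p : X → ℝ) : Prop :=
  (∀ x, 0 ≤ p x) ∧ ∑ x, p x = 1

/-- An assemblage: PSD members, normalized for each input, and no-signaling. -/
def IsAssemblage {A X B : Type*} [Fintype A] [Fintype B]
    (ρ : A → X → Matrix B B ℂ) : Prop :=
  (∀ a x, (ρ a x).PosSemidef) ∧
  (∀ x, ∑ a, (ρ a x).trace = 1) ∧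
  (∀ x x' : X, ∑ a, ρ a x = ∑ a, ρ a x')

/-- Apply one branch (CP map with Kraus operators `V u`) of a quantum instrument. -/
def instrApply {B : Type*} [Fintype B] {dB' nk : ℕ}
    (V : Fin nk → Matrix (Fin dB') B ℂ) (σ : Matrix B B ℂ) :
    Matrix (Fin dB') (Fin dB') ℂ :=
  ∑ u, V u * σ * (V u)ᴴ

/-- The classical-quantum state `∑_{x,a,y} p(x|y)·|x⟩⟨x| ⊗ |a⟩⟨a| ⊗ ext^{a,x,y} ⊗ |y⟩⟨y|`. -/
def cqStateS {A X : Type*} [DecidableEq A] [DecidableEq X] {dB' dE m : ℕ}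
    (p : X → Fin m → ℝ)
    (ext : A → X → Fin m → Matrix (Fin dB' × Fin dE) (Fin dB' × Fin dE) ℂ) :
    Matrix ((X × A) × Fin dB' × Fin dE × Fin m) ((X × A) × Fin dB' × Fin dE × Fin m) ℂ :=
  Matrix.of fun q q' =>
    if q.1 = q'.1 ∧ q.2.2.2 = q'.2.2.2 then
      (p q.1.1 q.2.2.2 : ℂ) * ext q.1.2 q.1.1 q.2.2.2 (q.2.1, q.2.2.1) (q'.2.1, q'.2.2.1)
    else 0

/-- Intrinsic steerability `S(Ā;B)`: sup over 1W-LOCC operations (instruments `V` together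
with conditional distributions `pXY`), inf over non-signaling extensions, of `I(XĀ;B'|EY)`. -/
noncomputable def IS {A X B : Type*} [Fintype A] [Fintype X] [Fintype B]
    [DecidableEq A] [DecidableEq X] [DecidableEq B]
    (ρ : A → X → Matrix B B ℂ) : ℝ :=
  sSup { v : ℝ | ∃ (m dB' nk : ℕ) (V : Fin m → Fin nk → Matrix (Fin dB') B ℂ)
      (pXY : X → Fin m → ℝ), 1 ≤ m ∧ 1 ≤ dB' ∧
      (∑ y, ∑ u, (V y u)ᴴ * V y u) = (1 : Matrix B B ℂ) ∧
      (∀ y, IsProbDist fun x => pXY x y) ∧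
      v = sInf { w : ℝ | ∃ dE : ℕ, 1 ≤ dE ∧
        ∃ ext : A → X → Fin m → Matrix (Fin dB' × Fin dE) (Fin dB' × Fin dE) ℂ,
          (∀ a x y, (ext a x y).PosSemidef) ∧
          (∀ a x y, ptrace2 (ext a x y) = instrApply (V y) (ρ a x)) ∧
          (∀ (x x' : X) (y : Fin m), ∑ a, ext a x y = ∑ a, ext a x' y) ∧
          w = CMI (cqStateS pXY ext) } }

namespace SteerAux
open Polynomial
set_option linter.unusedSectionVars false

lemma entPhi_zero : entPhi 0 = 0 := by simp [entPhi]

lemma entPhi_eq (t : ℝ) : entPhi t = Real.negMulLog t / Real.log 2 := by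
  simp only [entPhi, Real.negMulLog, Real.logb]; ring

lemma concaveOn_entPhi : ConcaveOn ℝ (Set.Ici 0) entPhi := by
  have h := Real.concaveOn_negMulLog.smul (c := (Real.log 2)⁻¹) (by positivity)
  have hfun : entPhi = fun x => (Real.log 2)⁻¹ • x.negMulLog := by
    funext t
    rw [entPhi_eq]
    simp [smul_eq_mul, div_eq_mul_inv, mul_comm]
  rw [hfun]; exact h

lemma entPhi_mul {c t : ℝ} (hc : 0 ≤ c) (ht : 0 ≤ t) :
    entPhi (c * t) = c * entPhi t + t * entPhi c := by
  rcases eq_or_lt_of_le hc with rfl|hc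
  · simp [entPhi]
  rcases eq_or_lt_of_le ht with rfl|ht
  · simp [entPhi]
  have h : Real.logb 2 (c * t) = Real.logb 2 c + Real.logb 2 t :=
    Real.logb_mul hc.ne' ht.ne'
  simp only [entPhi, h]; ring

lemma entPhi_nonneg {t : ℝ} (h0 : 0 ≤ t) (h1 : t ≤ 1) : 0 ≤ entPhi t := by
  rcases eq_or_lt_of_le h0 with rfl|h0
  · simp [entPhi]
  have hl : Real.logb 2 t ≤ 0 := Real.logb_nonpos (by norm_num) h0.le h1
  have := mul_nonneg h0.le (neg_nonneg.2 hl)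
  simpa [entPhi, mul_comm] using by nlinarith

lemma sum_mul_entPhi_le {ι : Type*} (s : Finset ι) (w x : ι → ℝ)
    (hw : ∀ i ∈ s, 0 ≤ w i) (hw1 : ∑ i ∈ s, w i = 1) (hx : ∀ i ∈ s, 0 ≤ x i) :
    ∑ i ∈ s, w i * entPhi (x i) ≤ entPhi (∑ i ∈ s, w i * x i) := by
  have := concaveOn_entPhi.le_map_sum hw hw1 (fun i hi => Set.mem_Ici.2 (hx i hi))
  simpa [smul_eq_mul] using this

lemma sum_entPhi_le_card {ι : Type*} [Fintype ι] (q : ι → ℝ) (hq : ∀ i, 0 ≤ q i) :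
    ∑ i, entPhi (q i) ≤ (∑ i, q i) * Real.logb 2 (Fintype.card ι) + entPhi (∑ i, q i) := by
  rcases isEmpty_or_nonempty ι with h|h
  · simp [entPhi]
  have hN : (0:ℝ) < (Fintype.card ι : ℝ) := by
    exact_mod_cast Fintype.card_pos
  set N : ℝ := (Fintype.card ι : ℝ) with hNdef
  set T : ℝ := ∑ i, q i with hT
  have hT0 : 0 ≤ T := Finset.sum_nonneg fun i _ => hq i
  have jensen : ∑ i, N⁻¹ * entPhi (q i) ≤ entPhi (∑ i, N⁻¹ * q i) := by
    apply sum_mul_entPhi_le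
    · intro i _; positivity
    · rw [Finset.sum_const, Finset.card_univ, nsmul_eq_mul]
      field_simp
      exact hNdef.symm
    · intro i _; exact hq i
  have hsum : ∑ i, N⁻¹ * q i = N⁻¹ * T := by rw [← Finset.mul_sum]
  rw [hsum] at jensen
  have hscale : entPhi (N⁻¹ * T) = N⁻¹ * entPhi T + T * entPhi N⁻¹ :=
    entPhi_mul (by positivity) hT0
  have hinv : entPhi N⁻¹ = N⁻¹ * Real.logb 2 N := by
    simp only [entPhi, Real.logb_inv]; ring
  have h2 : ∑ i, N⁻¹ * entPhi (q i) = N⁻¹ * ∑ i, entPhi (q i) := by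
    rw [← Finset.mul_sum]
  rw [h2, hscale, hinv] at jensen
  have := mul_le_mul_of_nonneg_left jensen hN.le
  calc ∑ i, entPhi (q i) = N * (N⁻¹ * ∑ i, entPhi (q i)) := by field_simp
    _ ≤ N * (N⁻¹ * entPhi T + T * (N⁻¹ * Real.logb 2 N)) := this
    _ = T * Real.logb 2 N + entPhi T := by field_simp; ring

variable {n m : Type*} [Fintype n] [DecidableEq n] [Fintype m] [DecidableEq m]

def eigMS {A : Matrix n n ℂ} (hA : A.IsHermitian) : Multiset ℝ :=
  Finset.univ.val.map hA.eigenvalues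

lemma vnEntropy_eq_sum {A : Matrix n n ℂ} (hA : A.IsHermitian) :
    vnEntropy A = ((eigMS hA).map entPhi).sum := by
  rw [vnEntropy, dif_pos hA, eigMS, Multiset.map_map]
  rfl

lemma charpoly_conj {S S' A : Matrix n n ℂ} (h : S * S' = 1) :
    (S * A * S').charpoly = A.charpoly := by
  unfold Matrix.charpoly
  have key : charmatrix (S * A * S') =
      (C : ℂ →+* ℂ[X]).mapMatrix S * charmatrix A * (C : ℂ →+* ℂ[X]).mapMatrix S' := by
    unfold charmatrix
    rw [mul_sub, sub_mul]
    congr 1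
    · have hc : Commute (Matrix.scalar n (X : ℂ[X]))
          ((C : ℂ →+* ℂ[X]).mapMatrix S) := (Matrix.scalar_commute _ (Commute.all _) _)
      rw [← hc.eq, mul_assoc, ← _root_.map_mul, h, _root_.map_one, mul_one]
    · rw [← _root_.map_mul, ← _root_.map_mul]
  rw [key, det_mul, det_mul]
  have hdet : ((C : ℂ →+* ℂ[X]).mapMatrix S).det * ((C : ℂ →+* ℂ[X]).mapMatrix S').det = 1 := by
    rw [← det_mul, ← _root_.map_mul, h, _root_.map_one, det_one]
  calc ((C : ℂ →+* ℂ[X]).mapMatrix S).det * (charmatrix A).det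
        * ((C : ℂ →+* ℂ[X]).mapMatrix S').det
      = (((C : ℂ →+* ℂ[X]).mapMatrix S).det * ((C : ℂ →+* ℂ[X]).mapMatrix S').det)
        * (charmatrix A).det := by ring
    _ = (charmatrix A).det := by rw [hdet, one_mul]

lemma charpoly_diagonal (d : n → ℂ) :
    (diagonal d).charpoly = ∏ i, ((X : ℂ[X]) - C (d i)) := by
  unfold Matrix.charpoly
  have : charmatrix (diagonal d) = diagonal (fun i => (X : ℂ[X]) - C (d i)) := by
    ext i j
    by_cases hij : i = j
    · subst hij; simp
    · simp [charmatrix_apply, diagonal_apply_ne _ hij]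
  rw [this, det_diagonal]

lemma charpoly_isHermitian {A : Matrix n n ℂ} (hA : A.IsHermitian) :
    A.charpoly = ((eigMS hA).map (fun r : ℝ => ((X : ℂ[X]) - C (r:ℂ)))).prod := by
  have hU : (hA.eigenvectorUnitary : Matrix n n ℂ) * star (hA.eigenvectorUnitary : Matrix n n ℂ)
      = 1 := Matrix.mem_unitaryGroup_iff.mp hA.eigenvectorUnitary.2
  conv_lhs => rw [hA.spectral_theorem, Unitary.conjStarAlgAut_apply]
  rw [charpoly_conj hU, charpoly_diagonal, eigMS, Multiset.map_map]
  change _ = (Finset.univ.val.map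
    (fun i => (X : ℂ[X]) - C ((hA.eigenvalues i : ℝ) : ℂ))).prod
  rw [← Finset.prod_eq_multiset_prod]
  congr 1

lemma roots_prod_X_sub_C_real (s : Multiset ℝ) :
    ((s.map (fun r : ℝ => ((X : ℂ[X]) - C (r:ℂ)))).prod).roots
      = s.map (fun r : ℝ => (r:ℂ)) := by
  have h : (s.map (fun r : ℝ => ((X : ℂ[X]) - C (r:ℂ))))
      = ((s.map (fun r : ℝ => (r:ℂ))).map (fun a : ℂ => X - C a)) := by
    rw [Multiset.map_map]; rfl
  rw [h, Polynomial.roots_multiset_prod_X_sub_C]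

lemma eigMS_unique {A : Matrix n n ℂ} (hA : A.IsHermitian) (ms : Multiset ℝ)
    (h : A.charpoly = ((ms.map (fun r : ℝ => ((X:ℂ[X]) - C (r:ℂ)))).prod)) :
    eigMS hA = ms := by
  have h2 := (charpoly_isHermitian hA).symm.trans h
  have := congrArg Polynomial.roots h2
  rw [roots_prod_X_sub_C_real, roots_prod_X_sub_C_real] at this
  exact Multiset.map_injective Complex.ofReal_injective this

lemma vnEntropy_eq_of_charpoly {A : Matrix n n ℂ} {B : Matrix m m ℂ}
    (hA : A.IsHermitian) (hB : B.IsHermitian) (h : A.charpoly = B.charpoly) :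
    vnEntropy A = vnEntropy B := by
  rw [vnEntropy_eq_sum hA, vnEntropy_eq_sum hB,
    eigMS_unique hA (eigMS hB) (h.trans (charpoly_isHermitian hB))]

lemma trace_eq_eigMS_sum {A : Matrix n n ℂ} (hA : A.IsHermitian) :
    A.trace = (((eigMS hA).sum : ℝ) : ℂ) := by
  rw [Matrix.trace_eq_sum_roots_charpoly, charpoly_isHermitian hA,
    roots_prod_X_sub_C_real]
  have hco : (fun r : ℝ => (r:ℂ)) = ⇑Complex.ofRealHom := rfl
  rw [hco, ← map_multiset_sum]; rfl

lemma trace_re_eq_eigMS_sum {A : Matrix n n ℂ} (hA : A.IsHermitian) :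
    A.trace.re = (eigMS hA).sum := by
  rw [trace_eq_eigMS_sum hA, Complex.ofReal_re]


lemma isHermitian_reindex {A : Matrix n n ℂ} (e : n ≃ m) (hA : A.IsHermitian) :
    (Matrix.reindex e e A).IsHermitian := hA.submatrix _

lemma vnEntropy_reindex (e : n ≃ m) (A : Matrix n n ℂ) :
    vnEntropy (Matrix.reindex e e A) = vnEntropy A := by
  by_cases hA : A.IsHermitian
  · exact vnEntropy_eq_of_charpoly (isHermitian_reindex e hA) hA (Matrix.charpoly_reindex e A)
  · rw [vnEntropy, dif_neg, vnEntropy, dif_neg hA]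
    intro hc
    have := hc.submatrix (e : n → m)
    rw [Matrix.reindex_apply, Matrix.submatrix_submatrix] at this
    have h2 : (⇑e.symm ∘ ⇑e) = id := funext fun x => e.symm_apply_apply x
    rw [h2, Matrix.submatrix_id_id] at this
    exact hA this

lemma isHermitian_fromBlocks {A : Matrix n n ℂ} {B : Matrix m m ℂ}
    (hA : A.IsHermitian) (hB : B.IsHermitian) :
    (Matrix.fromBlocks A 0 0 B).IsHermitian := by
  unfold Matrix.IsHermitian
  rw [Matrix.fromBlocks_conjTranspose]
  simp [hA.eq, hB.eq]

lemma vnEntropy_fromBlocks {A : Matrix n n ℂ} {B : Matrix m m ℂ}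
    (hA : A.IsHermitian) (hB : B.IsHermitian) :
    vnEntropy (Matrix.fromBlocks A 0 0 B) = vnEntropy A + vnEntropy B := by
  have hH := isHermitian_fromBlocks hA hB
  have hcp : (Matrix.fromBlocks A 0 0 B).charpoly = A.charpoly * B.charpoly :=
    Matrix.charpoly_fromBlocks_zero₁₂ A 0 B
  have he : eigMS hH = eigMS hA + eigMS hB := by
    apply eigMS_unique
    rw [hcp, charpoly_isHermitian hA, charpoly_isHermitian hB,
      Multiset.map_add, Multiset.prod_add]
  rw [vnEntropy_eq_sum hH, vnEntropy_eq_sum hA, vnEntropy_eq_sum hB, he,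
    Multiset.map_add, Multiset.sum_add]

lemma isHermitian_blockDiagonal {I κ : Type*} [Fintype I] [DecidableEq I]
    [Fintype κ] [DecidableEq κ] {M : κ → Matrix I I ℂ} (hM : ∀ c, (M c).IsHermitian) :
    (Matrix.blockDiagonal M).IsHermitian := by
  unfold Matrix.IsHermitian
  rw [Matrix.blockDiagonal_conjTranspose]
  simp only [funext fun c => (hM c).eq]

lemma charmatrix_blockDiagonal {I κ : Type*} [Fintype I] [DecidableEq I]
    [Fintype κ] [DecidableEq κ] (M : κ → Matrix I I ℂ) :
    charmatrix (Matrix.blockDiagonal M) = Matrix.blockDiagonal (fun c => charmatrix (M c)) := by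
  ext ⟨i, c⟩ ⟨j, c'⟩
  by_cases hc : c = c'
  · subst hc
    by_cases hij : i = j
    · subst hij; simp [Matrix.blockDiagonal_apply]
    · simp [charmatrix_apply, Matrix.blockDiagonal_apply, Matrix.diagonal_apply,
        hij, Prod.ext_iff]
  · simp [charmatrix_apply, Matrix.blockDiagonal_apply, Matrix.diagonal_apply,
      hc, Prod.ext_iff]

lemma vnEntropy_blockDiagonal {I κ : Type*} [Fintype I] [DecidableEq I]
    [Fintype κ] [DecidableEq κ] (M : κ → Matrix I I ℂ) (hM : ∀ c, (M c).IsHermitian) :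
    vnEntropy (Matrix.blockDiagonal M) = ∑ c, vnEntropy (M c) := by
  have hH := isHermitian_blockDiagonal hM
  have hcp : (Matrix.blockDiagonal M).charpoly = ∏ c, (M c).charpoly := by
    unfold Matrix.charpoly
    rw [charmatrix_blockDiagonal, Matrix.det_blockDiagonal]
  have he : eigMS hH = ∑ c, eigMS (hM c) := by
    apply eigMS_unique
    rw [hcp]
    have : ∀ c : κ, (M c).charpoly
        = ((eigMS (hM c)).map (fun r : ℝ => ((X:ℂ[X]) - C (r:ℂ)))).prod :=
      fun c => charpoly_isHermitian (hM c)
    simp_rw [this]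
    have hmap : (Multiset.map (fun r : ℝ => ((X:ℂ[X]) - C (r:ℂ)))
        (∑ c, eigMS (hM c))) = ∑ c, (Multiset.map (fun r : ℝ => ((X:ℂ[X]) - C (r:ℂ)))
        (eigMS (hM c))) :=
      map_sum (Multiset.mapAddMonoidHom _) _ _
    rw [hmap, Multiset.prod_sum]
  rw [vnEntropy_eq_sum hH, he]
  have hmap2 : (Multiset.map entPhi (∑ c, eigMS (hM c)))
      = ∑ c, (Multiset.map entPhi (eigMS (hM c))) :=
    map_sum (Multiset.mapAddMonoidHom _) _ _
  rw [hmap2, Multiset.sum_sum]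
  exact Finset.sum_congr rfl fun c _ => (vnEntropy_eq_sum (hM c)).symm

lemma vnEntropy_diagonal (d : n → ℝ) :
    vnEntropy (Matrix.diagonal (fun i => (d i : ℂ))) = ∑ i, entPhi (d i) := by
  have hH : (Matrix.diagonal (fun i => (d i : ℂ))).IsHermitian :=
    Matrix.isHermitian_diagonal_iff.2 fun i => Complex.conj_ofReal (d i)
  have he : eigMS hH = Finset.univ.val.map d := by
    apply eigMS_unique
    rw [charpoly_diagonal, Multiset.map_map]
    rw [← Finset.prod_eq_multiset_prod]
    rfl
  rw [vnEntropy_eq_sum hH, he, Multiset.map_map]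
  rfl


lemma complex_mul_nonneg {z w : ℂ} (hz : 0 ≤ z) (hw : 0 ≤ w) : 0 ≤ z * w :=
  mul_nonneg hz hw

lemma star_real_coe (c : ℝ) : star ((c:ℝ) : ℂ) = ((c:ℝ) : ℂ) := by
  rw [Complex.star_def, Complex.conj_ofReal]

lemma isHermitian_real_smul {A : Matrix n n ℂ} (hA : A.IsHermitian) (c : ℝ) :
    (((c:ℝ):ℂ) • A).IsHermitian := by
  unfold Matrix.IsHermitian
  rw [Matrix.conjTranspose_smul, hA.eq, star_real_coe]

lemma posSemidef_real_smul {A : Matrix n n ℂ} (hA : A.PosSemidef) {c : ℝ} (hc : 0 ≤ c) :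
    (((c:ℝ):ℂ) • A).PosSemidef := by
  refine Matrix.PosSemidef.of_dotProduct_mulVec_nonneg (isHermitian_real_smul hA.1 c) fun x => ?_
  rw [Matrix.smul_mulVec, dotProduct_smul]
  have h0 : (0:ℂ) ≤ ((c:ℝ):ℂ) := by exact_mod_cast hc
  simpa [smul_eq_mul] using complex_mul_nonneg h0 (hA.dotProduct_mulVec_nonneg x)

lemma posSemidef_sum {K : Type*} [Fintype K] (B : K → Matrix n n ℂ)
    (hB : ∀ k, (B k).PosSemidef) : (∑ k, B k).PosSemidef := by
  classical
  exact Finset.sum_induction _ _ (fun a b ha hb => ha.add hb) Matrix.PosSemidef.zero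
    (fun k _ => hB k)

lemma posSemidef_blockDiagonal {I κ : Type*} [Fintype I] [DecidableEq I]
    [Fintype κ] [DecidableEq κ] (M : κ → Matrix I I ℂ) (hM : ∀ c, (M c).PosSemidef) :
    (Matrix.blockDiagonal M).PosSemidef := by
  refine Matrix.PosSemidef.of_dotProduct_mulVec_nonneg (isHermitian_blockDiagonal fun c => (hM c).1) fun x => ?_
  have hmv : ∀ (i : I) (c : κ), (Matrix.blockDiagonal M *ᵥ x) (i, c)
      = ∑ j, M c i j * x (j, c) := by
    intro i c
    rw [Matrix.mulVec, dotProduct, Fintype.sum_prod_type]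
    simp only [Matrix.blockDiagonal_apply, ite_mul, zero_mul]
    rw [Finset.sum_comm]
    simp [Finset.sum_ite_eq]
  have key : dotProduct (star x) (Matrix.blockDiagonal M *ᵥ x)
      = ∑ c, dotProduct (star fun i => x (i, c)) (M c *ᵥ (fun i => x (i, c))) := by
    rw [dotProduct, Fintype.sum_prod_type, Finset.sum_comm]
    refine Finset.sum_congr rfl fun c _ => ?_
    rw [dotProduct]
    refine Finset.sum_congr rfl fun i _ => ?_
    rw [hmv]
    simp [Matrix.mulVec, dotProduct]
  rw [key]
  exact Finset.sum_nonneg fun c _ => (hM c).dotProduct_mulVec_nonneg _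

lemma spectral_entry {A : Matrix n n ℂ} (hH : A.IsHermitian) (j j' : n) :
    A j j' = ∑ i, (hH.eigenvalues i : ℂ)
      * ((hH.eigenvectorUnitary : Matrix n n ℂ) j i
        * (starRingEnd ℂ) ((hH.eigenvectorUnitary : Matrix n n ℂ) j' i)) := by
  conv_lhs => rw [hH.spectral_theorem, Unitary.conjStarAlgAut_apply]
  rw [Matrix.mul_apply]
  have hmid : ∀ k, ((hH.eigenvectorUnitary : Matrix n n ℂ)
      * (Matrix.diagonal (RCLike.ofReal ∘ hH.eigenvalues) : Matrix n n ℂ)) j k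
      = (hH.eigenvectorUnitary : Matrix n n ℂ) j k * (hH.eigenvalues k : ℂ) := by
    intro k
    rw [Matrix.mul_apply]
    simp [Matrix.diagonal_apply, Finset.sum_ite_eq]
  refine Finset.sum_congr rfl fun k _ => ?_
  rw [hmid]
  rw [Matrix.star_apply]
  rw [Complex.star_def]
  ring

lemma unitary_row_normSq {A : Matrix n n ℂ} (hH : A.IsHermitian) (j : n) :
    ∑ i, Complex.normSq ((hH.eigenvectorUnitary : Matrix n n ℂ) j i) = 1 := by
  have hUU : (hH.eigenvectorUnitary : Matrix n n ℂ)
      * star (hH.eigenvectorUnitary : Matrix n n ℂ) = 1 :=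
    Matrix.mem_unitaryGroup_iff.mp hH.eigenvectorUnitary.2
  have h := congrArg (fun M : Matrix n n ℂ => (M j j).re) hUU
  simp only [Matrix.mul_apply, Matrix.star_apply, Matrix.one_apply_eq, Complex.one_re] at h
  rw [← h, Complex.re_sum]
  refine Finset.sum_congr rfl fun i _ => ?_
  rw [Complex.star_def, Complex.mul_conj, Complex.ofReal_re]

lemma unitary_col_normSq {A : Matrix n n ℂ} (hH : A.IsHermitian) (i : n) :
    ∑ j, Complex.normSq ((hH.eigenvectorUnitary : Matrix n n ℂ) j i) = 1 := by
  have hUU : star (hH.eigenvectorUnitary : Matrix n n ℂ)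
      * (hH.eigenvectorUnitary : Matrix n n ℂ) = 1 :=
    Matrix.mem_unitaryGroup_iff'.mp hH.eigenvectorUnitary.2
  have h := congrArg (fun M : Matrix n n ℂ => (M i i).re) hUU
  simp only [Matrix.mul_apply, Matrix.star_apply, Matrix.one_apply_eq, Complex.one_re] at h
  rw [← h, Complex.re_sum]
  refine Finset.sum_congr rfl fun j _ => ?_
  rw [Complex.star_def, mul_comm, Complex.mul_conj, Complex.ofReal_re]

lemma vnEntropy_real_smul {A : Matrix n n ℂ} (hA : A.PosSemidef) {c : ℝ} (hc : 0 ≤ c) :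
    vnEntropy (((c:ℝ):ℂ) • A) = c * vnEntropy A + A.trace.re * entPhi c := by
  have hH := hA.1
  have hH2 := isHermitian_real_smul hH c
  have hD : (Matrix.diagonal (fun i => ((c * hH.eigenvalues i : ℝ) : ℂ)))
      = ((c:ℝ):ℂ) • (Matrix.diagonal (RCLike.ofReal ∘ hH.eigenvalues) : Matrix n n ℂ) := by
    ext i j
    by_cases hij : i = j
    · subst hij
      simp [Matrix.diagonal_apply, smul_eq_mul]
    · simp [Matrix.diagonal_apply, hij]
  have key : (((c:ℝ):ℂ) • A) = (hH.eigenvectorUnitary : Matrix n n ℂ) *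
      Matrix.diagonal (fun i => ((c * hH.eigenvalues i : ℝ) : ℂ)) *
      star (hH.eigenvectorUnitary : Matrix n n ℂ) := by
    conv_lhs => rw [hH.spectral_theorem, Unitary.conjStarAlgAut_apply]
    conv_rhs => rw [hD, Matrix.mul_smul, Matrix.smul_mul]
  have hU : (hH.eigenvectorUnitary : Matrix n n ℂ)
      * star (hH.eigenvectorUnitary : Matrix n n ℂ) = 1 :=
    Matrix.mem_unitaryGroup_iff.mp hH.eigenvectorUnitary.2
  have he : eigMS hH2 = (eigMS hH).map (fun t => c * t) := by
    apply eigMS_unique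
    rw [key, charpoly_conj hU, charpoly_diagonal, eigMS, Multiset.map_map, Multiset.map_map]
    rw [← Finset.prod_eq_multiset_prod]
    rfl
  rw [vnEntropy_eq_sum hH2, he, Multiset.map_map]
  have hsum : ((eigMS hH).map (entPhi ∘ fun t => c * t)).sum
      = ∑ i, entPhi (c * hH.eigenvalues i) := by
    rw [eigMS, Multiset.map_map]; rfl
  rw [hsum]
  have hterm : ∀ i ∈ Finset.univ, entPhi (c * hH.eigenvalues i)
      = c * entPhi (hH.eigenvalues i) + hH.eigenvalues i * entPhi c :=
    fun i _ => entPhi_mul hc (hA.eigenvalues_nonneg i)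
  rw [Finset.sum_congr rfl hterm, Finset.sum_add_distrib,
    ← Finset.mul_sum, ← Finset.sum_mul]
  have h1 : vnEntropy A = ∑ i, entPhi (hH.eigenvalues i) := by
    rw [vnEntropy, dif_pos hH]
  have h2 : A.trace.re = ∑ i, hH.eigenvalues i := by
    rw [trace_re_eq_eigMS_sum hH, eigMS]; rfl
  rw [h1, h2]

lemma vnEntropy_le_sum_diag {A : Matrix n n ℂ} (hA : A.PosSemidef) :
    vnEntropy A ≤ ∑ i, entPhi ((A i i).re) := by
  have hH := hA.1
  have hdiag : ∀ i : n, (A i i).re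
      = ∑ k, Complex.normSq ((hH.eigenvectorUnitary : Matrix n n ℂ) i k) * hH.eigenvalues k := by
    intro i
    rw [spectral_entry hH i i, Complex.re_sum]
    refine Finset.sum_congr rfl fun k _ => ?_
    rw [Complex.mul_conj, ← Complex.ofReal_mul, Complex.ofReal_re]
    ring
  calc vnEntropy A = ∑ k, entPhi (hH.eigenvalues k) := by rw [vnEntropy, dif_pos hH]
    _ = ∑ k, (∑ i, Complex.normSq ((hH.eigenvectorUnitary : Matrix n n ℂ) i k))
          * entPhi (hH.eigenvalues k) := by
        refine Finset.sum_congr rfl fun k _ => ?_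
        rw [unitary_col_normSq hH k, one_mul]
    _ = ∑ i, ∑ k, Complex.normSq ((hH.eigenvectorUnitary : Matrix n n ℂ) i k)
          * entPhi (hH.eigenvalues k) := by
        rw [← Finset.sum_comm]
        exact Finset.sum_congr rfl fun k _ => by rw [Finset.sum_mul]
    _ ≤ ∑ i, entPhi (∑ k, Complex.normSq ((hH.eigenvectorUnitary : Matrix n n ℂ) i k)
          * hH.eigenvalues k) := by
        refine Finset.sum_le_sum fun i _ => ?_
        exact sum_mul_entPhi_le _ _ _ (fun k _ => Complex.normSq_nonneg _)
          (unitary_row_normSq hH i) (fun k _ => hA.eigenvalues_nonneg k)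
    _ = ∑ i, entPhi ((A i i).re) := by
        refine Finset.sum_congr rfl fun i _ => ?_
        rw [hdiag]

lemma charpoly_zero_pow : (0 : Matrix n n ℂ).charpoly = X ^ (Fintype.card n) := by
  unfold Matrix.charpoly
  have h : charmatrix (0 : Matrix n n ℂ) = Matrix.diagonal (fun _ => (X:ℂ[X])) := by
    ext i j
    by_cases hij : i = j
    · subst hij; simp
    · simp [charmatrix_apply, Matrix.diagonal_apply, hij]
  rw [h, Matrix.det_diagonal, Finset.prod_const, Finset.card_univ]

lemma charpoly_mul_comm_rect {I : Type*} [Fintype I] [DecidableEq I]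
    (M : Matrix n I ℂ) (N : Matrix I n ℂ) :
    (M * N).charpoly * X ^ (Fintype.card I) = (N * M).charpoly * X ^ (Fintype.card n) := by
  have hS : (Matrix.fromBlocks 1 (-M) 0 1 : Matrix (n ⊕ I) (n ⊕ I) ℂ) *
      Matrix.fromBlocks 1 M 0 1 = 1 := by
    rw [Matrix.fromBlocks_multiply]
    simp [← Matrix.fromBlocks_one]
  have hsim : (Matrix.fromBlocks 1 (-M) 0 1 : Matrix (n ⊕ I) (n ⊕ I) ℂ)
      * Matrix.fromBlocks (M*N) 0 N 0 * Matrix.fromBlocks 1 M 0 1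
      = Matrix.fromBlocks 0 0 N (N*M) := by
    rw [Matrix.fromBlocks_multiply, Matrix.fromBlocks_multiply]
    congr 1 <;> simp [Matrix.mul_assoc]
  have hconj : (Matrix.fromBlocks 0 0 N (N*M) : Matrix (n ⊕ I) (n ⊕ I) ℂ).charpoly
      = (Matrix.fromBlocks (M*N) 0 N 0 : Matrix (n ⊕ I) (n ⊕ I) ℂ).charpoly := by
    rw [← hsim]
    exact charpoly_conj hS
  have h1 : (Matrix.fromBlocks (M*N) 0 N 0 : Matrix (n ⊕ I) (n ⊕ I) ℂ).charpoly
      = (M*N).charpoly * X ^ (Fintype.card I) := by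
    rw [Matrix.charpoly_fromBlocks_zero₁₂ (M*N) N 0, charpoly_zero_pow]
  have h2 : (Matrix.fromBlocks 0 0 N (N*M) : Matrix (n ⊕ I) (n ⊕ I) ℂ).charpoly
      = X ^ (Fintype.card n) * (N*M).charpoly := by
    rw [Matrix.charpoly_fromBlocks_zero₁₂ 0 N (N*M), charpoly_zero_pow]
  rw [← h1, ← hconj, h2, mul_comm]

lemma charpoly_mul_X_pow {B : Matrix n n ℂ} (hB : B.IsHermitian) (k : ℕ) :
    B.charpoly * X ^ k = (((eigMS hB + Multiset.replicate k 0).map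
      (fun r : ℝ => (X:ℂ[X]) - C (r:ℂ))).prod) := by
  rw [Multiset.map_add, Multiset.prod_add, ← charpoly_isHermitian hB]
  congr 1
  rw [Multiset.map_replicate, Multiset.prod_replicate]
  norm_num

lemma vnEntropy_mul_conjTranspose_comm {I : Type*} [Fintype I] [DecidableEq I]
    (M : Matrix n I ℂ) :
    vnEntropy (M * Mᴴ) = vnEntropy (Mᴴ * M) := by
  have h1 : (M * Mᴴ).PosSemidef := Matrix.posSemidef_self_mul_conjTranspose M
  have h2 : (Mᴴ * M).PosSemidef := Matrix.posSemidef_conjTranspose_mul_self M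
  have hpad := charpoly_mul_comm_rect M Mᴴ
  have e1 := charpoly_mul_X_pow h1.1 (Fintype.card I)
  have e2 := charpoly_mul_X_pow h2.1 (Fintype.card n)
  rw [e1, e2] at hpad
  have hroots := congrArg Polynomial.roots hpad
  rw [roots_prod_X_sub_C_real, roots_prod_X_sub_C_real] at hroots
  have hms := Multiset.map_injective Complex.ofReal_injective hroots
  have hsum := congrArg (fun s : Multiset ℝ => (s.map entPhi).sum) hms
  simp only [Multiset.map_add, Multiset.sum_add, Multiset.map_replicate,
    Multiset.sum_replicate, entPhi_zero, smul_zero, add_zero] at hsum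
  rw [vnEntropy_eq_sum h1.1, vnEntropy_eq_sum h2.1]
  exact hsum

lemma vnEntropy_sum_le {K : Type*} [Fintype K]
    (B : K → Matrix n n ℂ) (hB : ∀ k, (B k).PosSemidef) :
    vnEntropy (∑ k, B k) ≤ ∑ k, vnEntropy (B k) := by
  classical
  set U : K → Matrix n n ℂ := fun k => ((hB k).1.eigenvectorUnitary : Matrix n n ℂ) with hUdef
  set e : K → n → ℝ := fun k => (hB k).1.eigenvalues with hedef
  set M : Matrix n (K × n) ℂ :=
    Matrix.of (fun j p => ((Real.sqrt (e p.1 p.2) : ℝ) : ℂ) * U p.1 j p.2) with hMdef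
  have hsq : ∀ k i, (((Real.sqrt (e k i) : ℝ):ℂ)) * (((Real.sqrt (e k i) : ℝ):ℂ))
      = ((e k i : ℝ) : ℂ) := by
    intro k i
    rw [← Complex.ofReal_mul, Real.mul_self_sqrt ((hB k).eigenvalues_nonneg i)]
  have hMM : M * Mᴴ = ∑ k, B k := by
    ext j j'
    rw [Matrix.mul_apply, Matrix.sum_apply, Fintype.sum_prod_type]
    refine Finset.sum_congr rfl fun k _ => ?_
    rw [spectral_entry (hB k).1 j j']
    refine Finset.sum_congr rfl fun i _ => ?_
    rw [Matrix.conjTranspose_apply]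
    show ((Real.sqrt (e k i):ℝ):ℂ) * U k j i * star (((Real.sqrt (e k i):ℝ):ℂ) * U k j' i) = _
    rw [star_mul', star_real_coe]
    simp only [Complex.star_def]
    linear_combination (U k j i * (starRingEnd ℂ) (U k j' i)) * hsq k i
  have hdiagG : ∀ p : K × n, ((Mᴴ * M) p p).re = e p.1 p.2 := by
    rintro ⟨k, i⟩
    rw [Matrix.mul_apply]
    have hterm : ∀ j ∈ Finset.univ, Mᴴ (k, i) j * M j (k, i)
        = ((e k i * Complex.normSq (U k j i) : ℝ) : ℂ) := by
      intro j _
      rw [Matrix.conjTranspose_apply]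
      show star (((Real.sqrt (e k i):ℝ):ℂ) * U k j i) * (((Real.sqrt (e k i):ℝ):ℂ) * U k j i) = _
      rw [star_mul', star_real_coe, Complex.star_def, Complex.ofReal_mul, ← Complex.mul_conj]
      linear_combination (U k j i * (starRingEnd ℂ) (U k j i)) * hsq k i
    rw [Finset.sum_congr rfl hterm, ← Complex.ofReal_sum, Complex.ofReal_re,
      ← Finset.mul_sum]
    have : ∑ j, Complex.normSq (U k j i) = 1 := unitary_col_normSq (hB k).1 i
    rw [this, mul_one]
  have hG : (Mᴴ * M).PosSemidef := Matrix.posSemidef_conjTranspose_mul_self M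
  calc vnEntropy (∑ k, B k) = vnEntropy (M * Mᴴ) := by rw [hMM]
    _ = vnEntropy (Mᴴ * M) := vnEntropy_mul_conjTranspose_comm M
    _ ≤ ∑ p : K × n, entPhi (((Mᴴ * M) p p).re) := vnEntropy_le_sum_diag hG
    _ = ∑ k, vnEntropy (B k) := by
        rw [Fintype.sum_prod_type]
        refine Finset.sum_congr rfl fun k _ => ?_
        rw [vnEntropy, dif_pos (hB k).1]
        exact Finset.sum_congr rfl fun i _ => by rw [hdiagG (k, i)]

lemma vnEntropy_of_blocks {γ : Type*} [Fintype γ] [DecidableEq γ]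
    (e : γ ≃ n ⊕ m) (T : Matrix γ γ ℂ) (A : Matrix n n ℂ) (B : Matrix m m ℂ)
    (hA : A.IsHermitian) (hB : B.IsHermitian)
    (h : ∀ i j, T i j = Matrix.fromBlocks A 0 0 B (e i) (e j)) :
    vnEntropy T = vnEntropy A + vnEntropy B := by
  have hT : T = Matrix.reindex e.symm e.symm (Matrix.fromBlocks A 0 0 B) := by
    ext i j
    rw [h i j, Matrix.reindex_apply, Matrix.submatrix_apply]
    simp
  rw [hT, vnEntropy_reindex, vnEntropy_fromBlocks hA hB]

lemma vnEntropy_of_blockDiagonal {γ I κ : Type*} [Fintype γ] [DecidableEq γ]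
    [Fintype I] [DecidableEq I] [Fintype κ] [DecidableEq κ]
    (e : γ ≃ I × κ) (T : Matrix γ γ ℂ) (M : κ → Matrix I I ℂ)
    (hM : ∀ c, (M c).IsHermitian)
    (h : ∀ i j, T i j = Matrix.blockDiagonal M (e i) (e j)) :
    vnEntropy T = ∑ c, vnEntropy (M c) := by
  have hT : T = Matrix.reindex e.symm e.symm (Matrix.blockDiagonal M) := by
    ext i j
    rw [h i j, Matrix.reindex_apply, Matrix.submatrix_apply]
    simp
  rw [hT, vnEntropy_reindex, vnEntropy_blockDiagonal M hM]

lemma vnEntropy_of_diagonal {γ : Type*} [Fintype γ] [DecidableEq γ]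
    (T : Matrix γ γ ℂ) (d : γ → ℝ)
    (h : ∀ i j, T i j = if i = j then ((d i : ℝ) : ℂ) else 0) :
    vnEntropy T = ∑ i, entPhi (d i) := by
  have hT : T = Matrix.diagonal (fun i => ((d i : ℝ):ℂ)) := by
    ext i j
    rw [h i j, Matrix.diagonal_apply]
  rw [hT, vnEntropy_diagonal]

section States

variable {K L M : Type*} [Fintype K] [DecidableEq K] [Fintype L] [DecidableEq L]
  [Fintype M] [DecidableEq M]

lemma isHermitian_ptrace2 {I J : Type*} [Fintype I] [DecidableEq I] [Fintype J] [DecidableEq J]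
    {σ : Matrix (I × J) (I × J) ℂ} (h : σ.IsHermitian) : (ptrace2 σ).IsHermitian := by
  ext i i'
  rw [Matrix.conjTranspose_apply]
  show star (∑ j, σ (i', j) (i, j)) = ∑ j, σ (i, j) (i', j)
  rw [star_sum]
  exact Finset.sum_congr rfl fun j _ => h.apply (i, j) (i', j)

lemma isHermitian_ptrace1 {I J : Type*} [Fintype I] [DecidableEq I] [Fintype J] [DecidableEq J]
    {σ : Matrix (I × J) (I × J) ℂ} (h : σ.IsHermitian) : (ptrace1 σ).IsHermitian := by
  ext j j'
  rw [Matrix.conjTranspose_apply]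
  show star (∑ i, σ (i, j') (i, j)) = ∑ i, σ (i, j) (i, j')
  rw [star_sum]
  exact Finset.sum_congr rfl fun i _ => h.apply (i, j) (i, j')

lemma posSemidef_ptrace2 {I J : Type*} [Fintype I] [DecidableEq I] [Fintype J] [DecidableEq J]
    {σ : Matrix (I × J) (I × J) ℂ} (h : σ.PosSemidef) : (ptrace2 σ).PosSemidef := by
  classical
  refine Matrix.PosSemidef.of_dotProduct_mulVec_nonneg (isHermitian_ptrace2 h.1) fun x => ?_
  set y : J → (I × J → ℂ) := fun j p => if p.2 = j then x p.1 else 0 with hy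
  have rhs : ∀ j, dotProduct (star (y j)) (σ *ᵥ (y j))
      = ∑ i, ∑ i', star (x i) * (σ (i,j) (i',j) * x i') := by
    intro j
    rw [dotProduct, Fintype.sum_prod_type]
    have collapse1 : ∀ (i : I) (jj : J), star (y j) (i, jj) * (σ *ᵥ y j) (i, jj)
        = if jj = j then star (x i) * (σ *ᵥ y j) (i, j) else 0 := by
      intro i jj
      rw [Pi.star_apply]
      by_cases hjj : jj = j
      · subst hjj; simp [hy]
      · simp [hy, hjj]
    rw [Finset.sum_congr rfl fun i (_ : i ∈ Finset.univ) =>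
      Finset.sum_congr rfl fun jj (_ : jj ∈ Finset.univ) => collapse1 i jj]
    rw [Finset.sum_congr rfl fun i (_ : i ∈ Finset.univ) =>
      Finset.sum_ite_eq' Finset.univ j _]
    simp only [Finset.mem_univ, if_true]
    refine Finset.sum_congr rfl fun i _ => ?_
    have hmm : (σ *ᵥ y j) (i, j) = ∑ i', σ (i, j) (i', j) * x i' := by
      show ∑ q', σ (i, j) q' * (y j) q' = _
      rw [Fintype.sum_prod_type]
      have collapse2 : ∀ (i' : I) (jj' : J), σ (i, j) (i',jj') * y j (i',jj')
          = if jj' = j then σ (i, j) (i', j) * x i' else 0 := by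
        intro i' jj'
        by_cases hjj : jj' = j
        · subst hjj; simp [hy]
        · simp [hy, hjj]
      rw [Finset.sum_congr rfl fun i' (_ : i' ∈ Finset.univ) =>
        Finset.sum_congr rfl fun jj' (_ : jj' ∈ Finset.univ) => collapse2 i' jj']
      rw [Finset.sum_congr rfl fun i' (_ : i' ∈ Finset.univ) =>
        Finset.sum_ite_eq' Finset.univ j _]
      simp only [Finset.mem_univ, if_true]
    rw [hmm, Finset.mul_sum]
  have lhs : dotProduct (star x) (ptrace2 σ *ᵥ x)
      = ∑ j, ∑ i, ∑ i', star (x i) * (σ (i, j) (i', j) * x i') := by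
    rw [dotProduct]
    have step : ∀ i, star x i * (ptrace2 σ *ᵥ x) i
        = ∑ i', ∑ j, star (x i) * (σ (i, j) (i', j) * x i') := by
      intro i
      show star x i * ∑ i', (∑ j, σ (i, j) (i', j)) * x i' = _
      rw [Finset.mul_sum]
      refine Finset.sum_congr rfl fun i' _ => ?_
      rw [Finset.sum_mul, Finset.mul_sum]
      exact Finset.sum_congr rfl fun j _ => by rw [Pi.star_apply]
    rw [Finset.sum_congr rfl fun i (_ : i ∈ Finset.univ) => step i]
    rw [show (∑ i : I, ∑ i' : I, ∑ j : J, star (x i) * (σ (i, j) (i', j) * x i'))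
        = ∑ i : I, ∑ j : J, ∑ i' : I, star (x i) * (σ (i, j) (i', j) * x i') from
      Finset.sum_congr rfl fun i _ => Finset.sum_comm]
    exact Finset.sum_comm
  rw [lhs, ← Finset.sum_congr rfl fun j (_ : j ∈ Finset.univ) => rhs j]
  exact Finset.sum_nonneg fun j _ => h.dotProduct_mulVec_nonneg _

lemma posSemidef_ptrace1 {I J : Type*} [Fintype I] [DecidableEq I] [Fintype J] [DecidableEq J]
    {σ : Matrix (I × J) (I × J) ℂ} (h : σ.PosSemidef) : (ptrace1 σ).PosSemidef := by
  have he : ∀ q q' : J × I, (Matrix.reindex (Equiv.prodComm I J) (Equiv.prodComm I J) σ) q q'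
      = σ (q.2, q.1) (q'.2, q'.1) := fun q q' => rfl
  have hps : (Matrix.reindex (Equiv.prodComm I J) (Equiv.prodComm I J) σ).PosSemidef :=
    h.submatrix _
  have : ptrace1 σ = ptrace2 (Matrix.reindex (Equiv.prodComm I J) (Equiv.prodComm I J) σ) := by
    ext j j'
    show ∑ i, σ (i, j) (i, j') = ∑ i, _
    exact Finset.sum_congr rfl fun i _ => (he (j, i) (j', i)).symm
  rw [this]
  exact posSemidef_ptrace2 hps

lemma trace_ptrace2 {I J : Type*} [Fintype I] [DecidableEq I] [Fintype J] [DecidableEq J]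
    (σ : Matrix (I × J) (I × J) ℂ) : (ptrace2 σ).trace = σ.trace := by
  rw [Matrix.trace, Matrix.trace, Fintype.sum_prod_type]
  rfl

lemma trace_ptrace1 {I J : Type*} [Fintype I] [DecidableEq I] [Fintype J] [DecidableEq J]
    (σ : Matrix (I × J) (I × J) ℂ) : (ptrace1 σ).trace = σ.trace := by
  rw [Matrix.trace, Matrix.trace, Fintype.sum_prod_type, Finset.sum_comm]
  rfl

def eqKLM (K L M : Type*) : (K × L × M) ≃ ((K × M) × L) where
  toFun q := ((q.1, q.2.2), q.2.1)
  invFun p := (p.1.1, p.2, p.1.2)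
  left_inv := fun _ => rfl
  right_inv := fun _ => rfl

lemma margKM_eq (σ : Matrix (K × L × M) (K × L × M) ℂ) :
    margKM σ = ptrace2 (Matrix.reindex (eqKLM K L M) (eqKLM K L M) σ) := by
  ext p q
  show ∑ l, σ (p.1, l, p.2) (q.1, l, q.2) = ∑ l, σ _ _
  exact Finset.sum_congr rfl fun l _ => rfl

lemma margLM_eq (σ : Matrix (K × L × M) (K × L × M) ℂ) : margLM σ = ptrace1 σ := by
  ext p q
  rfl

lemma margM_eq (σ : Matrix (K × L × M) (K × L × M) ℂ) : margM σ = ptrace1 (ptrace1 σ) := by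
  ext mm mm'
  show ∑ k, ∑ l, σ (k, l, mm) (k, l, mm') = ∑ l, ∑ k, σ (k, l, mm) (k, l, mm')
  exact Finset.sum_comm

lemma posSemidef_margKM {σ : Matrix (K × L × M) (K × L × M) ℂ} (h : σ.PosSemidef) :
    (margKM σ).PosSemidef := by
  rw [margKM_eq]
  exact posSemidef_ptrace2 (h.submatrix _)

lemma posSemidef_margLM {σ : Matrix (K × L × M) (K × L × M) ℂ} (h : σ.PosSemidef) :
    (margLM σ).PosSemidef := by
  rw [margLM_eq]; exact posSemidef_ptrace1 h

lemma posSemidef_margM {σ : Matrix (K × L × M) (K × L × M) ℂ} (h : σ.PosSemidef) :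
    (margM σ).PosSemidef := by
  rw [margM_eq]; exact posSemidef_ptrace1 (posSemidef_ptrace1 h)

lemma trace_margKM (σ : Matrix (K × L × M) (K × L × M) ℂ) : (margKM σ).trace = σ.trace := by
  rw [margKM_eq, trace_ptrace2, Matrix.trace, Matrix.trace]
  exact Fintype.sum_equiv (eqKLM K L M).symm _ _ (fun p => rfl)

lemma trace_margLM (σ : Matrix (K × L × M) (K × L × M) ℂ) : (margLM σ).trace = σ.trace := by
  rw [margLM_eq, trace_ptrace1]

lemma trace_margM (σ : Matrix (K × L × M) (K × L × M) ℂ) : (margM σ).trace = σ.trace := by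
  rw [margM_eq, trace_ptrace1, trace_ptrace1]

end States

section Instr

variable {B : Type*} [Fintype B] [DecidableEq B] {dB' nk : ℕ}

lemma posSemidef_instrApply (V : Fin nk → Matrix (Fin dB') B ℂ) {σ : Matrix B B ℂ}
    (h : σ.PosSemidef) : (instrApply V σ).PosSemidef :=
  posSemidef_sum _ fun u => h.mul_mul_conjTranspose_same (V u)

lemma instrApply_sum {A : Type*} [Fintype A] (V : Fin nk → Matrix (Fin dB') B ℂ)
    (f : A → Matrix B B ℂ) :
    instrApply V (∑ a, f a) = ∑ a, instrApply V (f a) := by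
  unfold instrApply
  rw [Finset.sum_comm]
  refine Finset.sum_congr rfl fun u _ => ?_
  rw [Matrix.mul_sum, Matrix.sum_mul]

lemma instrApply_combo (V : Fin nk → Matrix (Fin dB') B ℂ) (c d : ℂ)
    (P Q : Matrix B B ℂ) :
    instrApply V (c • P + d • Q) = c • instrApply V P + d • instrApply V Q := by
  unfold instrApply
  rw [Finset.smul_sum, Finset.smul_sum, ← Finset.sum_add_distrib]
  refine Finset.sum_congr rfl fun u _ => ?_
  rw [Matrix.mul_add, Matrix.add_mul, Matrix.mul_smul, Matrix.smul_mul,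
    Matrix.mul_smul, Matrix.smul_mul]

lemma trace_sum_instrApply {m : ℕ} (V : Fin m → Fin nk → Matrix (Fin dB') B ℂ)
    (hV : (∑ y, ∑ u, (V y u)ᴴ * V y u) = (1 : Matrix B B ℂ)) (σ : Matrix B B ℂ) :
    ∑ y, (instrApply (V y) σ).trace = σ.trace := by
  have h1 : ∀ y, (instrApply (V y) σ).trace = ∑ u, ((V y u)ᴴ * V y u * σ).trace := by
    intro y
    unfold instrApply
    rw [Matrix.trace_sum]
    refine Finset.sum_congr rfl fun u _ => ?_
    rw [Matrix.trace_mul_cycle]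
  rw [Finset.sum_congr rfl fun y _ => h1 y]
  have : ∑ y, ∑ u, ((V y u)ᴴ * V y u * σ).trace
      = ((∑ y, ∑ u, (V y u)ᴴ * V y u) * σ).trace := by
    rw [Finset.sum_mul, Matrix.trace_sum]
    refine Finset.sum_congr rfl fun y _ => ?_
    rw [Finset.sum_mul, Matrix.trace_sum]
  rw [this, hV, Matrix.one_mul]

end Instr

section CQRep

def eqFull (K B E Y : Type*) : (K × B × E × Y) ≃ ((B × E) × (K × Y)) :=
  ⟨fun q => ((q.2.1, q.2.2.1), (q.1, q.2.2.2)), fun p => (p.2.1, p.1.1, p.1.2, p.2.2),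
    fun _ => rfl, fun _ => rfl⟩

def eqKM (K E Y : Type*) : (K × E × Y) ≃ (E × (K × Y)) :=
  ⟨fun q => (q.2.1, (q.1, q.2.2)), fun p => (p.2.1, p.1, p.2.2), fun _ => rfl, fun _ => rfl⟩

def eqLM (B E Y : Type*) : (B × E × Y) ≃ ((B × E) × Y) :=
  ⟨fun q => ((q.1, q.2.1), q.2.2), fun p => (p.1.1, p.1.2, p.2), fun _ => rfl, fun _ => rfl⟩

variable {A X : Type*} [Fintype A] [DecidableEq A] [Fintype X] [DecidableEq X]
  {dB' dE m : ℕ}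
  (p : X → Fin m → ℝ)
  (ext : A → X → Fin m → Matrix (Fin dB' × Fin dE) (Fin dB' × Fin dE) ℂ)

def cqBlocks : (X × A) × Fin m → Matrix (Fin dB' × Fin dE) (Fin dB' × Fin dE) ℂ :=
  fun c => ((p c.1.1 c.2 : ℝ) : ℂ) • ext c.1.2 c.1.1 c.2

def cqKMblocks : (X × A) × Fin m → Matrix (Fin dE) (Fin dE) ℂ :=
  fun c => ((p c.1.1 c.2 : ℝ) : ℂ) • ptrace1 (ext c.1.2 c.1.1 c.2)

def cqLMblocks : Fin m → Matrix (Fin dB' × Fin dE) (Fin dB' × Fin dE) ℂ :=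
  fun y => ∑ k : X × A, ((p k.1 y : ℝ) : ℂ) • ext k.2 k.1 y

def cqMblocks : Fin m → Matrix (Fin dE) (Fin dE) ℂ :=
  fun y => ∑ k : X × A, ((p k.1 y : ℝ) : ℂ) • ptrace1 (ext k.2 k.1 y)

lemma cq_entry (i j : (X × A) × Fin dB' × Fin dE × Fin m) :
    cqStateS p ext i j = Matrix.blockDiagonal (cqBlocks p ext)
      ((eqFull (X×A) (Fin dB') (Fin dE) (Fin m)) i)
      ((eqFull (X×A) (Fin dB') (Fin dE) (Fin m)) j) := by
  rcases i with ⟨k, b, e, y⟩; rcases j with ⟨k', b', e', y'⟩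
  show (if k = k' ∧ y = y' then ((p k.1 y : ℝ):ℂ) * ext k.2 k.1 y (b, e) (b', e') else 0) = _
  rw [show (eqFull (X×A) (Fin dB') (Fin dE) (Fin m)) (k, b, e, y) = ((b, e), (k, y)) from rfl,
    show (eqFull (X×A) (Fin dB') (Fin dE) (Fin m)) (k', b', e', y') = ((b', e'), (k', y')) from rfl,
    Matrix.blockDiagonal_apply]
  by_cases hc : k = k' ∧ y = y'
  · obtain ⟨h1, h2⟩ := hc
    subst h1; subst h2
    rw [if_pos ⟨rfl, rfl⟩, if_pos rfl]
    simp [cqBlocks, smul_eq_mul]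
  · rw [if_neg hc, if_neg (by simpa [Prod.ext_iff] using hc)]

lemma margKM_cq_entry (i j : (X × A) × Fin dE × Fin m) :
    margKM (cqStateS p ext) i j
      = Matrix.blockDiagonal (cqKMblocks p ext)
        ((eqKM (X×A) (Fin dE) (Fin m)) i) ((eqKM (X×A) (Fin dE) (Fin m)) j) := by
  rcases i with ⟨k, e, y⟩; rcases j with ⟨k', e', y'⟩
  show (∑ b, cqStateS p ext (k, b, e, y) (k', b, e', y')) = _
  rw [show (eqKM (X×A) (Fin dE) (Fin m)) (k, e, y) = (e, (k, y)) from rfl,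
    show (eqKM (X×A) (Fin dE) (Fin m)) (k', e', y') = (e', (k', y')) from rfl,
    Matrix.blockDiagonal_apply]
  by_cases hc : k = k' ∧ y = y'
  · obtain ⟨h1, h2⟩ := hc
    subst h1; subst h2
    rw [if_pos rfl]
    show (∑ b, if k = k ∧ y = y then ((p k.1 y : ℝ):ℂ) * ext k.2 k.1 y (b, e) (b, e') else 0) = _
    simp only [and_self, eq_self_iff_true, if_true]
    simp [cqKMblocks, ptrace1, smul_eq_mul, Finset.mul_sum]
  · rw [if_neg (by simpa [Prod.ext_iff] using hc)]
    show (∑ b, if k = k' ∧ y = y' then _ else (0:ℂ)) = 0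
    simp [hc]

lemma margLM_cq_entry (i j : Fin dB' × Fin dE × Fin m) :
    margLM (cqStateS p ext) i j
      = Matrix.blockDiagonal (cqLMblocks p ext)
        ((eqLM (Fin dB') (Fin dE) (Fin m)) i) ((eqLM (Fin dB') (Fin dE) (Fin m)) j) := by
  rcases i with ⟨b, e, y⟩; rcases j with ⟨b', e', y'⟩
  show (∑ k : X × A, cqStateS p ext (k, b, e, y) (k, b', e', y')) = _
  rw [show (eqLM (Fin dB') (Fin dE) (Fin m)) (b, e, y) = ((b, e), y) from rfl,
    show (eqLM (Fin dB') (Fin dE) (Fin m)) (b', e', y') = ((b', e'), y') from rfl,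
    Matrix.blockDiagonal_apply]
  by_cases hy : y = y'
  · subst hy
    rw [if_pos rfl]
    show (∑ k : X × A, if k = k ∧ y = y then ((p k.1 y : ℝ):ℂ)
      * ext k.2 k.1 y (b, e) (b', e') else 0) = _
    simp only [and_self, eq_self_iff_true, if_true]
    simp [cqLMblocks, Matrix.sum_apply, smul_eq_mul]
  · rw [if_neg hy]
    show (∑ k : X × A, if k = k ∧ y = y' then _ else (0:ℂ)) = 0
    simp [hy]

lemma margM_cq_entry (i j : Fin dE × Fin m) :
    margM (cqStateS p ext) i j = Matrix.blockDiagonal (cqMblocks p ext) i j := by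
  rcases i with ⟨e, y⟩; rcases j with ⟨e', y'⟩
  show (∑ k : X × A, ∑ b, cqStateS p ext (k, b, e, y) (k, b, e', y')) = _
  rw [Matrix.blockDiagonal_apply]
  by_cases hy : y = y'
  · subst hy
    rw [if_pos rfl]
    show (∑ k : X × A, ∑ b, if k = k ∧ y = y then ((p k.1 y : ℝ):ℂ)
      * ext k.2 k.1 y (b, e) (b, e') else 0) = _
    simp only [and_self, eq_self_iff_true, if_true]
    simp [cqMblocks, Matrix.sum_apply, ptrace1, smul_eq_mul, Finset.mul_sum]
  · rw [if_neg hy]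
    show (∑ k : X × A, ∑ b, if k = k ∧ y = y' then _ else (0:ℂ)) = 0
    simp [hy]

variable {p} {ext}

lemma posSemidef_cqBlocks (hp : ∀ x y, 0 ≤ p x y) (hext : ∀ a x y, (ext a x y).PosSemidef) :
    ∀ c, (cqBlocks p ext c).PosSemidef :=
  fun c => posSemidef_real_smul (hext _ _ _) (hp _ _)

lemma posSemidef_cqKMblocks (hp : ∀ x y, 0 ≤ p x y) (hext : ∀ a x y, (ext a x y).PosSemidef) :
    ∀ c, (cqKMblocks p ext c).PosSemidef :=
  fun c => posSemidef_real_smul (posSemidef_ptrace1 (hext _ _ _)) (hp _ _)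

lemma posSemidef_cqLMblocks (hp : ∀ x y, 0 ≤ p x y) (hext : ∀ a x y, (ext a x y).PosSemidef) :
    ∀ y, (cqLMblocks p ext y).PosSemidef :=
  fun y => posSemidef_sum _ fun k => posSemidef_real_smul (hext _ _ _) (hp _ _)

lemma posSemidef_cqMblocks (hp : ∀ x y, 0 ≤ p x y) (hext : ∀ a x y, (ext a x y).PosSemidef) :
    ∀ y, (cqMblocks p ext y).PosSemidef :=
  fun y => posSemidef_sum _ fun k =>
    posSemidef_real_smul (posSemidef_ptrace1 (hext _ _ _)) (hp _ _)

lemma posSemidef_cqStateS (hp : ∀ x y, 0 ≤ p x y) (hext : ∀ a x y, (ext a x y).PosSemidef) :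
    (cqStateS p ext).PosSemidef := by
  have hrep : cqStateS p ext = (Matrix.blockDiagonal (cqBlocks p ext)).submatrix
      (eqFull (X×A) (Fin dB') (Fin dE) (Fin m)) (eqFull (X×A) (Fin dB') (Fin dE) (Fin m)) := by
    ext i j
    rw [cq_entry p ext i j]
    rfl
  rw [hrep]
  exact (posSemidef_blockDiagonal _ (posSemidef_cqBlocks hp hext)).submatrix _

lemma vnEntropy_cq (hp : ∀ x y, 0 ≤ p x y) (hext : ∀ a x y, (ext a x y).PosSemidef) :
    vnEntropy (cqStateS p ext) = ∑ c : (X × A) × Fin m, vnEntropy (cqBlocks p ext c) :=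
  vnEntropy_of_blockDiagonal _ _ _ (fun c => (posSemidef_cqBlocks hp hext c).1)
    (cq_entry p ext)

lemma vnEntropy_cqKM (hp : ∀ x y, 0 ≤ p x y) (hext : ∀ a x y, (ext a x y).PosSemidef) :
    vnEntropy (margKM (cqStateS p ext))
      = ∑ c : (X × A) × Fin m, vnEntropy (cqKMblocks p ext c) :=
  vnEntropy_of_blockDiagonal _ _ _ (fun c => (posSemidef_cqKMblocks hp hext c).1)
    (margKM_cq_entry p ext)

lemma vnEntropy_cqLM (hp : ∀ x y, 0 ≤ p x y) (hext : ∀ a x y, (ext a x y).PosSemidef) :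
    vnEntropy (margLM (cqStateS p ext)) = ∑ y, vnEntropy (cqLMblocks p ext y) :=
  vnEntropy_of_blockDiagonal _ _ _ (fun y => (posSemidef_cqLMblocks hp hext y).1)
    (margLM_cq_entry p ext)

lemma vnEntropy_cqM (hp : ∀ x y, 0 ≤ p x y) (hext : ∀ a x y, (ext a x y).PosSemidef) :
    vnEntropy (margM (cqStateS p ext)) = ∑ y, vnEntropy (cqMblocks p ext y) :=
  vnEntropy_of_blockDiagonal (Equiv.refl _) _ _ (fun y => (posSemidef_cqMblocks hp hext y).1)
    (margM_cq_entry p ext)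

lemma trace_of_rep {γ I κ : Type*} [Fintype γ] [DecidableEq γ] [Fintype I] [DecidableEq I]
    [Fintype κ] [DecidableEq κ] (e : γ ≃ I × κ) (T : Matrix γ γ ℂ) (M : κ → Matrix I I ℂ)
    (h : ∀ i j, T i j = Matrix.blockDiagonal M (e i) (e j)) :
    T.trace = ∑ c, (M c).trace := by
  have : T.trace = (Matrix.blockDiagonal M).trace := by
    rw [Matrix.trace, Matrix.trace]
    exact Fintype.sum_equiv e _ _ (fun i => h i i)
  rw [this, Matrix.trace_blockDiagonal]

lemma trace_cq : (cqStateS p ext).trace = ∑ c : (X × A) × Fin m, (cqBlocks p ext c).trace :=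
  trace_of_rep _ _ _ (cq_entry p ext)

end CQRep

section PsdFacts

lemma herm_diag_real {A : Matrix n n ℂ} (h : A.IsHermitian) (i : n) :
    A i i = (((A i i).re : ℝ) : ℂ) :=
  (Complex.conj_eq_iff_re.mp (h.apply i i)).symm

lemma psd_trace_re_nonneg {A : Matrix n n ℂ} (h : A.PosSemidef) : 0 ≤ A.trace.re := by
  rw [trace_re_eq_eigMS_sum h.1, eigMS]
  show (0:ℝ) ≤ (Finset.univ.val.map h.1.eigenvalues).sum
  exact Finset.sum_nonneg fun i _ => h.eigenvalues_nonneg i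

lemma psd_trace_real {A : Matrix n n ℂ} (h : A.IsHermitian) :
    A.trace = ((A.trace.re : ℝ) : ℂ) := by
  rw [trace_eq_eigMS_sum h]
  simp

lemma vnEntropy_one_dim {T : Matrix (Fin 1) (Fin 1) ℂ} (h : T.IsHermitian) :
    vnEntropy T = entPhi ((T 0 0).re) := by
  have hrep : ∀ i j, T i j = if i = j then (((T 0 0).re : ℝ) : ℂ) else 0 := by
    intro i j
    have hi : i = 0 := Subsingleton.elim _ _
    have hj : j = 0 := Subsingleton.elim _ _
    subst hi; subst hj
    rw [if_pos rfl]
    exact herm_diag_real h 0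
  rw [vnEntropy_of_diagonal T _ hrep]
  simp

end PsdFacts

section Trivial

variable {A X B : Type*} [Fintype A] [DecidableEq A] [Fintype X] [DecidableEq X]
  [Fintype B] [DecidableEq B] {dB' nk m : ℕ}

def trivialExt (V : Fin m → Fin nk → Matrix (Fin dB') B ℂ)
    (θ : A → X → Matrix B B ℂ) :
    A → X → Fin m → Matrix (Fin dB' × Fin 1) (Fin dB' × Fin 1) ℂ :=
  fun a x y => Matrix.of fun q q' => instrApply (V y) (θ a x) q.1 q'.1

lemma trivialExt_posSemidef {V : Fin m → Fin nk → Matrix (Fin dB') B ℂ}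
    {θ : A → X → Matrix B B ℂ} (hθ : ∀ a x, (θ a x).PosSemidef) :
    ∀ a x y, (trivialExt V θ a x y).PosSemidef :=
  fun a x y => (posSemidef_instrApply (V y) (hθ a x)).submatrix Prod.fst

lemma trivialExt_ptrace2 (V : Fin m → Fin nk → Matrix (Fin dB') B ℂ)
    (θ : A → X → Matrix B B ℂ) (a : A) (x : X) (y : Fin m) :
    ptrace2 (trivialExt V θ a x y) = instrApply (V y) (θ a x) := by
  ext b b'
  show ∑ _j : Fin 1, instrApply (V y) (θ a x) b b' = _
  simp

lemma trivialExt_NS {V : Fin m → Fin nk → Matrix (Fin dB') B ℂ}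
    {θ : A → X → Matrix B B ℂ} (hNS : ∀ x x' : X, ∑ a, θ a x = ∑ a, θ a x') :
    ∀ (x x' : X) (y : Fin m), ∑ a, trivialExt V θ a x y = ∑ a, trivialExt V θ a x' y := by
  intro x x' y
  have hins : ∑ a, instrApply (V y) (θ a x) = ∑ a, instrApply (V y) (θ a x') := by
    rw [← instrApply_sum, ← instrApply_sum, hNS x x']
  ext q q'
  rw [Matrix.sum_apply, Matrix.sum_apply]
  show (∑ a, instrApply (V y) (θ a x) q.1 q'.1) = ∑ a, instrApply (V y) (θ a x') q.1 q'.1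
  rw [← Matrix.sum_apply, ← Matrix.sum_apply, hins]

lemma trivial_CMI_le {r s dB : ℕ} (hs : 1 ≤ s)
    (θ : Fin r → Fin s → Matrix (Fin dB) (Fin dB) ℂ) (hθ : IsAssemblage θ)
    {m dB' nk : ℕ} (V : Fin m → Fin nk → Matrix (Fin dB') (Fin dB) ℂ)
    (hV : (∑ y, ∑ u, (V y u)ᴴ * V y u) = (1 : Matrix (Fin dB) (Fin dB) ℂ))
    (pXY : Fin s → Fin m → ℝ) (hp : ∀ y, IsProbDist fun x => pXY x y) :
    CMI (cqStateS pXY (trivialExt V θ)) ≤ Real.logb 2 ((s * r : ℕ) : ℝ) := by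
  classical
  have hp0 : ∀ x y, 0 ≤ pXY x y := fun x y => (hp y).1 x
  have hpsd := trivialExt_posSemidef (V := V) (θ := θ) hθ.1
  set sreal : (Fin s × Fin r) × Fin m → ℝ :=
    fun c => pXY c.1.1 c.2 * (instrApply (V c.2) (θ c.1.2 c.1.1)).trace.re with hsreal
  have hsreal_nonneg : ∀ c, 0 ≤ sreal c := fun c =>
    mul_nonneg (hp0 _ _) (psd_trace_re_nonneg (posSemidef_instrApply _ (hθ.1 _ _)))
  set t : Fin m → ℝ := fun y => ∑ k : Fin s × Fin r, sreal (k, y) with ht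
  -- entries of the 1×1 blocks
  have hKMblock : ∀ c : (Fin s × Fin r) × Fin m,
      vnEntropy (cqKMblocks pXY (trivialExt V θ) c) = entPhi (sreal c) := by
    intro c
    rw [vnEntropy_one_dim (posSemidef_cqKMblocks hp0 hpsd c).1]
    congr 1
    show ((((pXY c.1.1 c.2 : ℝ):ℂ) • ptrace1 (trivialExt V θ c.1.2 c.1.1 c.2)) 0 0).re = _
    rw [Matrix.smul_apply, smul_eq_mul]
    have h1 : ptrace1 (trivialExt V θ c.1.2 c.1.1 c.2) 0 0
        = (instrApply (V c.2) (θ c.1.2 c.1.1)).trace := by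
      show (∑ b, instrApply (V c.2) (θ c.1.2 c.1.1) b b) = _
      rfl
    rw [h1, psd_trace_real (posSemidef_instrApply _ (hθ.1 _ _)).1]
    simp [← Complex.ofReal_mul]
    rfl
  have hMblock : ∀ y, vnEntropy (cqMblocks pXY (trivialExt V θ) y) = entPhi (t y) := by
    intro y
    rw [vnEntropy_one_dim (posSemidef_cqMblocks hp0 hpsd y).1]
    congr 1
    show ((∑ k : Fin s × Fin r,
      ((pXY k.1 y : ℝ):ℂ) • ptrace1 (trivialExt V θ k.2 k.1 y)) 0 0).re = t y
    rw [Matrix.sum_apply, Complex.re_sum, ht]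
    refine Finset.sum_congr rfl fun k _ => ?_
    rw [Matrix.smul_apply, smul_eq_mul]
    have h1 : ptrace1 (trivialExt V θ k.2 k.1 y) 0 0
        = (instrApply (V y) (θ k.2 k.1)).trace := by
      show (∑ b, instrApply (V y) (θ k.2 k.1) b b) = _
      rfl
    rw [h1, psd_trace_real (posSemidef_instrApply _ (hθ.1 _ _)).1]
    simp [← Complex.ofReal_mul]
    rfl
  -- H(LM) ≤ H(full)
  have hLM_le : vnEntropy (margLM (cqStateS pXY (trivialExt V θ)))
      ≤ vnEntropy (cqStateS pXY (trivialExt V θ)) := by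
    rw [vnEntropy_cqLM hp0 hpsd, vnEntropy_cq hp0 hpsd]
    rw [Fintype.sum_prod_type_right]
    refine Finset.sum_le_sum fun y _ => ?_
    have : cqLMblocks pXY (trivialExt V θ) y
        = ∑ k : Fin s × Fin r, cqBlocks pXY (trivialExt V θ) (k, y) := rfl
    rw [this]
    exact vnEntropy_sum_le _ fun k => posSemidef_cqBlocks hp0 hpsd (k, y)
  -- sum of t = 1
  have hts : ∑ y, t y = 1 := by
    set x0 : Fin s := ⟨0, hs⟩
    set θbar : Matrix (Fin dB) (Fin dB) ℂ := ∑ a, θ a x0 with hθbar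
    have hNSbar : ∀ x : Fin s, ∑ a, θ a x = θbar := fun x => hθ.2.2 x x0
    have h1 : ∀ y, t y = (instrApply (V y) θbar).trace.re := by
      intro y
      rw [ht]
      show (∑ k : Fin s × Fin r, pXY k.1 y * (instrApply (V y) (θ k.2 k.1)).trace.re) = _
      rw [Fintype.sum_prod_type]
      have h2 : ∀ x : Fin s, (∑ a : Fin r, pXY x y * (instrApply (V y) (θ a x)).trace.re)
          = pXY x y * (instrApply (V y) θbar).trace.re := by
        intro x
        rw [← Finset.mul_sum]
        congr 1
        rw [← Complex.re_sum, ← Matrix.trace_sum, ← instrApply_sum, hNSbar x]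
      rw [Finset.sum_congr rfl fun x _ => h2 x, ← Finset.sum_mul, (hp y).2, one_mul]
    have h3 : (∑ y, (instrApply (V y) θbar).trace.re)
        = (∑ y, (instrApply (V y) θbar).trace).re := (Complex.re_sum _ _).symm
    rw [Finset.sum_congr rfl fun y _ => h1 y, h3, trace_sum_instrApply V hV θbar]
    have h4 : θbar.trace = 1 := by
      rw [hθbar, Matrix.trace_sum]
      exact hθ.2.1 x0
    rw [h4]
    simp
  -- assemble
  have hKM : vnEntropy (margKM (cqStateS pXY (trivialExt V θ)))
      = ∑ c : (Fin s × Fin r) × Fin m, entPhi (sreal c) := by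
    rw [vnEntropy_cqKM hp0 hpsd]
    exact Finset.sum_congr rfl fun c _ => hKMblock c
  have hM : vnEntropy (margM (cqStateS pXY (trivialExt V θ)))
      = ∑ y, entPhi (t y) := by
    rw [vnEntropy_cqM hp0 hpsd]
    exact Finset.sum_congr rfl fun y _ => hMblock y
  have key : CMI (cqStateS pXY (trivialExt V θ))
      ≤ ∑ c : (Fin s × Fin r) × Fin m, entPhi (sreal c) - ∑ y, entPhi (t y) := by
    unfold CMI
    rw [hKM, hM]
    linarith [hLM_le]
  have hjen : ∀ y, ∑ k : Fin s × Fin r, entPhi (sreal (k, y))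
      ≤ t y * Real.logb 2 ((s * r : ℕ) : ℝ) + entPhi (t y) := by
    intro y
    have hc := sum_entPhi_le_card (fun k : Fin s × Fin r => sreal (k, y))
      (fun k => hsreal_nonneg _)
    have hcard : ((Fintype.card (Fin s × Fin r) : ℕ) : ℝ) = ((s * r : ℕ) : ℝ) := by
      simp [Fintype.card_prod]
    rw [hcard] at hc
    exact hc
  calc CMI (cqStateS pXY (trivialExt V θ))
      ≤ ∑ c : (Fin s × Fin r) × Fin m, entPhi (sreal c) - ∑ y, entPhi (t y) := key
    _ = ∑ y, (∑ k : Fin s × Fin r, entPhi (sreal (k, y)) - entPhi (t y)) := by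
        rw [Fintype.sum_prod_type_right, ← Finset.sum_sub_distrib]
    _ ≤ ∑ y, t y * Real.logb 2 ((s * r : ℕ) : ℝ) := by
        refine Finset.sum_le_sum fun y _ => ?_
        linarith [hjen y]
    _ = Real.logb 2 ((s * r : ℕ) : ℝ) := by
        rw [← Finset.sum_mul, hts, one_mul]

end Trivial

section Sets

def eDrop2 (K M : Type*) : (K × Fin 1 × M) ≃ (K × M) :=
  ⟨fun q => (q.1, q.2.2), fun p => (p.1, 0, p.2), fun q => by
    rcases q with ⟨k, e, mm⟩
    simp [Subsingleton.elim (0 : Fin 1) e], fun p => rfl⟩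

def eAdd1 (M : Type*) : M ≃ (Fin 1 × M) :=
  ⟨fun mm => (0, mm), fun p => p.2, fun _ => rfl, fun p => by
    rcases p with ⟨l, mm⟩
    simp [Subsingleton.elim (0 : Fin 1) l]⟩

lemma CMI_L_one {K M : Type*} [Fintype K] [DecidableEq K] [Fintype M] [DecidableEq M]
    (T : Matrix (K × Fin 1 × M) (K × Fin 1 × M) ℂ) : CMI T = 0 := by
  have h1 : margKM T = Matrix.reindex (eDrop2 K M) (eDrop2 K M) T := by
    ext p q
    show (∑ l : Fin 1, T (p.1, l, p.2) (q.1, l, q.2)) = T _ _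
    rw [Fin.sum_univ_one]
    rfl
  have h2 : margLM T = Matrix.reindex (eAdd1 M) (eAdd1 M) (margM T) := by
    ext p q
    rcases p with ⟨l, mm⟩; rcases q with ⟨l', mm'⟩
    have hl : l = 0 := Subsingleton.elim _ _
    have hl' : l' = 0 := Subsingleton.elim _ _
    subst hl; subst hl'
    show (∑ k, T (k, 0, mm) (k, 0, mm')) = ∑ k, ∑ ll : Fin 1, T (k, ll, mm) (k, ll, mm')
    exact Finset.sum_congr rfl fun k _ =>
      (Fin.sum_univ_one fun ll => T (k, ll, mm) (k, ll, mm')).symm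
  unfold CMI
  rw [h1, h2, vnEntropy_reindex, vnEntropy_reindex]
  ring

def destroyV (dB : ℕ) : Fin 1 → Fin dB → Matrix (Fin 1) (Fin dB) ℂ :=
  fun _ u => Matrix.of fun _ j => if j = u then 1 else 0

lemma destroyV_complete (dB : ℕ) :
    (∑ y, ∑ u, (destroyV dB y u)ᴴ * destroyV dB y u) = (1 : Matrix (Fin dB) (Fin dB) ℂ) := by
  rw [Fin.sum_univ_one]
  ext i j
  rw [Matrix.sum_apply]
  simp only [Matrix.mul_apply, Matrix.conjTranspose_apply, destroyV, Matrix.of_apply,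
    Fin.sum_univ_one]
  simp [apply_ite, Matrix.one_apply, Finset.sum_ite_eq, eq_comm]

variable {A X B : Type*} [Fintype A] [DecidableEq A] [Fintype X] [DecidableEq X]
  [Fintype B] [DecidableEq B]

def WSet (ρ : A → X → Matrix B B ℂ) (m dB' nk : ℕ)
    (V : Fin m → Fin nk → Matrix (Fin dB') B ℂ) (pXY : X → Fin m → ℝ) : Set ℝ :=
  { w : ℝ | ∃ dE : ℕ, 1 ≤ dE ∧
      ∃ ext : A → X → Fin m → Matrix (Fin dB' × Fin dE) (Fin dB' × Fin dE) ℂ,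
        (∀ a x y, (ext a x y).PosSemidef) ∧
        (∀ a x y, ptrace2 (ext a x y) = instrApply (V y) (ρ a x)) ∧
        (∀ (x x' : X) (y : Fin m), ∑ a, ext a x y = ∑ a, ext a x' y) ∧
        w = CMI (cqStateS pXY ext) }

def SSet (ρ : A → X → Matrix B B ℂ) : Set ℝ :=
  { v : ℝ | ∃ (m dB' nk : ℕ) (V : Fin m → Fin nk → Matrix (Fin dB') B ℂ)
      (pXY : X → Fin m → ℝ), 1 ≤ m ∧ 1 ≤ dB' ∧
      (∑ y, ∑ u, (V y u)ᴴ * V y u) = (1 : Matrix B B ℂ) ∧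
      (∀ y, IsProbDist fun x => pXY x y) ∧
      v = sInf (WSet ρ m dB' nk V pXY) }

lemma IS_eq (ρ : A → X → Matrix B B ℂ) : IS ρ = sSup (SSet ρ) := rfl

lemma trivialExt_mem {ρ : A → X → Matrix B B ℂ} (hρ : IsAssemblage ρ) {m dB' nk : ℕ}
    (V : Fin m → Fin nk → Matrix (Fin dB') B ℂ) (pXY : X → Fin m → ℝ) :
    CMI (cqStateS pXY (trivialExt V ρ)) ∈ WSet ρ m dB' nk V pXY :=
  ⟨1, le_refl 1, trivialExt V ρ, trivialExt_posSemidef hρ.1, trivialExt_ptrace2 V ρ,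
    trivialExt_NS hρ.2.2, rfl⟩

end Sets

section FinSets

variable {r s dB : ℕ}

lemma SSet_le_bound (hr : 1 ≤ r) (hs : 1 ≤ s)
    (θ : Fin r → Fin s → Matrix (Fin dB) (Fin dB) ℂ) (hθ : IsAssemblage θ) :
    ∀ v ∈ SSet θ, v ≤ Real.logb 2 ((s * r : ℕ) : ℝ) := by
  rintro v ⟨m, dB', nk, V, pXY, hm, hdB', hV, hp, rfl⟩
  have hL0 : (0:ℝ) ≤ Real.logb 2 ((s * r : ℕ) : ℝ) := by
    apply Real.logb_nonneg (by norm_num)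
    have : (1 : ℕ) ≤ s * r := Nat.one_le_iff_ne_zero.mpr (by positivity)
    exact_mod_cast this
  by_cases hbdd : BddBelow (WSet θ m dB' nk V pXY)
  · exact le_trans (csInf_le hbdd (trivialExt_mem hθ V pXY))
      (trivial_CMI_le hs θ hθ V hV pXY hp)
  · rw [csInf_of_not_bddBelow hbdd, Real.sInf_empty]
    exact hL0

lemma bddAbove_SSet (hr : 1 ≤ r) (hs : 1 ≤ s)
    (θ : Fin r → Fin s → Matrix (Fin dB) (Fin dB) ℂ) (hθ : IsAssemblage θ) :
    BddAbove (SSet θ) :=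
  ⟨Real.logb 2 ((s * r : ℕ) : ℝ), fun v hv => SSet_le_bound hr hs θ hθ v hv⟩

lemma zero_mem_SSet (hs : 1 ≤ s) (hdB : 1 ≤ dB)
    (θ : Fin r → Fin s → Matrix (Fin dB) (Fin dB) ℂ) (hθ : IsAssemblage θ) :
    (0:ℝ) ∈ SSet θ := by
  refine ⟨1, 1, dB, destroyV dB, fun _ _ => ((s:ℝ))⁻¹, le_refl 1, le_refl 1,
    destroyV_complete dB, ?_, ?_⟩
  · intro y
    constructor
    · intro x
      positivity
    · rw [Finset.sum_const, Finset.card_univ, Fintype.card_fin, nsmul_eq_mul]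
      have hs0 : (s:ℝ) ≠ 0 := by positivity
      field_simp
  · have hW : WSet θ 1 1 dB (destroyV dB) (fun _ _ => ((s:ℝ))⁻¹) = {0} := by
      apply Set.eq_singleton_iff_unique_mem.mpr
      constructor
      · have h0 : CMI (cqStateS (fun (_ : Fin s) (_ : Fin 1) => ((s:ℝ))⁻¹)
            (trivialExt (destroyV dB) θ)) = 0 := CMI_L_one _
        rw [← h0]
        exact trivialExt_mem hθ (destroyV dB) _
      · rintro w ⟨dE, hdE, ext, hpsd, hpt, hNS, rfl⟩
        exact CMI_L_one _
    rw [hW, csInf_singleton]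

lemma le_IS (hr : 1 ≤ r) (hs : 1 ≤ s)
    {θ : Fin r → Fin s → Matrix (Fin dB) (Fin dB) ℂ} (hθ : IsAssemblage θ)
    {v : ℝ} (hv : v ∈ SSet θ) : v ≤ IS θ := by
  rw [IS_eq]
  exact le_csSup (bddAbove_SSet hr hs θ hθ) hv

lemma IS_nonneg (hr : 1 ≤ r) (hs : 1 ≤ s) (hdB : 1 ≤ dB)
    {θ : Fin r → Fin s → Matrix (Fin dB) (Fin dB) ℂ} (hθ : IsAssemblage θ) :
    0 ≤ IS θ :=
  le_IS hr hs hθ (zero_mem_SSet hs hdB θ hθ)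

end FinSets

section Flag

variable {A X : Type*} [Fintype A] [DecidableEq A] [Fintype X] [DecidableEq X]
  {dB' d1 d2 m : ℕ}

def flagExt (lam : ℝ)
    (ext1 : A → X → Fin m → Matrix (Fin dB' × Fin d1) (Fin dB' × Fin d1) ℂ)
    (ext2 : A → X → Fin m → Matrix (Fin dB' × Fin d2) (Fin dB' × Fin d2) ℂ)
    (a : A) (x : X) (y : Fin m) :
    Matrix (Fin dB' × Fin (d1 + d2)) (Fin dB' × Fin (d1 + d2)) ℂ :=
  Matrix.of fun q q' =>
    match finSumFinEquiv.symm q.2, finSumFinEquiv.symm q'.2 with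
    | Sum.inl e1, Sum.inl e1' => ((lam : ℝ) : ℂ) * ext1 a x y (q.1, e1) (q'.1, e1')
    | Sum.inr e2, Sum.inr e2' => ((1 - lam : ℝ) : ℂ) * ext2 a x y (q.1, e2) (q'.1, e2')
    | _, _ => 0

variable {lam : ℝ}
  {ext1 : A → X → Fin m → Matrix (Fin dB' × Fin d1) (Fin dB' × Fin d1) ℂ}
  {ext2 : A → X → Fin m → Matrix (Fin dB' × Fin d2) (Fin dB' × Fin d2) ℂ}

lemma flagExt_ll (a : A) (x : X) (y : Fin m) (b b' : Fin dB') (e1 e1' : Fin d1) :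
    flagExt lam ext1 ext2 a x y (b, finSumFinEquiv (Sum.inl e1)) (b', finSumFinEquiv (Sum.inl e1'))
      = ((lam : ℝ) : ℂ) * ext1 a x y (b, e1) (b', e1') := by
  unfold flagExt
  simp

lemma flagExt_rr (a : A) (x : X) (y : Fin m) (b b' : Fin dB') (e2 e2' : Fin d2) :
    flagExt lam ext1 ext2 a x y (b, finSumFinEquiv (Sum.inr e2)) (b', finSumFinEquiv (Sum.inr e2'))
      = ((1 - lam : ℝ) : ℂ) * ext2 a x y (b, e2) (b', e2') := by
  unfold flagExt
  simp

lemma flagExt_lr (a : A) (x : X) (y : Fin m) (b b' : Fin dB') (e1 : Fin d1) (e2' : Fin d2) :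
    flagExt lam ext1 ext2 a x y (b, finSumFinEquiv (Sum.inl e1)) (b', finSumFinEquiv (Sum.inr e2'))
      = 0 := by
  unfold flagExt
  simp

lemma flagExt_rl (a : A) (x : X) (y : Fin m) (b b' : Fin dB') (e2 : Fin d2) (e1' : Fin d1) :
    flagExt lam ext1 ext2 a x y (b, finSumFinEquiv (Sum.inr e2)) (b', finSumFinEquiv (Sum.inl e1'))
      = 0 := by
  unfold flagExt
  simp

/-- generic splitting lemma on `P × Fin (d1+d2)`. -/
def eFlagL (P : Type*) (d1 d2 : ℕ) : (P × Fin (d1 + d2)) ≃ ((P × Fin d1) ⊕ (P × Fin d2)) where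
  toFun q := match finSumFinEquiv.symm q.2 with
    | Sum.inl e1 => Sum.inl (q.1, e1)
    | Sum.inr e2 => Sum.inr (q.1, e2)
  invFun := Sum.elim (fun p => (p.1, finSumFinEquiv (Sum.inl p.2)))
    (fun p => (p.1, finSumFinEquiv (Sum.inr p.2)))
  left_inv := by
    rintro ⟨b, ee⟩
    rcases h : finSumFinEquiv.symm ee with e1 | e2
    · simp only [h]
      show (b, finSumFinEquiv (Sum.inl e1)) = (b, ee)
      rw [← h, Equiv.apply_symm_apply]
    · simp only [h]
      show (b, finSumFinEquiv (Sum.inr e2)) = (b, ee)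
      rw [← h, Equiv.apply_symm_apply]
  right_inv := by
    rintro (⟨b, e1⟩ | ⟨b, e2⟩) <;> simp

lemma vnEntropy_flag_split {P : Type*} [Fintype P] [DecidableEq P]
    (T : Matrix (P × Fin (d1 + d2)) (P × Fin (d1 + d2)) ℂ)
    (A1 : Matrix (P × Fin d1) (P × Fin d1) ℂ) (A2 : Matrix (P × Fin d2) (P × Fin d2) ℂ)
    (h1 : A1.IsHermitian) (h2 : A2.IsHermitian)
    (hll : ∀ b e1 b' e1', T (b, finSumFinEquiv (Sum.inl e1)) (b', finSumFinEquiv (Sum.inl e1'))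
      = A1 (b, e1) (b', e1'))
    (hrr : ∀ b e2 b' e2', T (b, finSumFinEquiv (Sum.inr e2)) (b', finSumFinEquiv (Sum.inr e2'))
      = A2 (b, e2) (b', e2'))
    (hlr : ∀ b e1 b' e2', T (b, finSumFinEquiv (Sum.inl e1)) (b', finSumFinEquiv (Sum.inr e2'))
      = 0)
    (hrl : ∀ b e2 b' e1', T (b, finSumFinEquiv (Sum.inr e2)) (b', finSumFinEquiv (Sum.inl e1'))
      = 0) :
    vnEntropy T = vnEntropy A1 + vnEntropy A2 := by
  apply vnEntropy_of_blocks (eFlagL P d1 d2) T A1 A2 h1 h2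
  rintro ⟨b, ee⟩ ⟨b', ee'⟩
  rcases h : finSumFinEquiv.symm ee with e1 | e2 <;>
    rcases h' : finSumFinEquiv.symm ee' with f1 | f2
  · obtain rfl : ee = finSumFinEquiv (Sum.inl e1) := by rw [← h, Equiv.apply_symm_apply]
    obtain rfl : ee' = finSumFinEquiv (Sum.inl f1) := by rw [← h', Equiv.apply_symm_apply]
    rw [hll]
    simp [eFlagL]
  · obtain rfl : ee = finSumFinEquiv (Sum.inl e1) := by rw [← h, Equiv.apply_symm_apply]
    obtain rfl : ee' = finSumFinEquiv (Sum.inr f2) := by rw [← h', Equiv.apply_symm_apply]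
    rw [hlr]
    simp [eFlagL]
  · obtain rfl : ee = finSumFinEquiv (Sum.inr e2) := by rw [← h, Equiv.apply_symm_apply]
    obtain rfl : ee' = finSumFinEquiv (Sum.inl f1) := by rw [← h', Equiv.apply_symm_apply]
    rw [hrl]
    simp [eFlagL]
  · obtain rfl : ee = finSumFinEquiv (Sum.inr e2) := by rw [← h, Equiv.apply_symm_apply]
    obtain rfl : ee' = finSumFinEquiv (Sum.inr f2) := by rw [← h', Equiv.apply_symm_apply]
    rw [hrr]
    simp [eFlagL]

lemma vnEntropy_flag_splitE
    (T : Matrix (Fin (d1 + d2)) (Fin (d1 + d2)) ℂ)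
    (A1 : Matrix (Fin d1) (Fin d1) ℂ) (A2 : Matrix (Fin d2) (Fin d2) ℂ)
    (h1 : A1.IsHermitian) (h2 : A2.IsHermitian)
    (hll : ∀ e1 e1', T (finSumFinEquiv (Sum.inl e1)) (finSumFinEquiv (Sum.inl e1')) = A1 e1 e1')
    (hrr : ∀ e2 e2', T (finSumFinEquiv (Sum.inr e2)) (finSumFinEquiv (Sum.inr e2')) = A2 e2 e2')
    (hlr : ∀ e1 e2', T (finSumFinEquiv (Sum.inl e1)) (finSumFinEquiv (Sum.inr e2')) = 0)
    (hrl : ∀ e2 e1', T (finSumFinEquiv (Sum.inr e2)) (finSumFinEquiv (Sum.inl e1')) = 0) :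
    vnEntropy T = vnEntropy A1 + vnEntropy A2 := by
  apply vnEntropy_of_blocks finSumFinEquiv.symm T A1 A2 h1 h2
  intro ee ee'
  rcases h : finSumFinEquiv.symm ee with e1 | e2 <;>
    rcases h' : finSumFinEquiv.symm ee' with f1 | f2
  · obtain rfl : ee = finSumFinEquiv (Sum.inl e1) := by rw [← h, Equiv.apply_symm_apply]
    obtain rfl : ee' = finSumFinEquiv (Sum.inl f1) := by rw [← h', Equiv.apply_symm_apply]
    rw [hll]; simp
  · obtain rfl : ee = finSumFinEquiv (Sum.inl e1) := by rw [← h, Equiv.apply_symm_apply]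
    obtain rfl : ee' = finSumFinEquiv (Sum.inr f2) := by rw [← h', Equiv.apply_symm_apply]
    rw [hlr]; simp
  · obtain rfl : ee = finSumFinEquiv (Sum.inr e2) := by rw [← h, Equiv.apply_symm_apply]
    obtain rfl : ee' = finSumFinEquiv (Sum.inl f1) := by rw [← h', Equiv.apply_symm_apply]
    rw [hrl]; simp
  · obtain rfl : ee = finSumFinEquiv (Sum.inr e2) := by rw [← h, Equiv.apply_symm_apply]
    obtain rfl : ee' = finSumFinEquiv (Sum.inr f2) := by rw [← h', Equiv.apply_symm_apply]
    rw [hrr]; simp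

end Flag

section FlagCond

variable {A X : Type*} [Fintype A] [DecidableEq A] [Fintype X] [DecidableEq X]
  {dB' d1 d2 m : ℕ} {lam : ℝ}
  {ext1 : A → X → Fin m → Matrix (Fin dB' × Fin d1) (Fin dB' × Fin d1) ℂ}
  {ext2 : A → X → Fin m → Matrix (Fin dB' × Fin d2) (Fin dB' × Fin d2) ℂ}

lemma posSemidef_fromBlocks {n' m' : Type*} [Fintype n'] [DecidableEq n']
    [Fintype m'] [DecidableEq m'] {A : Matrix n' n' ℂ} {B : Matrix m' m' ℂ}
    (hA : A.PosSemidef) (hB : B.PosSemidef) :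
    (Matrix.fromBlocks A 0 0 B).PosSemidef := by
  refine Matrix.PosSemidef.of_dotProduct_mulVec_nonneg (isHermitian_fromBlocks hA.1 hB.1) fun x => ?_
  have hmv : Matrix.fromBlocks A 0 0 B *ᵥ x
      = Sum.elim (A *ᵥ (x ∘ Sum.inl)) (B *ᵥ (x ∘ Sum.inr)) := by
    rw [Matrix.fromBlocks_mulVec]
    simp
  rw [hmv, dotProduct, Fintype.sum_sum_type]
  have h1 : (∑ i, star (x (Sum.inl i)) * Sum.elim (A *ᵥ (x ∘ Sum.inl)) (B *ᵥ (x ∘ Sum.inr)) (Sum.inl i))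
      = dotProduct (star (x ∘ Sum.inl)) (A *ᵥ (x ∘ Sum.inl)) := rfl
  have h2 : (∑ i, star (x (Sum.inr i)) * Sum.elim (A *ᵥ (x ∘ Sum.inl)) (B *ᵥ (x ∘ Sum.inr)) (Sum.inr i))
      = dotProduct (star (x ∘ Sum.inr)) (B *ᵥ (x ∘ Sum.inr)) := rfl
  simp only [Pi.star_apply]
  rw [h1, h2]
  exact add_nonneg (hA.dotProduct_mulVec_nonneg _) (hB.dotProduct_mulVec_nonneg _)

lemma flagExt_rep (a : A) (x : X) (y : Fin m) :
    flagExt lam ext1 ext2 a x y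
      = (Matrix.fromBlocks (((lam:ℝ):ℂ) • ext1 a x y) 0 0
          (((1 - lam:ℝ):ℂ) • ext2 a x y)).submatrix
        (eFlagL (Fin dB') d1 d2) (eFlagL (Fin dB') d1 d2) := by
  ext q q'
  rcases q with ⟨b, ee⟩; rcases q' with ⟨b', ee'⟩
  rcases h : finSumFinEquiv.symm ee with e1 | e2 <;>
    rcases h' : finSumFinEquiv.symm ee' with f1 | f2
  · obtain rfl : ee = finSumFinEquiv (Sum.inl e1) := by rw [← h, Equiv.apply_symm_apply]
    obtain rfl : ee' = finSumFinEquiv (Sum.inl f1) := by rw [← h', Equiv.apply_symm_apply]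
    rw [flagExt_ll]
    simp [eFlagL, smul_eq_mul]
  · obtain rfl : ee = finSumFinEquiv (Sum.inl e1) := by rw [← h, Equiv.apply_symm_apply]
    obtain rfl : ee' = finSumFinEquiv (Sum.inr f2) := by rw [← h', Equiv.apply_symm_apply]
    rw [flagExt_lr]
    simp [eFlagL]
  · obtain rfl : ee = finSumFinEquiv (Sum.inr e2) := by rw [← h, Equiv.apply_symm_apply]
    obtain rfl : ee' = finSumFinEquiv (Sum.inl f1) := by rw [← h', Equiv.apply_symm_apply]
    rw [flagExt_rl]
    simp [eFlagL]
  · obtain rfl : ee = finSumFinEquiv (Sum.inr e2) := by rw [← h, Equiv.apply_symm_apply]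
    obtain rfl : ee' = finSumFinEquiv (Sum.inr f2) := by rw [← h', Equiv.apply_symm_apply]
    rw [flagExt_rr]
    simp [eFlagL, smul_eq_mul]

lemma flagExt_posSemidef (h0 : 0 ≤ lam) (h1 : lam ≤ 1)
    (hpsd1 : ∀ a x y, (ext1 a x y).PosSemidef) (hpsd2 : ∀ a x y, (ext2 a x y).PosSemidef) :
    ∀ a x y, (flagExt lam ext1 ext2 a x y).PosSemidef := by
  intro a x y
  rw [flagExt_rep]
  exact (posSemidef_fromBlocks (posSemidef_real_smul (hpsd1 a x y) h0)
    (posSemidef_real_smul (hpsd2 a x y) (by linarith))).submatrix _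

lemma flagExt_ptrace2 (a : A) (x : X) (y : Fin m) :
    ptrace2 (flagExt lam ext1 ext2 a x y)
      = ((lam:ℝ):ℂ) • ptrace2 (ext1 a x y) + ((1 - lam:ℝ):ℂ) • ptrace2 (ext2 a x y) := by
  ext b b'
  show (∑ ee, flagExt lam ext1 ext2 a x y (b, ee) (b', ee)) = _
  rw [← Equiv.sum_comp finSumFinEquiv
    (fun ee => flagExt lam ext1 ext2 a x y (b, ee) (b', ee)), Fintype.sum_sum_type]
  rw [Finset.sum_congr rfl (fun e1 (_ : e1 ∈ Finset.univ) => flagExt_ll a x y b b' e1 e1),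
    Finset.sum_congr rfl (fun e2 (_ : e2 ∈ Finset.univ) => flagExt_rr a x y b b' e2 e2)]
  rw [← Finset.mul_sum, ← Finset.mul_sum]
  rfl

lemma flagExt_NS
    (hNS1 : ∀ (x x' : X) (y : Fin m), ∑ a, ext1 a x y = ∑ a, ext1 a x' y)
    (hNS2 : ∀ (x x' : X) (y : Fin m), ∑ a, ext2 a x y = ∑ a, ext2 a x' y) :
    ∀ (x x' : X) (y : Fin m), ∑ a, flagExt lam ext1 ext2 a x y
      = ∑ a, flagExt lam ext1 ext2 a x' y := by
  intro x x' y
  ext q q'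
  rw [Matrix.sum_apply, Matrix.sum_apply]
  rcases q with ⟨b, ee⟩; rcases q' with ⟨b', ee'⟩
  rcases h : finSumFinEquiv.symm ee with e1 | e2 <;>
    rcases h' : finSumFinEquiv.symm ee' with f1 | f2
  · obtain rfl : ee = finSumFinEquiv (Sum.inl e1) := by rw [← h, Equiv.apply_symm_apply]
    obtain rfl : ee' = finSumFinEquiv (Sum.inl f1) := by rw [← h', Equiv.apply_symm_apply]
    simp only [flagExt_ll]
    rw [← Finset.mul_sum, ← Finset.mul_sum]
    congr 1
    rw [show (∑ a, ext1 a x y (b, e1) (b', f1)) = (∑ a, ext1 a x y) (b, e1) (b', f1) from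
      (Matrix.sum_apply _ _ _ _).symm, hNS1 x x' y, Matrix.sum_apply]
  · obtain rfl : ee = finSumFinEquiv (Sum.inl e1) := by rw [← h, Equiv.apply_symm_apply]
    obtain rfl : ee' = finSumFinEquiv (Sum.inr f2) := by rw [← h', Equiv.apply_symm_apply]
    simp only [flagExt_lr]
  · obtain rfl : ee = finSumFinEquiv (Sum.inr e2) := by rw [← h, Equiv.apply_symm_apply]
    obtain rfl : ee' = finSumFinEquiv (Sum.inl f1) := by rw [← h', Equiv.apply_symm_apply]
    simp only [flagExt_rl]
  · obtain rfl : ee = finSumFinEquiv (Sum.inr e2) := by rw [← h, Equiv.apply_symm_apply]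
    obtain rfl : ee' = finSumFinEquiv (Sum.inr f2) := by rw [← h', Equiv.apply_symm_apply]
    simp only [flagExt_rr]
    rw [← Finset.mul_sum, ← Finset.mul_sum]
    congr 1
    rw [show (∑ a, ext2 a x y (b, e2) (b', f2)) = (∑ a, ext2 a x y) (b, e2) (b', f2) from
      (Matrix.sum_apply _ _ _ _).symm, hNS2 x x' y, Matrix.sum_apply]

end FlagCond

section FlagCMI

variable {A X : Type*} [Fintype A] [DecidableEq A] [Fintype X] [DecidableEq X]
  {dB' d1 d2 m : ℕ} {lam : ℝ}
  {p : X → Fin m → ℝ}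
  {ext1 : A → X → Fin m → Matrix (Fin dB' × Fin d1) (Fin dB' × Fin d1) ℂ}
  {ext2 : A → X → Fin m → Matrix (Fin dB' × Fin d2) (Fin dB' × Fin d2) ℂ}

lemma flag_CMI (h0 : 0 ≤ lam) (h1 : lam ≤ 1) (hp : ∀ x y, 0 ≤ p x y)
    (hpsd1 : ∀ a x y, (ext1 a x y).PosSemidef)
    (hpsd2 : ∀ a x y, (ext2 a x y).PosSemidef) :
    CMI (cqStateS p (flagExt lam ext1 ext2))
      = lam * CMI (cqStateS p ext1) + (1 - lam) * CMI (cqStateS p ext2) := by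
  have h0' : (0:ℝ) ≤ 1 - lam := by linarith
  have hpsdτ : ∀ a x y, (flagExt lam ext1 ext2 a x y).PosSemidef :=
    flagExt_posSemidef h0 h1 hpsd1 hpsd2
  -- ptrace1 of flagExt entries
  have hpt_ll : ∀ (a : A) (x : X) (y : Fin m) (e1 e1' : Fin d1),
      ptrace1 (flagExt lam ext1 ext2 a x y)
        (finSumFinEquiv (Sum.inl e1)) (finSumFinEquiv (Sum.inl e1'))
      = ((lam:ℝ):ℂ) * ptrace1 (ext1 a x y) e1 e1' := by
    intro a x y e1 e1'
    show (∑ b, flagExt lam ext1 ext2 a x y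
      (b, finSumFinEquiv (Sum.inl e1)) (b, finSumFinEquiv (Sum.inl e1'))) = _
    rw [Finset.sum_congr rfl fun b (_ : b ∈ Finset.univ) => flagExt_ll a x y b b e1 e1',
      ← Finset.mul_sum]
    rfl
  have hpt_rr : ∀ (a : A) (x : X) (y : Fin m) (e2 e2' : Fin d2),
      ptrace1 (flagExt lam ext1 ext2 a x y)
        (finSumFinEquiv (Sum.inr e2)) (finSumFinEquiv (Sum.inr e2'))
      = ((1 - lam:ℝ):ℂ) * ptrace1 (ext2 a x y) e2 e2' := by
    intro a x y e2 e2'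
    show (∑ b, flagExt lam ext1 ext2 a x y
      (b, finSumFinEquiv (Sum.inr e2)) (b, finSumFinEquiv (Sum.inr e2'))) = _
    rw [Finset.sum_congr rfl fun b (_ : b ∈ Finset.univ) => flagExt_rr a x y b b e2 e2',
      ← Finset.mul_sum]
    rfl
  have hpt_lr : ∀ (a : A) (x : X) (y : Fin m) (e1 : Fin d1) (e2' : Fin d2),
      ptrace1 (flagExt lam ext1 ext2 a x y)
        (finSumFinEquiv (Sum.inl e1)) (finSumFinEquiv (Sum.inr e2')) = 0 := by
    intro a x y e1 e2'
    show (∑ b, flagExt lam ext1 ext2 a x y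
      (b, finSumFinEquiv (Sum.inl e1)) (b, finSumFinEquiv (Sum.inr e2'))) = 0
    rw [Finset.sum_congr rfl fun b (_ : b ∈ Finset.univ) => flagExt_lr a x y b b e1 e2']
    simp
  have hpt_rl : ∀ (a : A) (x : X) (y : Fin m) (e2 : Fin d2) (e1' : Fin d1),
      ptrace1 (flagExt lam ext1 ext2 a x y)
        (finSumFinEquiv (Sum.inr e2)) (finSumFinEquiv (Sum.inl e1')) = 0 := by
    intro a x y e2 e1'
    show (∑ b, flagExt lam ext1 ext2 a x y
      (b, finSumFinEquiv (Sum.inr e2)) (b, finSumFinEquiv (Sum.inl e1'))) = 0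
    rw [Finset.sum_congr rfl fun b (_ : b ∈ Finset.univ) => flagExt_rl a x y b b e2 e1']
    simp
  -- per-block splits
  have hKMsplit : ∀ c : (X × A) × Fin m,
      vnEntropy (cqKMblocks p (flagExt lam ext1 ext2) c)
        = vnEntropy (((lam:ℝ):ℂ) • cqKMblocks p ext1 c)
          + vnEntropy (((1 - lam:ℝ):ℂ) • cqKMblocks p ext2 c) := by
    intro c
    apply vnEntropy_flag_splitE
    · exact (posSemidef_real_smul (posSemidef_cqKMblocks hp hpsd1 c) h0).1
    · exact (posSemidef_real_smul (posSemidef_cqKMblocks hp hpsd2 c) h0').1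
    · intro e1 e1'
      show ((p c.1.1 c.2 : ℂ) • ptrace1 (flagExt lam ext1 ext2 c.1.2 c.1.1 c.2)) _ _ = _
      rw [Matrix.smul_apply, hpt_ll]
      show (p c.1.1 c.2 : ℂ) • (((lam:ℝ):ℂ) * ptrace1 (ext1 c.1.2 c.1.1 c.2) e1 e1') = _
      show _ = ((lam:ℝ):ℂ) • ((p c.1.1 c.2 : ℂ) • ptrace1 (ext1 c.1.2 c.1.1 c.2)) e1 e1'
      simp only [Matrix.smul_apply, smul_eq_mul]
      ring
    · intro e2 e2'
      show ((p c.1.1 c.2 : ℂ) • ptrace1 (flagExt lam ext1 ext2 c.1.2 c.1.1 c.2)) _ _ = _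
      rw [Matrix.smul_apply, hpt_rr]
      show _ = ((1 - lam:ℝ):ℂ) • ((p c.1.1 c.2 : ℂ) • ptrace1 (ext2 c.1.2 c.1.1 c.2)) e2 e2'
      simp only [Matrix.smul_apply, smul_eq_mul]
      ring
    · intro e1 e2'
      show ((p c.1.1 c.2 : ℂ) • ptrace1 (flagExt lam ext1 ext2 c.1.2 c.1.1 c.2)) _ _ = 0
      rw [Matrix.smul_apply, hpt_lr]
      simp
    · intro e2 e1'
      show ((p c.1.1 c.2 : ℂ) • ptrace1 (flagExt lam ext1 ext2 c.1.2 c.1.1 c.2)) _ _ = 0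
      rw [Matrix.smul_apply, hpt_rl]
      simp
  have hMsplit : ∀ y : Fin m,
      vnEntropy (cqMblocks p (flagExt lam ext1 ext2) y)
        = vnEntropy (((lam:ℝ):ℂ) • cqMblocks p ext1 y)
          + vnEntropy (((1 - lam:ℝ):ℂ) • cqMblocks p ext2 y) := by
    intro y
    apply vnEntropy_flag_splitE
    · exact (posSemidef_real_smul (posSemidef_cqMblocks hp hpsd1 y) h0).1
    · exact (posSemidef_real_smul (posSemidef_cqMblocks hp hpsd2 y) h0').1
    · intro e1 e1'
      show (∑ k : X × A, (p k.1 y : ℂ) • ptrace1 (flagExt lam ext1 ext2 k.2 k.1 y)) _ _ = _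
      rw [Matrix.sum_apply]
      rw [Finset.sum_congr rfl fun k (_ : k ∈ Finset.univ) => by
        rw [Matrix.smul_apply, hpt_ll k.2 k.1 y e1 e1']]
      show (∑ k : X × A, (p k.1 y : ℂ) • (((lam:ℝ):ℂ) * ptrace1 (ext1 k.2 k.1 y) e1 e1')) = _
      show _ = ((lam:ℝ):ℂ) • (∑ k : X × A, (p k.1 y : ℂ) • ptrace1 (ext1 k.2 k.1 y)) e1 e1'
      simp only [Matrix.sum_apply, Matrix.smul_apply, smul_eq_mul]
      rw [Finset.mul_sum]
      refine Finset.sum_congr rfl fun k _ => ?_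
      ring
    · intro e2 e2'
      show (∑ k : X × A, (p k.1 y : ℂ) • ptrace1 (flagExt lam ext1 ext2 k.2 k.1 y)) _ _ = _
      rw [Matrix.sum_apply]
      rw [Finset.sum_congr rfl fun k (_ : k ∈ Finset.univ) => by
        rw [Matrix.smul_apply, hpt_rr k.2 k.1 y e2 e2']]
      show _ = ((1 - lam:ℝ):ℂ) • (∑ k : X × A, (p k.1 y : ℂ) • ptrace1 (ext2 k.2 k.1 y)) e2 e2'
      simp only [Matrix.sum_apply, Matrix.smul_apply, smul_eq_mul]
      rw [Finset.mul_sum]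
      refine Finset.sum_congr rfl fun k _ => ?_
      ring
    · intro e1 e2'
      show (∑ k : X × A, (p k.1 y : ℂ) • ptrace1 (flagExt lam ext1 ext2 k.2 k.1 y)) _ _ = 0
      rw [Matrix.sum_apply]
      rw [Finset.sum_congr rfl fun k (_ : k ∈ Finset.univ) => by
        rw [Matrix.smul_apply, hpt_lr k.2 k.1 y e1 e2']]
      simp
    · intro e2 e1'
      show (∑ k : X × A, (p k.1 y : ℂ) • ptrace1 (flagExt lam ext1 ext2 k.2 k.1 y)) _ _ = 0
      rw [Matrix.sum_apply]
      rw [Finset.sum_congr rfl fun k (_ : k ∈ Finset.univ) => by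
        rw [Matrix.smul_apply, hpt_rl k.2 k.1 y e2 e1']]
      simp
  have hFullsplit : ∀ c : (X × A) × Fin m,
      vnEntropy (cqBlocks p (flagExt lam ext1 ext2) c)
        = vnEntropy (((lam:ℝ):ℂ) • cqBlocks p ext1 c)
          + vnEntropy (((1 - lam:ℝ):ℂ) • cqBlocks p ext2 c) := by
    intro c
    apply vnEntropy_flag_split
    · exact (posSemidef_real_smul (posSemidef_cqBlocks hp hpsd1 c) h0).1
    · exact (posSemidef_real_smul (posSemidef_cqBlocks hp hpsd2 c) h0').1
    · intro b e1 b' e1'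
      show ((p c.1.1 c.2 : ℂ) • flagExt lam ext1 ext2 c.1.2 c.1.1 c.2) _ _ = _
      rw [Matrix.smul_apply, flagExt_ll]
      show _ = ((lam:ℝ):ℂ) • ((p c.1.1 c.2 : ℂ) • ext1 c.1.2 c.1.1 c.2) (b, e1) (b', e1')
      simp only [Matrix.smul_apply, smul_eq_mul]
      ring
    · intro b e2 b' e2'
      show ((p c.1.1 c.2 : ℂ) • flagExt lam ext1 ext2 c.1.2 c.1.1 c.2) _ _ = _
      rw [Matrix.smul_apply, flagExt_rr]
      show _ = ((1 - lam:ℝ):ℂ) • ((p c.1.1 c.2 : ℂ) • ext2 c.1.2 c.1.1 c.2) (b, e2) (b', e2')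
      simp only [Matrix.smul_apply, smul_eq_mul]
      ring
    · intro b e1 b' e2'
      show ((p c.1.1 c.2 : ℂ) • flagExt lam ext1 ext2 c.1.2 c.1.1 c.2) _ _ = 0
      rw [Matrix.smul_apply, flagExt_lr]
      simp
    · intro b e2 b' e1'
      show ((p c.1.1 c.2 : ℂ) • flagExt lam ext1 ext2 c.1.2 c.1.1 c.2) _ _ = 0
      rw [Matrix.smul_apply, flagExt_rl]
      simp
  have hLMsplit : ∀ y : Fin m,
      vnEntropy (cqLMblocks p (flagExt lam ext1 ext2) y)
        = vnEntropy (((lam:ℝ):ℂ) • cqLMblocks p ext1 y)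
          + vnEntropy (((1 - lam:ℝ):ℂ) • cqLMblocks p ext2 y) := by
    intro y
    apply vnEntropy_flag_split
    · exact (posSemidef_real_smul (posSemidef_cqLMblocks hp hpsd1 y) h0).1
    · exact (posSemidef_real_smul (posSemidef_cqLMblocks hp hpsd2 y) h0').1
    · intro b e1 b' e1'
      show (∑ k : X × A, (p k.1 y : ℂ) • flagExt lam ext1 ext2 k.2 k.1 y) _ _ = _
      rw [Matrix.sum_apply]
      rw [Finset.sum_congr rfl fun k (_ : k ∈ Finset.univ) => by
        rw [Matrix.smul_apply, flagExt_ll k.2 k.1 y b b' e1 e1']]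
      show _ = ((lam:ℝ):ℂ) • (∑ k : X × A, (p k.1 y : ℂ) • ext1 k.2 k.1 y) (b, e1) (b', e1')
      simp only [Matrix.sum_apply, Matrix.smul_apply, smul_eq_mul]
      rw [Finset.mul_sum]
      refine Finset.sum_congr rfl fun k _ => ?_
      ring
    · intro b e2 b' e2'
      show (∑ k : X × A, (p k.1 y : ℂ) • flagExt lam ext1 ext2 k.2 k.1 y) _ _ = _
      rw [Matrix.sum_apply]
      rw [Finset.sum_congr rfl fun k (_ : k ∈ Finset.univ) => by
        rw [Matrix.smul_apply, flagExt_rr k.2 k.1 y b b' e2 e2']]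
      show _ = ((1 - lam:ℝ):ℂ) • (∑ k : X × A, (p k.1 y : ℂ) • ext2 k.2 k.1 y) (b, e2) (b', e2')
      simp only [Matrix.sum_apply, Matrix.smul_apply, smul_eq_mul]
      rw [Finset.mul_sum]
      refine Finset.sum_congr rfl fun k _ => ?_
      ring
    · intro b e1 b' e2'
      show (∑ k : X × A, (p k.1 y : ℂ) • flagExt lam ext1 ext2 k.2 k.1 y) _ _ = 0
      rw [Matrix.sum_apply]
      rw [Finset.sum_congr rfl fun k (_ : k ∈ Finset.univ) => by
        rw [Matrix.smul_apply, flagExt_lr k.2 k.1 y b b' e1 e2']]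
      simp
    · intro b e2 b' e1'
      show (∑ k : X × A, (p k.1 y : ℂ) • flagExt lam ext1 ext2 k.2 k.1 y) _ _ = 0
      rw [Matrix.sum_apply]
      rw [Finset.sum_congr rfl fun k (_ : k ∈ Finset.univ) => by
        rw [Matrix.smul_apply, flagExt_rl k.2 k.1 y b b' e2 e1']]
      simp
  -- marginal identities
  have hKM : vnEntropy (margKM (cqStateS p (flagExt lam ext1 ext2)))
      = lam * vnEntropy (margKM (cqStateS p ext1))
        + (1 - lam) * vnEntropy (margKM (cqStateS p ext2))
        + ((margKM (cqStateS p ext1)).trace.re * entPhi lam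
          + (margKM (cqStateS p ext2)).trace.re * entPhi (1 - lam)) := by
    rw [vnEntropy_cqKM hp hpsdτ, vnEntropy_cqKM hp hpsd1, vnEntropy_cqKM hp hpsd2]
    have htr1 : (margKM (cqStateS p ext1)).trace.re
        = ∑ c : (X × A) × Fin m, (cqKMblocks p ext1 c).trace.re := by
      rw [trace_of_rep _ _ _ (margKM_cq_entry p ext1), Complex.re_sum]
    have htr2 : (margKM (cqStateS p ext2)).trace.re
        = ∑ c : (X × A) × Fin m, (cqKMblocks p ext2 c).trace.re := by
      rw [trace_of_rep _ _ _ (margKM_cq_entry p ext2), Complex.re_sum]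
    rw [htr1, htr2]
    have hper : ∀ c ∈ (Finset.univ : Finset ((X × A) × Fin m)),
        vnEntropy (cqKMblocks p (flagExt lam ext1 ext2) c)
        = lam * vnEntropy (cqKMblocks p ext1 c)
          + (1 - lam) * vnEntropy (cqKMblocks p ext2 c)
          + ((cqKMblocks p ext1 c).trace.re * entPhi lam
            + (cqKMblocks p ext2 c).trace.re * entPhi (1 - lam)) := by
      intro c _
      rw [hKMsplit c, vnEntropy_real_smul (posSemidef_cqKMblocks hp hpsd1 c) h0,
        vnEntropy_real_smul (posSemidef_cqKMblocks hp hpsd2 c) h0']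
      ring
    rw [Finset.sum_congr rfl hper, Finset.sum_add_distrib, Finset.sum_add_distrib,
      Finset.sum_add_distrib, ← Finset.mul_sum, ← Finset.mul_sum,
      ← Finset.sum_mul, ← Finset.sum_mul]
  have hM : vnEntropy (margM (cqStateS p (flagExt lam ext1 ext2)))
      = lam * vnEntropy (margM (cqStateS p ext1))
        + (1 - lam) * vnEntropy (margM (cqStateS p ext2))
        + ((margM (cqStateS p ext1)).trace.re * entPhi lam
          + (margM (cqStateS p ext2)).trace.re * entPhi (1 - lam)) := by
    rw [vnEntropy_cqM hp hpsdτ, vnEntropy_cqM hp hpsd1, vnEntropy_cqM hp hpsd2]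
    have htr1 : (margM (cqStateS p ext1)).trace.re
        = ∑ y, (cqMblocks p ext1 y).trace.re := by
      rw [trace_of_rep (Equiv.refl _) _ _ (margM_cq_entry p ext1), Complex.re_sum]
    have htr2 : (margM (cqStateS p ext2)).trace.re
        = ∑ y, (cqMblocks p ext2 y).trace.re := by
      rw [trace_of_rep (Equiv.refl _) _ _ (margM_cq_entry p ext2), Complex.re_sum]
    rw [htr1, htr2]
    have hper : ∀ y ∈ (Finset.univ : Finset (Fin m)),
        vnEntropy (cqMblocks p (flagExt lam ext1 ext2) y)
        = lam * vnEntropy (cqMblocks p ext1 y)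
          + (1 - lam) * vnEntropy (cqMblocks p ext2 y)
          + ((cqMblocks p ext1 y).trace.re * entPhi lam
            + (cqMblocks p ext2 y).trace.re * entPhi (1 - lam)) := by
      intro y _
      rw [hMsplit y, vnEntropy_real_smul (posSemidef_cqMblocks hp hpsd1 y) h0,
        vnEntropy_real_smul (posSemidef_cqMblocks hp hpsd2 y) h0']
      ring
    rw [Finset.sum_congr rfl hper, Finset.sum_add_distrib, Finset.sum_add_distrib,
      Finset.sum_add_distrib, ← Finset.mul_sum, ← Finset.mul_sum,
      ← Finset.sum_mul, ← Finset.sum_mul]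
  have hFull : vnEntropy (cqStateS p (flagExt lam ext1 ext2))
      = lam * vnEntropy (cqStateS p ext1)
        + (1 - lam) * vnEntropy (cqStateS p ext2)
        + ((cqStateS p ext1).trace.re * entPhi lam
          + (cqStateS p ext2).trace.re * entPhi (1 - lam)) := by
    rw [vnEntropy_cq hp hpsdτ, vnEntropy_cq hp hpsd1, vnEntropy_cq hp hpsd2]
    have htr1 : (cqStateS p ext1).trace.re
        = ∑ c : (X × A) × Fin m, (cqBlocks p ext1 c).trace.re := by
      rw [trace_cq (p := p) (ext := ext1), Complex.re_sum]
    have htr2 : (cqStateS p ext2).trace.re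
        = ∑ c : (X × A) × Fin m, (cqBlocks p ext2 c).trace.re := by
      rw [trace_cq (p := p) (ext := ext2), Complex.re_sum]
    rw [htr1, htr2]
    have hper : ∀ c ∈ (Finset.univ : Finset ((X × A) × Fin m)),
        vnEntropy (cqBlocks p (flagExt lam ext1 ext2) c)
        = lam * vnEntropy (cqBlocks p ext1 c)
          + (1 - lam) * vnEntropy (cqBlocks p ext2 c)
          + ((cqBlocks p ext1 c).trace.re * entPhi lam
            + (cqBlocks p ext2 c).trace.re * entPhi (1 - lam)) := by
      intro c _
      rw [hFullsplit c, vnEntropy_real_smul (posSemidef_cqBlocks hp hpsd1 c) h0,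
        vnEntropy_real_smul (posSemidef_cqBlocks hp hpsd2 c) h0']
      ring
    rw [Finset.sum_congr rfl hper, Finset.sum_add_distrib, Finset.sum_add_distrib,
      Finset.sum_add_distrib, ← Finset.mul_sum, ← Finset.mul_sum,
      ← Finset.sum_mul, ← Finset.sum_mul]
  have hLM : vnEntropy (margLM (cqStateS p (flagExt lam ext1 ext2)))
      = lam * vnEntropy (margLM (cqStateS p ext1))
        + (1 - lam) * vnEntropy (margLM (cqStateS p ext2))
        + ((margLM (cqStateS p ext1)).trace.re * entPhi lam
          + (margLM (cqStateS p ext2)).trace.re * entPhi (1 - lam)) := by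
    rw [vnEntropy_cqLM hp hpsdτ, vnEntropy_cqLM hp hpsd1, vnEntropy_cqLM hp hpsd2]
    have htr1 : (margLM (cqStateS p ext1)).trace.re
        = ∑ y, (cqLMblocks p ext1 y).trace.re := by
      rw [trace_of_rep _ _ _ (margLM_cq_entry p ext1), Complex.re_sum]
    have htr2 : (margLM (cqStateS p ext2)).trace.re
        = ∑ y, (cqLMblocks p ext2 y).trace.re := by
      rw [trace_of_rep _ _ _ (margLM_cq_entry p ext2), Complex.re_sum]
    rw [htr1, htr2]
    have hper : ∀ y ∈ (Finset.univ : Finset (Fin m)),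
        vnEntropy (cqLMblocks p (flagExt lam ext1 ext2) y)
        = lam * vnEntropy (cqLMblocks p ext1 y)
          + (1 - lam) * vnEntropy (cqLMblocks p ext2 y)
          + ((cqLMblocks p ext1 y).trace.re * entPhi lam
            + (cqLMblocks p ext2 y).trace.re * entPhi (1 - lam)) := by
      intro y _
      rw [hLMsplit y, vnEntropy_real_smul (posSemidef_cqLMblocks hp hpsd1 y) h0,
        vnEntropy_real_smul (posSemidef_cqLMblocks hp hpsd2 y) h0']
      ring
    rw [Finset.sum_congr rfl hper, Finset.sum_add_distrib, Finset.sum_add_distrib,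
      Finset.sum_add_distrib, ← Finset.mul_sum, ← Finset.mul_sum,
      ← Finset.sum_mul, ← Finset.sum_mul]
  -- assemble
  have t1KM := congrArg Complex.re (trace_margKM (cqStateS p ext1))
  have t2KM := congrArg Complex.re (trace_margKM (cqStateS p ext2))
  have t1LM := congrArg Complex.re (trace_margLM (cqStateS p ext1))
  have t2LM := congrArg Complex.re (trace_margLM (cqStateS p ext2))
  have t1M := congrArg Complex.re (trace_margM (cqStateS p ext1))
  have t2M := congrArg Complex.re (trace_margM (cqStateS p ext2))
  unfold CMI
  rw [hKM, hLM, hFull, hM, t1KM, t2KM, t1LM, t2LM, t1M, t2M]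
  ring

end FlagCMI

section Final

lemma exists_lt_sInf_add {W : Set ℝ} (hne : W.Nonempty) {ε : ℝ} (hε : 0 < ε) :
    ∃ w ∈ W, w < sInf W + ε := by
  by_cases hb : BddBelow W
  · exact exists_lt_of_csInf_lt hne (lt_add_of_pos_right _ hε)
  · obtain ⟨w, hw, hlt⟩ := not_bddBelow_iff.mp hb (sInf W + ε)
    exact ⟨w, hw, hlt⟩

lemma flag_mem_WSet {r s dB : ℕ} {m dB' nk : ℕ}
    {ρ σ τ : Fin r → Fin s → Matrix (Fin dB) (Fin dB) ℂ}
    {lam : ℝ} (h0 : 0 ≤ lam) (h1 : lam ≤ 1)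
    (hτ : ∀ a x, τ a x = ((lam : ℝ) : ℂ) • ρ a x + ((1 - lam : ℝ) : ℂ) • σ a x)
    (V : Fin m → Fin nk → Matrix (Fin dB') (Fin dB) ℂ)
    (pXY : Fin s → Fin m → ℝ) (hp : ∀ y, IsProbDist fun x => pXY x y)
    {w1 w2 : ℝ} (hw1 : w1 ∈ WSet ρ m dB' nk V pXY) (hw2 : w2 ∈ WSet σ m dB' nk V pXY) :
    lam * w1 + (1 - lam) * w2 ∈ WSet τ m dB' nk V pXY := by
  obtain ⟨d1, hd1, ext1, hpsd1, hpt1, hNS1, rfl⟩ := hw1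
  obtain ⟨d2, hd2, ext2, hpsd2, hpt2, hNS2, rfl⟩ := hw2
  refine ⟨d1 + d2, by omega, flagExt lam ext1 ext2,
    flagExt_posSemidef h0 h1 hpsd1 hpsd2, ?_, flagExt_NS hNS1 hNS2, ?_⟩
  · intro a x y
    rw [flagExt_ptrace2, hpt1, hpt2, hτ a x, instrApply_combo]
  · exact (flag_CMI h0 h1 (fun x y => (hp y).1 x) hpsd1 hpsd2).symm

end Final

end SteerAux

/-- Intrinsic steerability is convex. -/
theorem intrinsic_steerability_convex {r s dB : ℕ}
    (hr : 1 ≤ r) (hs : 1 ≤ s) (hdB : 1 ≤ dB)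
    (ρ σ : Fin r → Fin s → Matrix (Fin dB) (Fin dB) ℂ)
    (hρ : IsAssemblage ρ) (hσ : IsAssemblage σ)
    (lam : ℝ) (h0 : 0 ≤ lam) (h1 : lam ≤ 1)
    (τ : Fin r → Fin s → Matrix (Fin dB) (Fin dB) ℂ)
    (hτ : ∀ a x, τ a x = ((lam : ℝ) : ℂ) • ρ a x + ((1 - lam : ℝ) : ℂ) • σ a x) :
    IsAssemblage τ ∧ IS τ ≤ lam * IS ρ + (1 - lam) * IS σ := by
  have h0' : (0:ℝ) ≤ 1 - lam := by linarith
  have hτA : IsAssemblage τ := by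
    refine ⟨?_, ?_, ?_⟩
    · intro a x
      rw [hτ a x]
      exact (SteerAux.posSemidef_real_smul (hρ.1 a x) h0).add
        (SteerAux.posSemidef_real_smul (hσ.1 a x) h0')
    · intro x
      have hsum : ∑ a, (τ a x).trace
          = ((lam:ℝ):ℂ) * ∑ a, (ρ a x).trace + ((1 - lam:ℝ):ℂ) * ∑ a, (σ a x).trace := by
        rw [Finset.mul_sum, Finset.mul_sum, ← Finset.sum_add_distrib]
        refine Finset.sum_congr rfl fun a _ => ?_
        rw [hτ a x, Matrix.trace_add, Matrix.trace_smul, Matrix.trace_smul]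
        simp [smul_eq_mul]
      rw [hsum, hρ.2.1 x, hσ.2.1 x]
      push_cast
      ring
    · intro x x'
      have hcombo : ∀ xx, ∑ a, τ a xx
          = ((lam:ℝ):ℂ) • (∑ a, ρ a xx) + ((1 - lam:ℝ):ℂ) • (∑ a, σ a xx) := by
        intro xx
        rw [Finset.smul_sum, Finset.smul_sum, ← Finset.sum_add_distrib]
        exact Finset.sum_congr rfl fun a _ => hτ a xx
      rw [hcombo x, hcombo x', hρ.2.2 x x', hσ.2.2 x x']
  refine ⟨hτA, ?_⟩
  rw [SteerAux.IS_eq τ]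
  apply csSup_le ⟨0, SteerAux.zero_mem_SSet hs hdB τ hτA⟩
  rintro v ⟨m, dB', nk, V, pXY, hm, hdB', hV, hp, rfl⟩
  have hvρ : sInf (SteerAux.WSet ρ m dB' nk V pXY) ∈ SteerAux.SSet ρ :=
    ⟨m, dB', nk, V, pXY, hm, hdB', hV, hp, rfl⟩
  have hvσ : sInf (SteerAux.WSet σ m dB' nk V pXY) ∈ SteerAux.SSet σ :=
    ⟨m, dB', nk, V, pXY, hm, hdB', hV, hp, rfl⟩
  have hρle : sInf (SteerAux.WSet ρ m dB' nk V pXY) ≤ IS ρ := SteerAux.le_IS hr hs hρ hvρ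
  have hσle : sInf (SteerAux.WSet σ m dB' nk V pXY) ≤ IS σ := SteerAux.le_IS hr hs hσ hvσ
  have hISρ0 : 0 ≤ IS ρ := SteerAux.IS_nonneg hr hs hdB hρ
  have hISσ0 : 0 ≤ IS σ := SteerAux.IS_nonneg hr hs hdB hσ
  have hR0 : 0 ≤ lam * IS ρ + (1 - lam) * IS σ :=
    add_nonneg (mul_nonneg h0 hISρ0) (mul_nonneg h0' hISσ0)
  by_cases hbdd : BddBelow (SteerAux.WSet τ m dB' nk V pXY)
  · apply le_of_forall_pos_le_add
    intro ε hε
    obtain ⟨w1, hw1, hlt1⟩ := SteerAux.exists_lt_sInf_add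
      ⟨_, SteerAux.trivialExt_mem hρ V pXY⟩ hε
    obtain ⟨w2, hw2, hlt2⟩ := SteerAux.exists_lt_sInf_add
      ⟨_, SteerAux.trivialExt_mem hσ V pXY⟩ hε
    have hmem := SteerAux.flag_mem_WSet h0 h1 hτ V pXY hp hw1 hw2
    have hle := csInf_le hbdd hmem
    have e1 : w1 ≤ IS ρ + ε := by linarith
    have e2 : w2 ≤ IS σ + ε := by linarith
    calc sInf (SteerAux.WSet τ m dB' nk V pXY)
        ≤ lam * w1 + (1 - lam) * w2 := hle
      _ ≤ lam * (IS ρ + ε) + (1 - lam) * (IS σ + ε) :=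
          add_le_add (mul_le_mul_of_nonneg_left e1 h0) (mul_le_mul_of_nonneg_left e2 h0')
      _ = lam * IS ρ + (1 - lam) * IS σ + ε := by ring
  · rw [csInf_of_not_bddBelow hbdd, Real.sInf_empty]
    exact hR0
end
end

section
/- For every assemblage {ρ̂^{a,x}}, the intrinsic steerability is never smaller than the restricted intrinsic steerability: S(Ā;B)_ρ̂ ≥ S^R(Ā;B)_ρ̂. -/
open scoped BigOperators
open Matrix Kronecker
open scoped ComplexOrder

noncomputable section

/-- A non-signaling extension of an assemblage on `ℂ^dE`. -/
def IsNSExt {A X B : Type*} [Fintype A] [Fintype B] {dE : ℕ}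
    (ρ : A → X → Matrix B B ℂ)
    (ext : A → X → Matrix (B × Fin dE) (B × Fin dE) ℂ) : Prop :=
  (∀ a x, (ext a x).PosSemidef) ∧
  (∀ a x, ptrace2 (ext a x) = ρ a x) ∧
  (∀ x x' : X, ∑ a, ext a x = ∑ a, ext a x')

/-- The classical-quantum state `∑_{x,a} p(x)·|x⟩⟨x| ⊗ |a⟩⟨a| ⊗ ext^{a,x}`. -/
def cqStateR {A X B : Type*} [DecidableEq A] [DecidableEq X] {dE : ℕ} (p : X → ℝ)
    (ext : A → X → Matrix (B × Fin dE) (B × Fin dE) ℂ) :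
    Matrix ((X × A) × B × Fin dE) ((X × A) × B × Fin dE) ℂ :=
  Matrix.of fun q q' =>
    if q.1 = q'.1 then (p q.1.1 : ℂ) * ext q.1.2 q.1.1 q.2 q'.2 else 0

/-- Restricted intrinsic steerability `S^R(Ā;B)`. -/
noncomputable def SR {A X B : Type*} [Fintype A] [Fintype X] [Fintype B]
    [DecidableEq A] [DecidableEq X] [DecidableEq B]
    (ρ : A → X → Matrix B B ℂ) : ℝ :=
  sSup { v : ℝ | ∃ p : X → ℝ, IsProbDist p ∧
    v = sInf { w : ℝ | ∃ dE : ℕ, 1 ≤ dE ∧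
      ∃ ext : A → X → Matrix (B × Fin dE) (B × Fin dE) ℂ,
        IsNSExt ρ ext ∧ w = CMI (cqStateR p ext) } }

/-! ### Auxiliary entropy toolkit -/

section EntropyToolkit

open Polynomial

lemma entPhi_zero : entPhi 0 = 0 := by simp [entPhi]

lemma entPhi_eq_negMulLog (t : ℝ) : entPhi t = (Real.log 2)⁻¹ * Real.negMulLog t := by
  simp only [entPhi, Real.negMulLog, Real.logb]
  ring

lemma concaveOn_entPhi : ConcaveOn ℝ (Set.Ici (0:ℝ)) entPhi := by
  have h := Real.concaveOn_negMulLog.smul (c := (Real.log 2)⁻¹)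
    (by positivity)
  have he : entPhi = fun x => (Real.log 2)⁻¹ • x.negMulLog := by
    funext t
    simp [entPhi_eq_negMulLog, Pi.smul_apply, smul_eq_mul]
  rw [he]
  exact h

/-- Sum of `entPhi` over the (complex) roots of the characteristic polynomial. -/
noncomputable def rootEntSum {n : Type*} [Fintype n] [DecidableEq n]
    (M : Matrix n n ℂ) : ℝ :=
  ((M.charpoly.roots).map fun z => entPhi z.re).sum

lemma smul_one_eq_diagonal' {n R : Type*} [Fintype n] [DecidableEq n] [CommRing R] (r : R) :
    r • (1 : Matrix n n R) = Matrix.diagonal fun _ => r := by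
  ext i j
  by_cases h : i = j <;> simp [Matrix.one_apply, Matrix.diagonal_apply, h]

lemma charmatrix_eq {n : Type*} [Fintype n] [DecidableEq n] (M : Matrix n n ℂ) :
    Matrix.charmatrix M = (X : ℂ[X]) • (1 : Matrix n n ℂ[X]) - M.map (C : ℂ →+* ℂ[X]) := by
  ext i j
  rw [Matrix.charmatrix_apply]
  by_cases h : i = j <;>
    simp [h, Matrix.diagonal_apply, Matrix.one_apply, Matrix.map_apply]

lemma charpoly_conj_unit {n : Type*} [Fintype n] [DecidableEq n]
    (U M V : Matrix n n ℂ) (h : U * V = 1) :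
    (U * M * V).charpoly = M.charpoly := by
  have hmap : (U.map (C : ℂ →+* ℂ[X])) * (V.map (C : ℂ →+* ℂ[X])) = 1 := by
    rw [← Matrix.map_mul, h, Matrix.map_one] <;> simp
  have key : Matrix.charmatrix (U * M * V)
      = (U.map (C : ℂ →+* ℂ[X])) * Matrix.charmatrix M * (V.map (C : ℂ →+* ℂ[X])) := by
    rw [charmatrix_eq, charmatrix_eq]
    rw [Matrix.mul_sub, Matrix.sub_mul]
    congr 1
    · rw [Matrix.mul_smul, Matrix.mul_one, Matrix.smul_mul, hmap]
    · rw [Matrix.map_mul, Matrix.map_mul]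
  rw [Matrix.charpoly, key, Matrix.det_mul, Matrix.det_mul, Matrix.charpoly]
  have : Matrix.det (U.map (C : ℂ →+* ℂ[X])) * Matrix.det (V.map (C : ℂ →+* ℂ[X])) = 1 := by
    rw [← Matrix.det_mul, hmap, Matrix.det_one]
  calc Matrix.det (U.map (C : ℂ →+* ℂ[X])) * (Matrix.charmatrix M).det
        * Matrix.det (V.map (C : ℂ →+* ℂ[X]))
      = (Matrix.det (U.map (C : ℂ →+* ℂ[X])) * Matrix.det (V.map (C : ℂ →+* ℂ[X])))
        * (Matrix.charmatrix M).det := by ring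
    _ = (Matrix.charmatrix M).det := by rw [this, one_mul]

lemma charpoly_diagonal' {n : Type*} [Fintype n] [DecidableEq n] (d : n → ℂ) :
    (Matrix.diagonal d).charpoly = ∏ i, (X - C (d i)) := by
  have : Matrix.charmatrix (Matrix.diagonal d)
      = Matrix.diagonal (fun i => (X : ℂ[X]) - C (d i)) := by
    ext i j
    rw [Matrix.charmatrix_apply]
    by_cases h : i = j <;> simp [h, Matrix.diagonal_apply]
  rw [Matrix.charpoly, this, Matrix.det_diagonal]

lemma roots_charpoly_of_isHermitian {n : Type*} [Fintype n] [DecidableEq n]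
    {A : Matrix n n ℂ} (hA : A.IsHermitian) :
    A.charpoly.roots = Finset.univ.val.map fun i => ((hA.eigenvalues i : ℝ) : ℂ) := by
  have hU := hA.eigenvectorUnitary.2
  have hUV : (hA.eigenvectorUnitary : Matrix n n ℂ) * star (hA.eigenvectorUnitary : Matrix n n ℂ)
      = 1 := (Matrix.mem_unitaryGroup_iff).mp hU
  have hch : A.charpoly
      = (Matrix.diagonal (RCLike.ofReal ∘ hA.eigenvalues) : Matrix n n ℂ).charpoly := by
    conv_lhs => rw [hA.spectral_theorem]
    exact charpoly_conj_unit _ _ _ hUV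
  rw [hch, charpoly_diagonal']
  have : (∏ i, ((X : ℂ[X]) - C ((RCLike.ofReal ∘ hA.eigenvalues) i)))
      = ((Finset.univ.val.map fun i => ((hA.eigenvalues i : ℝ) : ℂ)).map
          fun a => (X : ℂ[X]) - C a).prod := by
    rw [Multiset.map_map]
    rfl
  rw [this, Polynomial.roots_multiset_prod_X_sub_C]

lemma vnEntropy_eq_rootEntSum {n : Type*} [Fintype n] [DecidableEq n]
    {A : Matrix n n ℂ} (hA : A.IsHermitian) :
    vnEntropy A = rootEntSum A := by
  rw [vnEntropy, dif_pos hA, rootEntSum, roots_charpoly_of_isHermitian hA,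
    Multiset.map_map]
  have hfun : ((fun z : ℂ => entPhi z.re) ∘ fun i => ((hA.eigenvalues i : ℝ) : ℂ))
      = fun i => entPhi (hA.eigenvalues i) := by
    funext i; simp
  rw [hfun]
  rfl

lemma rootEntSum_submatrix {n m : Type*} [Fintype n] [DecidableEq n] [Fintype m] [DecidableEq m]
    (e : m ≃ n) (M : Matrix n n ℂ) :
    rootEntSum (M.submatrix e e) = rootEntSum M := by
  unfold rootEntSum
  have : M.submatrix e e = Matrix.reindex e.symm e.symm M := rfl
  rw [this, Matrix.charpoly_reindex]

lemma isHermitian_submatrix_equiv {n m : Type*} (e : m ≃ n) {M : Matrix n n ℂ} :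
    (M.submatrix e e).IsHermitian ↔ M.IsHermitian := by
  constructor
  · intro h
    have h2 := h.submatrix (e.symm : n → m)
    rw [Matrix.submatrix_submatrix, e.self_comp_symm, Matrix.submatrix_id_id] at h2
    exact h2
  · intro h
    exact h.submatrix e

lemma vnEntropy_submatrix {n m : Type*} [Fintype n] [DecidableEq n] [Fintype m] [DecidableEq m]
    (e : m ≃ n) (M : Matrix n n ℂ) :
    vnEntropy (M.submatrix e e) = vnEntropy M := by
  by_cases h : M.IsHermitian
  · rw [vnEntropy_eq_rootEntSum (h.submatrix e), vnEntropy_eq_rootEntSum h,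
      rootEntSum_submatrix]
  · have h2 : ¬ (M.submatrix e e).IsHermitian := by
      rw [isHermitian_submatrix_equiv]
      exact h
    rw [vnEntropy, vnEntropy, dif_neg h, dif_neg h2]

lemma vnEntropy_diagonal {n : Type*} [Fintype n] [DecidableEq n] (d : n → ℝ) :
    vnEntropy (Matrix.diagonal fun i => ((d i : ℝ) : ℂ)) = ∑ i, entPhi (d i) := by
  have hherm : (Matrix.diagonal fun i => ((d i : ℝ) : ℂ)).IsHermitian := by
    unfold Matrix.IsHermitian
    ext i j
    rcases eq_or_ne i j with h | h
    · simp [Matrix.conjTranspose_apply, Matrix.diagonal_apply, h, Complex.conj_ofReal]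
    · simp [Matrix.conjTranspose_apply, Matrix.diagonal_apply, h, h.symm]
  rw [vnEntropy_eq_rootEntSum hherm, rootEntSum, charpoly_diagonal']
  have : (∏ i, ((X : ℂ[X]) - C ((d i : ℝ) : ℂ)))
      = ((Finset.univ.val.map fun i => ((d i : ℝ) : ℂ)).map
          fun a => (X : ℂ[X]) - C a).prod := by
    rw [Multiset.map_map]; rfl
  rw [this, Polynomial.roots_multiset_prod_X_sub_C, Multiset.map_map]
  have hfun : ((fun z : ℂ => entPhi z.re) ∘ fun i => ((d i : ℝ) : ℂ))
      = fun i => entPhi (d i) := by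
    funext i; simp
  rw [hfun]
  rfl


lemma charpoly_blockDiagonal {o L : Type*} [Fintype o] [DecidableEq o] [Fintype L]
    [DecidableEq L] (M : o → Matrix L L ℂ) :
    (Matrix.blockDiagonal M).charpoly = ∏ k, (M k).charpoly := by
  have key : Matrix.charmatrix (Matrix.blockDiagonal M)
      = Matrix.blockDiagonal (fun k => Matrix.charmatrix (M k)) := by
    ext ⟨i, k⟩ ⟨j, k'⟩
    rw [Matrix.charmatrix_apply, Matrix.blockDiagonal_apply]
    by_cases h : k = k'
    · subst h
      by_cases hij : i = j <;>
        simp [Matrix.blockDiagonal_apply, Matrix.charmatrix_apply, Matrix.diagonal_apply,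
          Prod.ext_iff, hij]
    · simp [Matrix.blockDiagonal_apply, Matrix.diagonal_apply, Prod.ext_iff, h]
  rw [Matrix.charpoly, key, Matrix.det_blockDiagonal]
  rfl

lemma vnEntropy_blockDiagonal {o L : Type*} [Fintype o] [DecidableEq o] [Fintype L]
    [DecidableEq L] (M : o → Matrix L L ℂ) (h : ∀ k, (M k).IsHermitian) :
    vnEntropy (Matrix.blockDiagonal M) = ∑ k, vnEntropy (M k) := by
  have hH : (Matrix.blockDiagonal M).IsHermitian := by
    unfold Matrix.IsHermitian
    rw [Matrix.blockDiagonal_conjTranspose]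
    exact congrArg Matrix.blockDiagonal (funext fun k => h k)
  have hne : (∏ k, (M k).charpoly) ≠ 0 := by
    apply Polynomial.Monic.ne_zero
    exact Polynomial.monic_prod_of_monic _ _ (fun k _ => Matrix.charpoly_monic (M k))
  rw [vnEntropy_eq_rootEntSum hH, rootEntSum, charpoly_blockDiagonal,
    Polynomial.roots_prod _ _ hne, Multiset.map_bind, Multiset.sum_bind]
  calc (Multiset.map (fun k => (Multiset.map (fun z : ℂ => entPhi z.re)
          ((M k).charpoly.roots)).sum) Finset.univ.val).sum
      = ∑ k, rootEntSum (M k) := rfl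
    _ = ∑ k, vnEntropy (M k) :=
        Finset.sum_congr rfl fun k _ => (vnEntropy_eq_rootEntSum (h k)).symm

set_option synthInstance.maxHeartbeats 1000000 in
set_option maxHeartbeats 1600000 in
lemma charpoly_algebraMap_det {k : Type*} [Fintype k] [DecidableEq k] (M : Matrix k k ℂ) :
    algebraMap ℂ[X] (RatFunc ℂ) M.charpoly
      = Matrix.det ((algebraMap ℂ[X] (RatFunc ℂ) X) • (1 : Matrix k k (RatFunc ℂ))
          - M.map ((algebraMap ℂ[X] (RatFunc ℂ)).comp (C : ℂ →+* ℂ[X]))) := by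
  rw [Matrix.charpoly, RingHom.map_det]
  refine congrArg Matrix.det ?_
  rw [charmatrix_eq]
  ext i j
  by_cases h : i = j <;>
    simp [Matrix.map_apply, Matrix.sub_apply, Matrix.smul_apply, Matrix.one_apply, h,
      smul_eq_mul, map_sub, _root_.map_mul]

set_option synthInstance.maxHeartbeats 1000000 in
set_option maxHeartbeats 1600000 in
lemma charpoly_mul_X_pow_comm {m n : Type*} [Fintype m] [DecidableEq m] [Fintype n]
    [DecidableEq n] (A : Matrix m n ℂ) (B : Matrix n m ℂ) :
    (A * B).charpoly * X ^ (Fintype.card n) = (B * A).charpoly * X ^ (Fintype.card m) := by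
  apply RatFunc.algebraMap_injective ℂ
  rw [_root_.map_mul, _root_.map_mul, map_pow, map_pow, charpoly_algebraMap_det,
    charpoly_algebraMap_det]
  set φ : ℂ[X] →+* RatFunc ℂ := (algebraMap ℂ[X] (RatFunc ℂ)) with hφ
  set ψ : ℂ →+* RatFunc ℂ := φ.comp (C : ℂ →+* ℂ[X]) with hψ
  set t : RatFunc ℂ := φ X with hT
  have ht : t ≠ 0 := by
    intro h0
    apply Polynomial.X_ne_zero (R := ℂ)
    apply RatFunc.algebraMap_injective ℂ
    have hx : φ X = 0 := h0
    rw [map_zero]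
    exact hx
  rw [Matrix.map_mul, Matrix.map_mul]
  set A' := A.map ψ
  set B' := B.map ψ
  have hsub1 : t • (1 : Matrix m m (RatFunc ℂ)) - A' * B'
      = t • ((1 : Matrix m m (RatFunc ℂ)) - t⁻¹ • (A' * B')) := by
    rw [smul_sub, smul_smul, mul_inv_cancel₀ ht, one_smul]
  have hsub2 : t • (1 : Matrix n n (RatFunc ℂ)) - B' * A'
      = t • ((1 : Matrix n n (RatFunc ℂ)) - t⁻¹ • (B' * A')) := by
    rw [smul_sub, smul_smul, mul_inv_cancel₀ ht, one_smul]
  rw [hsub1, hsub2, Matrix.det_smul, Matrix.det_smul]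
  have h1 : (1 : Matrix m m (RatFunc ℂ)) - t⁻¹ • (A' * B')
      = 1 - (t⁻¹ • A') * B' := by rw [Matrix.smul_mul]
  have h2 : (1 : Matrix n n (RatFunc ℂ)) - t⁻¹ • (B' * A')
      = 1 - B' * (t⁻¹ • A') := by rw [Matrix.mul_smul]
  rw [h1, h2, Matrix.det_one_sub_mul_comm]
  ring

lemma rootEntSum_mul_comm {m n : Type*} [Fintype m] [DecidableEq m] [Fintype n]
    [DecidableEq n] (A : Matrix m n ℂ) (B : Matrix n m ℂ) :
    rootEntSum (A * B) = rootEntSum (B * A) := by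
  have hpol := charpoly_mul_X_pow_comm A B
  have hXn : (X : ℂ[X]) ^ (Fintype.card n) ≠ 0 := pow_ne_zero _ Polynomial.X_ne_zero
  have hXm : (X : ℂ[X]) ^ (Fintype.card m) ≠ 0 := pow_ne_zero _ Polynomial.X_ne_zero
  have hAB : (A * B).charpoly ≠ 0 := (Matrix.charpoly_monic _).ne_zero
  have hBA : (B * A).charpoly ≠ 0 := (Matrix.charpoly_monic _).ne_zero
  have hroots : (A * B).charpoly.roots + ((X : ℂ[X]) ^ (Fintype.card n)).roots
      = (B * A).charpoly.roots + ((X : ℂ[X]) ^ (Fintype.card m)).roots := by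
    rw [← Polynomial.roots_mul (mul_ne_zero hAB hXn), ← Polynomial.roots_mul
      (mul_ne_zero hBA hXm), hpol]
  have hmap := congrArg (fun s : Multiset ℂ => ((s.map fun z : ℂ => entPhi z.re)).sum) hroots
  simp only [Multiset.map_add, Multiset.sum_add] at hmap
  have hz : ∀ kk : ℕ, ((((X : ℂ[X]) ^ kk).roots.map fun z : ℂ => entPhi z.re)).sum = 0 := by
    intro kk
    rw [Polynomial.roots_X_pow, Multiset.map_nsmul, Multiset.map_singleton,
      Multiset.sum_nsmul, Multiset.sum_singleton]
    simp [entPhi]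
  rw [hz, hz] at hmap
  simpa [rootEntSum] using hmap


/-- Averaging over unitary conjugations does not decrease entropy (coordinate Jensen). -/
lemma vnEntropy_le_avg_conj {n : Type*} [Fintype n] [DecidableEq n] {N : ℕ} (hN : 0 < N)
    {Ω : Matrix n n ℂ} (hΩ : Ω.PosSemidef) (U : Fin N → Matrix n n ℂ)
    (hU1 : ∀ t, U t * (U t)ᴴ = 1) (hU2 : ∀ t, (U t)ᴴ * U t = 1) :
    vnEntropy Ω ≤ vnEntropy ((N : ℝ)⁻¹ • ∑ t, U t * Ω * (U t)ᴴ) := by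
  classical
  have hΩH : Ω.IsHermitian := hΩ.1
  set S : Matrix n n ℂ := ∑ t, U t * Ω * (U t)ᴴ with hS
  have hSH : S.IsHermitian := by
    unfold Matrix.IsHermitian
    rw [Matrix.conjTranspose_sum]
    refine Finset.sum_congr rfl fun t _ => ?_
    rw [Matrix.conjTranspose_mul, Matrix.conjTranspose_mul, Matrix.conjTranspose_conjTranspose,
      hΩH.eq, Matrix.mul_assoc]
  have hρH : ((N : ℝ)⁻¹ • S).IsHermitian := by
    unfold Matrix.IsHermitian
    rw [Matrix.conjTranspose_smul, hSH.eq]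
    norm_num
  set lam : n → ℝ := hΩH.eigenvalues with hlam
  set mu : n → ℝ := hρH.eigenvalues with hmu
  set V : Matrix n n ℂ := (hΩH.eigenvectorUnitary : Matrix n n ℂ) with hV
  set W : Matrix n n ℂ := (hρH.eigenvectorUnitary : Matrix n n ℂ) with hW
  have hVmem := hΩH.eigenvectorUnitary.2
  have hWmem := hρH.eigenvectorUnitary.2
  have hV1 : V * Vᴴ = 1 := by
    have := (Matrix.mem_unitaryGroup_iff).mp hVmem
    rwa [Matrix.star_eq_conjTranspose] at this
  have hV2 : Vᴴ * V = 1 := by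
    have := (Matrix.mem_unitaryGroup_iff').mp hVmem
    rwa [Matrix.star_eq_conjTranspose] at this
  have hW1 : W * Wᴴ = 1 := by
    have := (Matrix.mem_unitaryGroup_iff).mp hWmem
    rwa [Matrix.star_eq_conjTranspose] at this
  have hW2 : Wᴴ * W = 1 := by
    have := (Matrix.mem_unitaryGroup_iff').mp hWmem
    rwa [Matrix.star_eq_conjTranspose] at this
  set G : Fin N → Matrix n n ℂ := fun t => Wᴴ * U t * V with hG
  -- G t is unitary
  have hG1 : ∀ t, G t * (G t)ᴴ = 1 := by
    intro t
    rw [hG]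
    simp only [Matrix.conjTranspose_mul, Matrix.conjTranspose_conjTranspose]
    calc Wᴴ * U t * V * (Vᴴ * ((U t)ᴴ * W))
        = Wᴴ * U t * (V * Vᴴ) * ((U t)ᴴ * W) := by
          simp only [Matrix.mul_assoc]
      _ = Wᴴ * (U t * (U t)ᴴ) * W := by rw [hV1]; simp only [Matrix.mul_assoc, Matrix.one_mul]
      _ = Wᴴ * W := by rw [hU1]; simp only [Matrix.mul_one]
      _ = 1 := hW2
  have hG2 : ∀ t, (G t)ᴴ * G t = 1 := by
    intro t
    rw [hG]
    simp only [Matrix.conjTranspose_mul, Matrix.conjTranspose_conjTranspose]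
    calc Vᴴ * ((U t)ᴴ * W) * (Wᴴ * U t * V)
        = Vᴴ * (U t)ᴴ * (W * Wᴴ) * (U t * V) := by simp only [Matrix.mul_assoc]
      _ = Vᴴ * ((U t)ᴴ * U t) * V := by rw [hW1]; simp only [Matrix.mul_assoc, Matrix.one_mul]
      _ = Vᴴ * V := by rw [hU2]; simp only [Matrix.mul_one]
      _ = 1 := hV2
  -- row and column sums of |G t j i|²
  have hrow : ∀ t j, ∑ i, Complex.normSq (G t j i) = 1 := by
    intro t j
    have h := congrFun (congrFun (hG1 t) j) j
    rw [Matrix.mul_apply] at h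
    have : ∀ i, G t j i * (G t)ᴴ i j = (Complex.normSq (G t j i) : ℂ) := by
      intro i
      rw [Matrix.conjTranspose_apply, RCLike.star_def, Complex.mul_conj]
    rw [Finset.sum_congr rfl fun i _ => this i] at h
    have h1 : ((∑ i, Complex.normSq (G t j i) : ℝ) : ℂ) = 1 := by
      push_cast
      rw [h, Matrix.one_apply_eq]
    exact_mod_cast h1
  have hcol : ∀ t i, ∑ j, Complex.normSq (G t j i) = 1 := by
    intro t i
    have h := congrFun (congrFun (hG2 t) i) i
    rw [Matrix.mul_apply] at h
    have : ∀ j, (G t)ᴴ i j * G t j i = (Complex.normSq (G t j i) : ℂ) := by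
      intro j
      rw [Matrix.conjTranspose_apply, mul_comm, RCLike.star_def, Complex.mul_conj]
    rw [Finset.sum_congr rfl fun j _ => this j] at h
    have h1 : ((∑ j, Complex.normSq (G t j i) : ℝ) : ℂ) = 1 := by
      push_cast
      rw [h, Matrix.one_apply_eq]
    exact_mod_cast h1
  -- the eigenvalues of the average as convex combinations
  have hmud : Wᴴ * ((N : ℝ)⁻¹ • S) * W = Matrix.diagonal (RCLike.ofReal ∘ mu) := by
    have := hρH.conjStarAlgAut_star_eigenvectorUnitary
    simp only [Unitary.conjStarAlgAut_star_apply, Unitary.coe_star,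
      Matrix.star_eq_conjTranspose] at this
    exact this
  have hkey : ∀ j, mu j = ∑ t, ∑ i, ((N : ℝ)⁻¹ * Complex.normSq (G t j i)) * lam i := by
    intro j
    have hΩs : Ω = V * Matrix.diagonal (RCLike.ofReal ∘ lam) * Vᴴ := by
      have := hΩH.spectral_theorem
      simp only [Unitary.conjStarAlgAut_apply, Unitary.coe_star,
        Matrix.star_eq_conjTranspose] at this
      exact this
    have hexp : Wᴴ * ((N : ℝ)⁻¹ • S) * W
        = (N : ℝ)⁻¹ • ∑ t, G t * Matrix.diagonal (RCLike.ofReal ∘ lam) * (G t)ᴴ := by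
      rw [Matrix.mul_smul, Matrix.smul_mul]
      congr 1
      rw [hS, Matrix.mul_sum, Matrix.sum_mul]
      refine Finset.sum_congr rfl fun t _ => ?_
      rw [hG]
      conv_lhs => rw [hΩs]
      simp only [Matrix.conjTranspose_mul, Matrix.conjTranspose_conjTranspose, Matrix.mul_assoc]
    have hjj := Matrix.ext_iff.mpr (hmud.symm.trans hexp) j j
    have hdiag_entry : Matrix.diagonal (RCLike.ofReal ∘ mu) j j = ((mu j : ℝ) : ℂ) := by
      rw [Matrix.diagonal_apply_eq]
      rfl
    rw [hdiag_entry] at hjj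
    have hsum_entry : (((N : ℝ)⁻¹ • ∑ t, G t * Matrix.diagonal (RCLike.ofReal ∘ lam) * (G t)ᴴ
          : Matrix n n ℂ)) j j
        = (((N : ℝ)⁻¹ * ∑ t, ∑ i, Complex.normSq (G t j i) * lam i : ℝ) : ℂ) := by
      rw [Matrix.smul_apply, Matrix.sum_apply]
      have hterm : ∀ t, ((G t * Matrix.diagonal (RCLike.ofReal ∘ lam) * (G t)ᴴ
            : Matrix n n ℂ)) j j
          = ((∑ i, Complex.normSq (G t j i) * lam i : ℝ) : ℂ) := by
        intro t
        rw [Matrix.mul_apply]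
        push_cast
        refine Finset.sum_congr rfl fun i _ => ?_
        rw [Matrix.mul_diagonal, Matrix.conjTranspose_apply, RCLike.star_def]
        have : G t j i * ((RCLike.ofReal ∘ lam) i) * (starRingEnd ℂ) (G t j i)
            = (G t j i * (starRingEnd ℂ) (G t j i)) * ((lam i : ℝ) : ℂ) := by
          have hco : ((RCLike.ofReal ∘ lam) i : ℂ) = ((lam i : ℝ) : ℂ) := rfl
          rw [hco]
          ring
        rw [this, Complex.mul_conj]
      rw [Finset.sum_congr rfl fun t _ => hterm t]
      push_cast
      simp [Finset.mul_sum, smul_eq_mul]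
    rw [hsum_entry] at hjj
    have := Complex.ofReal_injective hjj
    rw [this, Finset.mul_sum]
    refine Finset.sum_congr rfl fun t _ => ?_
    rw [Finset.mul_sum]
    refine Finset.sum_congr rfl fun i _ => ?_
    ring
  -- Jensen per j
  have hjensen : ∀ j, ∑ t, ∑ i, ((N : ℝ)⁻¹ * Complex.normSq (G t j i)) * entPhi (lam i)
      ≤ entPhi (mu j) := by
    intro j
    have hle := concaveOn_entPhi.le_map_sum (t := (Finset.univ : Finset (Fin N × n)))
      (w := fun p => (N : ℝ)⁻¹ * Complex.normSq (G p.1 j p.2))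
      (p := fun p => lam p.2)
      (fun p _ => mul_nonneg (by positivity) (Complex.normSq_nonneg _))
      (by
        rw [Fintype.sum_prod_type]
        have : ∀ t, ∑ i, (N : ℝ)⁻¹ * Complex.normSq (G t j i) = (N : ℝ)⁻¹ := by
          intro t
          rw [← Finset.mul_sum, hrow t j, mul_one]
        rw [Finset.sum_congr rfl fun t _ => this t, Finset.sum_const, Finset.card_univ,
          Fintype.card_fin, nsmul_eq_mul,
          mul_inv_cancel₀ (Nat.cast_ne_zero.mpr hN.ne' : (N : ℝ) ≠ 0)])
      (fun p _ => hΩ.eigenvalues_nonneg p.2)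
    rw [Fintype.sum_prod_type] at hle
    simp only [smul_eq_mul] at hle
    refine le_trans (le_of_eq ?_) (hle.trans (le_of_eq ?_))
    · rfl
    · congr 1
      rw [hkey j, Fintype.sum_prod_type]
  -- assemble
  have hL : vnEntropy Ω = ∑ i, entPhi (lam i) := by rw [vnEntropy, dif_pos hΩH]
  have hR : vnEntropy ((N : ℝ)⁻¹ • S) = ∑ j, entPhi (mu j) := by rw [vnEntropy, dif_pos hρH]
  rw [hL, hR]
  have hNne : (N : ℝ) ≠ 0 := Nat.cast_ne_zero.mpr hN.ne'
  have hchain : ∑ j, ∑ t, ∑ i, ((N : ℝ)⁻¹ * Complex.normSq (G t j i)) * entPhi (lam i)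
      = ∑ i, entPhi (lam i) := by
    rw [Finset.sum_comm]
    have hper_t : ∀ t, ∑ j, ∑ i, ((N : ℝ)⁻¹ * Complex.normSq (G t j i)) * entPhi (lam i)
        = (N : ℝ)⁻¹ * ∑ i, entPhi (lam i) := by
      intro t
      rw [Finset.sum_comm, Finset.mul_sum]
      refine Finset.sum_congr rfl fun i _ => ?_
      have hstep : ∑ j, ((N : ℝ)⁻¹ * Complex.normSq (G t j i)) * entPhi (lam i)
          = ((N : ℝ)⁻¹ * ∑ j, Complex.normSq (G t j i)) * entPhi (lam i) := by
        rw [← Finset.sum_mul, ← Finset.mul_sum]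
      rw [hstep, hcol t i, mul_one]
    rw [Finset.sum_congr rfl fun t _ => hper_t t, Finset.sum_const, Finset.card_univ,
      Fintype.card_fin, nsmul_eq_mul, ← mul_assoc, mul_inv_cancel₀ hNne, one_mul]
  calc ∑ i, entPhi (lam i)
      = ∑ j, ∑ t, ∑ i, ((N : ℝ)⁻¹ * Complex.normSq (G t j i)) * entPhi (lam i) :=
        hchain.symm
    _ ≤ ∑ j, entPhi (mu j) := Finset.sum_le_sum fun j _ => hjensen j


open scoped MatrixOrder in
lemma psd_sqrt_exists {L : Type*} [Fintype L] [DecidableEq L] {A : Matrix L L ℂ}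
    (hA : A.PosSemidef) : ∃ S : Matrix L L ℂ, Sᴴ = S ∧ S * S = A :=
  ⟨CFC.sqrt A, (CFC.sqrt_nonneg A).posSemidef.1, CFC.sqrt_mul_sqrt_self A hA.nonneg⟩

/-- Subadditivity of (unnormalized) von Neumann entropy over sums of PSD matrices. -/
lemma vnEntropy_sum_le {N : ℕ} (hN : 0 < N) {L : Type*} [Fintype L] [DecidableEq L]
    (A : Fin N → Matrix L L ℂ) (hA : ∀ k, (A k).PosSemidef) :
    vnEntropy (∑ k, A k) ≤ ∑ k, vnEntropy (A k) := by
  classical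
  have hNC : (N : ℂ) ≠ 0 := Nat.cast_ne_zero.mpr hN.ne'
  -- the Gram block matrix
  choose sqM hsqM using fun k => psd_sqrt_exists (hA k)
  set R : Matrix (Fin N × L) L ℂ := Matrix.of (fun p j => ((sqM p.1)) p.2 j) with hR
  have hsqH : ∀ k, ((sqM k))ᴴ = (sqM k) := fun k => (hsqM k).1
  set Ω : Matrix (Fin N × L) (Fin N × L) ℂ := R * Rᴴ with hΩdef
  have hΩ : Ω.PosSemidef := Matrix.posSemidef_self_mul_conjTranspose R
  have hΩapp : ∀ p q : Fin N × L, Ω p q = ((sqM p.1) * (sqM q.1)) p.2 q.2 := by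
    intro p q
    rw [hΩdef, Matrix.mul_apply, Matrix.mul_apply]
    refine Finset.sum_congr rfl fun j _ => ?_
    rw [Matrix.conjTranspose_apply, hR]
    have : (star (Matrix.of (fun p (j : L) => ((sqM p.1)) p.2 j) q j) : ℂ)
        = ((sqM q.1))ᴴ j q.2 := by
      rw [Matrix.conjTranspose_apply]
      rfl
    rw [this, hsqH]
    rfl
  have hRtR : Rᴴ * R = ∑ k, A k := by
    ext i j
    rw [Matrix.mul_apply, Matrix.sum_apply]
    have hsplit : (∑ p : Fin N × L, (Rᴴ) i p * R p j)
        = ∑ k : Fin N, ∑ l : L, (Rᴴ) i (k, l) * R (k, l) j := Fintype.sum_prod_type (f := fun p => (Rᴴ) i p * R p j)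
    rw [hsplit]
    refine Finset.sum_congr rfl fun k _ => ?_
    have : ∀ l, (Rᴴ) i (k, l) * R (k, l) j = ((sqM k))ᴴ i l * ((sqM k)) l j := by
      intro l
      rw [Matrix.conjTranspose_apply, hR]
      have h1 : (Matrix.of (fun p (j : L) => ((sqM p.1)) p.2 j)) (k, l) i
          = ((sqM k)) l i := rfl
      have h2 : (Matrix.of (fun p (j : L) => ((sqM p.1)) p.2 j)) (k, l) j
          = ((sqM k)) l j := rfl
      rw [h1, h2, ← Matrix.conjTranspose_apply]
    rw [Finset.sum_congr rfl fun l _ => this l, ← Matrix.mul_apply, hsqH,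
      (hsqM k).2]
  -- roots of unity and pinching unitaries
  set z : ℂ := 2 * (Real.pi : ℂ) * Complex.I / (N : ℂ) with hz
  set ω : ℂ := Complex.exp z with hω
  have hω_ne : ω ≠ 0 := Complex.exp_ne_zero z
  have hzN : z * (N : ℂ) = 2 * (Real.pi : ℂ) * Complex.I := by
    rw [hz]
    exact div_mul_cancel₀ _ hNC
  have hstarω : star ω = ω⁻¹ := by
    rw [hω, RCLike.star_def, ← Complex.exp_conj, ← Complex.exp_neg]
    congr 1
    rw [hz, map_div₀, _root_.map_mul, _root_.map_mul]
    simp only [Complex.conj_I, Complex.conj_ofReal, map_ofNat, map_natCast]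
    ring
  have hωpow : ∀ a : ℕ, ω ^ a = Complex.exp ((a : ℂ) * z) := by
    intro a
    rw [hω, ← Complex.exp_nat_mul]
  have hωN : ∀ a : ℕ, (ω ^ a) ^ N = 1 := by
    intro a
    rw [hωpow, ← Complex.exp_nat_mul]
    have hNz : (N : ℂ) * ((a : ℂ) * z) = (a : ℂ) * (2 * (Real.pi : ℂ) * Complex.I) := by
      calc (N : ℂ) * ((a : ℂ) * z) = (a : ℂ) * (z * (N : ℂ)) := by ring
        _ = (a : ℂ) * (2 * (Real.pi : ℂ) * Complex.I) := by rw [hzN]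
    rw [hNz]
    exact Complex.exp_nat_mul_two_pi_mul_I a
  have hωinj : ∀ k k' : Fin N, ω ^ (k : ℕ) = ω ^ (k' : ℕ) → k = k' := by
    intro k k' he
    by_contra hne
    have hx : Complex.exp (((k : ℕ) : ℂ) * z - ((k' : ℕ) : ℂ) * z) = 1 := by
      rw [Complex.exp_sub, ← hωpow, ← hωpow, he, div_self (pow_ne_zero _ hω_ne)]
    rw [Complex.exp_eq_one_iff] at hx
    obtain ⟨n, hn⟩ := hx
    have h2piI : (2 : ℂ) * (Real.pi : ℂ) * Complex.I ≠ 0 := by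
      simp [Complex.I_ne_zero, Real.pi_ne_zero, Complex.ofReal_eq_zero]
    have h2 : (((k : ℕ) : ℂ) - ((k' : ℕ) : ℂ)) * (2 * (Real.pi : ℂ) * Complex.I)
        = ((n : ℂ) * (N : ℂ)) * (2 * (Real.pi : ℂ) * Complex.I) := by
      calc (((k : ℕ) : ℂ) - ((k' : ℕ) : ℂ)) * (2 * (Real.pi : ℂ) * Complex.I)
          = ((((k : ℕ) : ℂ)) * z - (((k' : ℕ) : ℂ)) * z) * (N : ℂ) := by
            rw [← hzN]; ring
        _ = ((n : ℂ) * (2 * (Real.pi : ℂ) * Complex.I)) * (N : ℂ) := by rw [hn]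
        _ = ((n : ℂ) * (N : ℂ)) * (2 * (Real.pi : ℂ) * Complex.I) := by ring
    have hdiff : ((k : ℕ) : ℂ) - ((k' : ℕ) : ℂ) = (n : ℂ) * (N : ℂ) :=
      mul_right_cancel₀ h2piI h2
    have hint : ((k : ℕ) : ℤ) - ((k' : ℕ) : ℤ) = n * (N : ℤ) := by
      exact_mod_cast hdiff
    have h1 : ((k : ℕ) : ℤ) < N := by exact_mod_cast k.2
    have h2' : ((k' : ℕ) : ℤ) < N := by exact_mod_cast k'.2
    have hk0 : (0 : ℤ) ≤ ((k : ℕ) : ℤ) := by positivity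
    have hk0' : (0 : ℤ) ≤ ((k' : ℕ) : ℤ) := by positivity
    have hne' : ((k : ℕ) : ℤ) ≠ ((k' : ℕ) : ℤ) := by
      intro hc
      apply hne
      apply Fin.ext
      exact_mod_cast hc
    have hNpos : (0 : ℤ) < N := by exact_mod_cast hN
    have hub : n * (N : ℤ) < N := by rw [← hint]; omega
    have hlb : -(N : ℤ) < n * (N : ℤ) := by rw [← hint]; omega
    have hn1 : n < 1 := by nlinarith
    have hn2 : (-1 : ℤ) < n := by nlinarith
    have hn0 : n = 0 := by omega
    rw [hn0, zero_mul] at hint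
    omega
  -- the scalar geometric sums
  have hgeom : ∀ k k' : Fin N, ∑ t : Fin N, ω ^ ((t : ℕ) * (k : ℕ)) * star (ω ^ ((t : ℕ) * (k' : ℕ)))
      = if k = k' then (N : ℂ) else 0 := by
    intro k k'
    have hterm : ∀ t : Fin N, ω ^ ((t : ℕ) * (k : ℕ)) * star (ω ^ ((t : ℕ) * (k' : ℕ)))
        = (ω ^ (k : ℕ) * (ω ^ (k' : ℕ))⁻¹) ^ (t : ℕ) := by
      intro t
      rw [star_pow, hstarω, mul_comm ((t : ℕ)) ((k : ℕ)), pow_mul,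
        mul_comm ((t : ℕ)) ((k' : ℕ)), pow_mul, inv_pow, ← mul_pow]
    rw [Finset.sum_congr rfl fun t _ => hterm t]
    set x : ℂ := ω ^ (k : ℕ) * (ω ^ (k' : ℕ))⁻¹ with hxdef
    rw [Fin.sum_univ_eq_sum_range (fun i => x ^ i) N]
    by_cases hkk : k = k'
    · subst hkk
      rw [hxdef, mul_inv_cancel₀ (pow_ne_zero _ hω_ne)]
      simp
    · rw [if_neg hkk]
      have hx1 : x ≠ 1 := by
        intro hx1
        apply hkk
        apply hωinj
        rw [hxdef] at hx1
        field_simp at hx1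
        exact hx1
      rw [geom_sum_eq hx1]
      have hxN : x ^ N = 1 := by
        rw [hxdef, mul_pow, inv_pow, ← pow_right_comm, hωN, ← pow_right_comm, hωN]
        simp
      rw [hxN]
      simp
  -- pinching unitaries
  set Z : Fin N → Matrix (Fin N × L) (Fin N × L) ℂ :=
    fun t => Matrix.diagonal (fun p : Fin N × L => ω ^ ((t : ℕ) * (p.1 : ℕ))) with hZ
  have hZ1 : ∀ t, Z t * (Z t)ᴴ = 1 := by
    intro t
    rw [hZ, Matrix.diagonal_conjTranspose, Matrix.diagonal_mul_diagonal,
      ← Matrix.diagonal_one]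
    refine congrArg Matrix.diagonal (funext fun p => ?_)
    simp only [Pi.star_apply]
    rw [star_pow, hstarω, ← mul_pow, mul_inv_cancel₀ hω_ne, one_pow]
  have hZ2 : ∀ t, (Z t)ᴴ * Z t = 1 := by
    intro t
    rw [hZ, Matrix.diagonal_conjTranspose, Matrix.diagonal_mul_diagonal,
      ← Matrix.diagonal_one]
    refine congrArg Matrix.diagonal (funext fun p => ?_)
    simp only [Pi.star_apply]
    rw [star_pow, hstarω, ← mul_pow, inv_mul_cancel₀ hω_ne, one_pow]
  -- the average is the pinched (block-diagonal) matrix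
  have havg : (N : ℝ)⁻¹ • ∑ t, Z t * Ω * (Z t)ᴴ
      = (Matrix.blockDiagonal (fun k => A k)).submatrix
          (Equiv.prodComm (Fin N) L) (Equiv.prodComm (Fin N) L) := by
    ext p q
    rw [Matrix.smul_apply, Matrix.sum_apply]
    have hterm : ∀ t, (Z t * Ω * (Z t)ᴴ) p q
        = (ω ^ ((t : ℕ) * (p.1 : ℕ)) * star (ω ^ ((t : ℕ) * (q.1 : ℕ)))) * Ω p q := by
      intro t
      rw [hZ, Matrix.diagonal_conjTranspose, Matrix.mul_diagonal, Matrix.diagonal_mul]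
      simp only [Pi.star_apply]
      ring
    rw [Finset.sum_congr rfl fun t _ => hterm t, ← Finset.sum_mul, hgeom p.1 q.1]
    rw [Matrix.submatrix_apply, Matrix.blockDiagonal_apply]
    by_cases hpq : p.1 = q.1
    · rw [if_pos hpq]
      have he1 : ((Equiv.prodComm (Fin N) L) p).2 = p.1 := rfl
      have he2 : ((Equiv.prodComm (Fin N) L) q).2 = q.1 := rfl
      rw [he1, he2, if_pos hpq]
      rw [hΩapp, ← hpq, (hsqM p.1).2]
      have : ((N : ℝ)⁻¹ : ℝ) • ((N : ℂ) * A p.1 p.2 q.2)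
          = (((N : ℝ)⁻¹ : ℝ) : ℂ) * ((N : ℂ) * A p.1 p.2 q.2) := by
        rw [Complex.real_smul]
      rw [this]
      rw [← mul_assoc]
      have hcan : ((((N : ℝ)⁻¹ : ℝ)) : ℂ) * (N : ℂ) = 1 := by
        push_cast
        field_simp
      rw [hcan, one_mul]
      rfl
    · rw [if_neg hpq]
      have he1 : ((Equiv.prodComm (Fin N) L) p).2 = p.1 := rfl
      have he2 : ((Equiv.prodComm (Fin N) L) q).2 = q.1 := rfl
      rw [he1, he2, if_neg hpq]
      simp
  -- chain of (in)equalities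
  have h1 : vnEntropy (∑ k, A k) = vnEntropy Ω := by
    have hherm1 : (Rᴴ * R).IsHermitian := (Matrix.posSemidef_conjTranspose_mul_self R).1
    rw [← hRtR, vnEntropy_eq_rootEntSum hherm1, vnEntropy_eq_rootEntSum hΩ.1, hΩdef]
    exact (rootEntSum_mul_comm R Rᴴ).symm
  have h2 := vnEntropy_le_avg_conj hN hΩ Z hZ1 hZ2
  have h3 : vnEntropy ((N : ℝ)⁻¹ • ∑ t, Z t * Ω * (Z t)ᴴ) = ∑ k, vnEntropy (A k) := by
    rw [havg, vnEntropy_submatrix, vnEntropy_blockDiagonal _ (fun k => (hA k).1)]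
  rw [h1]
  rw [← h3]
  exact h2


lemma entPhi_mul (a b : ℝ) : entPhi (a * b) = a * entPhi b + b * entPhi a := by
  simp only [entPhi_eq_negMulLog, Real.negMulLog_mul]
  ring

/-- Unnormalized classical max-entropy bound. -/
lemma sum_entPhi_le {K : Type*} [Fintype K] (u : K → ℝ) (hu : ∀ k, 0 ≤ u k) :
    ∑ k, entPhi (u k) ≤ entPhi (∑ k, u k)
      + (∑ k, u k) * Real.logb 2 (Fintype.card K) := by
  classical
  set T : ℝ := ∑ k, u k with hT
  have hT0 : 0 ≤ T := Finset.sum_nonneg fun k _ => hu k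
  rcases eq_or_lt_of_le hT0 with hTeq | hTpos
  · have hall : ∀ k ∈ Finset.univ, u k = 0 :=
      (Finset.sum_eq_zero_iff_of_nonneg fun k _ => hu k).mp hTeq.symm
    have h1 : ∑ k, entPhi (u k) = 0 := by
      apply Finset.sum_eq_zero
      intro k hk
      rw [hall k hk, entPhi_zero]
    rw [h1, ← hTeq, entPhi_zero]
    simp
  · have hKne : Nonempty K := by
      by_contra hempty
      rw [not_nonempty_iff] at hempty
      rw [hT, Finset.sum_eq_zero (fun k _ => (IsEmpty.false k).elim)] at hTpos
      exact lt_irrefl _ hTpos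
    set n : ℕ := Fintype.card K with hn
    have hn1 : 1 ≤ n := Fintype.card_pos
    have hnR : (0 : ℝ) < n := by exact_mod_cast hn1
    set p : K → ℝ := fun k => u k / T with hp
    have hpsum : ∑ k, p k = 1 := by
      rw [hp, ← Finset.sum_div, ← hT, div_self hTpos.ne']
    have hpnn : ∀ k, 0 ≤ p k := fun k => div_nonneg (hu k) hT0
    have hukey : ∀ k, u k = T * p k := by
      intro k
      rw [hp]
      field_simp
    -- termwise bound on negMulLog
    have hterm : ∀ k, Real.negMulLog (p k) ≤ p k * Real.log n + ((n : ℝ)⁻¹ - p k) := by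
      intro k
      rcases eq_or_lt_of_le (hpnn k) with h0 | h0
      · rw [← h0]
        simp only [Real.negMulLog_zero, zero_mul, sub_zero, zero_add]
        positivity
      · have hpn : 0 < p k * n := by positivity
        have hlog := Real.log_le_sub_one_of_pos (show (0:ℝ) < (p k * n)⁻¹ by positivity)
        rw [Real.log_inv] at hlog
        have hmul : p k * (-(Real.log (p k * n))) ≤ p k * ((p k * n)⁻¹ - 1) :=
          mul_le_mul_of_nonneg_left hlog (le_of_lt h0)
        have hls : Real.log (p k * n) = Real.log (p k) + Real.log n := by
          rw [Real.log_mul h0.ne' hnR.ne']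
        have hrhs : p k * ((p k * n)⁻¹ - 1) = (n : ℝ)⁻¹ - p k := by
          field_simp
        rw [hls] at hmul
        rw [hrhs] at hmul
        have : Real.negMulLog (p k) = p k * Real.log n + p k * (-(Real.log (p k) + Real.log n)) := by
          rw [Real.negMulLog]
          ring
        rw [this]
        linarith
    have hsum : ∑ k, Real.negMulLog (p k) ≤ Real.log n := by
      calc ∑ k, Real.negMulLog (p k)
          ≤ ∑ k, (p k * Real.log n + ((n : ℝ)⁻¹ - p k)) :=
            Finset.sum_le_sum fun k _ => hterm k
        _ = (∑ k, p k) * Real.log n + ((n : ℝ) * (n : ℝ)⁻¹ - ∑ k, p k) := by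
            rw [Finset.sum_add_distrib, Finset.sum_sub_distrib, ← Finset.sum_mul,
              Finset.sum_const, Finset.card_univ, nsmul_eq_mul]
        _ = Real.log n := by
            rw [hpsum, mul_inv_cancel₀ hnR.ne']
            ring
    have hplogb : ∑ k, entPhi (p k) ≤ Real.logb 2 n := by
      have h2 : (0:ℝ) ≤ (Real.log 2)⁻¹ := by positivity
      calc ∑ k, entPhi (p k) = (Real.log 2)⁻¹ * ∑ k, Real.negMulLog (p k) := by
            rw [Finset.mul_sum]
            exact Finset.sum_congr rfl fun k _ => entPhi_eq_negMulLog (p k)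
        _ ≤ (Real.log 2)⁻¹ * Real.log n := mul_le_mul_of_nonneg_left hsum h2
        _ = Real.logb 2 n := by rw [Real.logb, div_eq_inv_mul]
    -- assemble
    have hexp : ∑ k, entPhi (u k) = entPhi T + T * ∑ k, entPhi (p k) := by
      calc ∑ k, entPhi (u k) = ∑ k, (T * entPhi (p k) + p k * entPhi T) := by
            refine Finset.sum_congr rfl fun k _ => ?_
            rw [hukey k, entPhi_mul]
        _ = T * ∑ k, entPhi (p k) + (∑ k, p k) * entPhi T := by
            rw [Finset.sum_add_distrib, ← Finset.mul_sum, ← Finset.sum_mul]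
        _ = entPhi T + T * ∑ k, entPhi (p k) := by rw [hpsum]; ring
    rw [hexp]
    have := mul_le_mul_of_nonneg_left hplogb hT0
    linarith


/-- Subadditivity over an arbitrary nonempty index type. -/
lemma vnEntropy_sum_le' {K : Type*} [Fintype K] [DecidableEq K] [Nonempty K]
    {L : Type*} [Fintype L] [DecidableEq L]
    (A : K → Matrix L L ℂ) (hA : ∀ k, (A k).PosSemidef) :
    vnEntropy (∑ k, A k) ≤ ∑ k, vnEntropy (A k) := by
  classical
  set e : Fin (Fintype.card K) ≃ K := (Fintype.equivFin K).symm with he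
  have h1 : (∑ k, A k) = ∑ t, A (e t) := (Equiv.sum_comp e A).symm
  have h2 : (∑ k, vnEntropy (A k)) = ∑ t, vnEntropy (A (e t)) :=
    (Equiv.sum_comp e fun k => vnEntropy (A k)).symm
  rw [h1, h2]
  exact vnEntropy_sum_le Fintype.card_pos _ (fun t => hA (e t))

lemma posSemidef_ofReal_smul {n : Type*} [Fintype n] [DecidableEq n] {c : ℝ} (hc : 0 ≤ c)
    {P : Matrix n n ℂ} (hP : P.PosSemidef) : (((c : ℂ)) • P).PosSemidef := by
  have hkey : ((c : ℂ)) • P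
      = ((Real.sqrt c : ℂ) • (1 : Matrix n n ℂ)) * P
        * (((Real.sqrt c : ℂ)) • (1 : Matrix n n ℂ))ᴴ := by
    rw [Matrix.conjTranspose_smul, Matrix.conjTranspose_one, Matrix.smul_mul, Matrix.one_mul,
      Matrix.mul_smul, Matrix.mul_one, smul_smul]
    congr 1
    rw [RCLike.star_def, Complex.conj_ofReal, ← Complex.ofReal_mul,
      Real.mul_self_sqrt hc]
  rw [hkey]
  exact hP.mul_mul_conjTranspose_same _

lemma instrApply_posSemidef {B : Type*} [Fintype B] {dB' nk : ℕ}
    (V : Fin nk → Matrix (Fin dB') B ℂ) {σ : Matrix B B ℂ} (hσ : σ.PosSemidef)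
    [DecidableEq B] :
    (instrApply V σ).PosSemidef := by
  classical
  unfold instrApply
  refine Finset.sum_induction _ _ (fun a b ha hb => ha.add hb) Matrix.PosSemidef.zero
    (fun u _ => hσ.mul_mul_conjTranspose_same (V u))

lemma instrApply_sum {B A' : Type*} [Fintype B] [Fintype A'] {dB' nk : ℕ}
    (V : Fin nk → Matrix (Fin dB') B ℂ) (σ : A' → Matrix B B ℂ) :
    instrApply V (∑ a, σ a) = ∑ a, instrApply V (σ a) := by
  unfold instrApply
  rw [Finset.sum_comm]
  refine Finset.sum_congr rfl fun u _ => ?_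
  rw [Matrix.mul_sum, Matrix.sum_mul]

lemma posSemidef_diag_re_nonneg {n : Type*} [Fintype n] [DecidableEq n]
    {P : Matrix n n ℂ} (hP : P.PosSemidef) (i : n) : 0 ≤ (P i i).re := by
  have h := hP.dotProduct_mulVec_nonneg (Pi.single i 1)
  have hval : dotProduct (star (Pi.single i (1:ℂ))) (P *ᵥ Pi.single i 1) = P i i := by
    simp [dotProduct, Matrix.mulVec, Pi.single_apply, Finset.sum_ite_eq,
      Finset.mul_sum, mul_comm]
  rw [hval] at h
  exact (Complex.le_def.mp h).1

lemma posSemidef_trace_eq_re {n : Type*} [Fintype n] [DecidableEq n]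
    {P : Matrix n n ℂ} (hP : P.PosSemidef) :
    P.trace = ((P.trace.re : ℝ) : ℂ) ∧ 0 ≤ P.trace.re := by
  constructor
  · have h := Matrix.trace_conjTranspose P
    rw [hP.1.eq] at h
    have : (starRingEnd ℂ) P.trace = P.trace := h.symm
    exact (Complex.conj_eq_iff_re.mp this).symm
  · have : P.trace = ∑ i, P i i := rfl
    rw [this]
    rw [Complex.re_sum]
    exact Finset.sum_nonneg fun i _ => posSemidef_diag_re_nonneg hP i

/-- CMI is invariant under relabeling each tensor factor. -/
lemma CMI_submatrix {K L M K' L' M' : Type*}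
    [Fintype K] [Fintype L] [Fintype M] [DecidableEq K] [DecidableEq L] [DecidableEq M]
    [Fintype K'] [Fintype L'] [Fintype M'] [DecidableEq K'] [DecidableEq L'] [DecidableEq M']
    (eK : K' ≃ K) (eL : L' ≃ L) (eM : M' ≃ M) (σ : Matrix (K × L × M) (K × L × M) ℂ) :
    CMI (σ.submatrix (Equiv.prodCongr eK (Equiv.prodCongr eL eM))
      (Equiv.prodCongr eK (Equiv.prodCongr eL eM))) = CMI σ := by
  have hKM : margKM (σ.submatrix (Equiv.prodCongr eK (Equiv.prodCongr eL eM))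
      (Equiv.prodCongr eK (Equiv.prodCongr eL eM)))
      = (margKM σ).submatrix (Equiv.prodCongr eK eM) (Equiv.prodCongr eK eM) := by
    ext p q
    simp only [margKM, Matrix.of_apply, Matrix.submatrix_apply, Equiv.prodCongr_apply,
      Prod.map]
    exact Equiv.sum_comp eL fun l => σ (eK p.1, l, eM p.2) (eK q.1, l, eM q.2)
  have hLM : margLM (σ.submatrix (Equiv.prodCongr eK (Equiv.prodCongr eL eM))
      (Equiv.prodCongr eK (Equiv.prodCongr eL eM)))
      = (margLM σ).submatrix (Equiv.prodCongr eL eM) (Equiv.prodCongr eL eM) := by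
    ext p q
    simp only [margLM, Matrix.of_apply, Matrix.submatrix_apply, Equiv.prodCongr_apply,
      Prod.map]
    exact Equiv.sum_comp eK fun k => σ (k, eL p.1, eM p.2) (k, eL q.1, eM q.2)
  have hM : margM (σ.submatrix (Equiv.prodCongr eK (Equiv.prodCongr eL eM))
      (Equiv.prodCongr eK (Equiv.prodCongr eL eM)))
      = (margM σ).submatrix eM eM := by
    ext p q
    simp only [margM, Matrix.of_apply, Matrix.submatrix_apply, Equiv.prodCongr_apply,
      Prod.map]
    rw [← Equiv.sum_comp eK fun k => ∑ l, σ (k, l, eM p) (k, l, eM q)]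
    refine Finset.sum_congr rfl fun k _ => ?_
    exact Equiv.sum_comp eL fun l => σ (eK k, l, eM p) (eK k, l, eM q)
  rw [CMI, CMI, hKM, hLM, hM, vnEntropy_submatrix, vnEntropy_submatrix, vnEntropy_submatrix,
    vnEntropy_submatrix]

end EntropyToolkit




section BoundLemma

/-- The CMI of the trivially-extended post-instrument state is at most `log₂(s·r)`. -/
lemma cmi_instr_bound {r s dB : ℕ} (hr : 1 ≤ r) (hs : 1 ≤ s)
    (ρ : Fin r → Fin s → Matrix (Fin dB) (Fin dB) ℂ) (hAss : IsAssemblage ρ)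
    {m dB' nk : ℕ} (V : Fin m → Fin nk → Matrix (Fin dB') (Fin dB) ℂ)
    (pXY : Fin s → Fin m → ℝ)
    (hV : (∑ y, ∑ u, (V y u)ᴴ * V y u) = (1 : Matrix (Fin dB) (Fin dB) ℂ))
    (hp : ∀ y, IsProbDist fun x => pXY x y) :
    CMI (cqStateS pXY ((fun a x y => (instrApply (V y) (ρ a x)).submatrix Prod.fst Prod.fst) :
        Fin r → Fin s → Fin m → Matrix (Fin dB' × Fin 1) (Fin dB' × Fin 1) ℂ))
      ≤ Real.logb 2 ((s * r : ℕ) : ℝ) := by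
  classical
  have hKne : Nonempty (Fin s × Fin r) := ⟨(⟨0, hs⟩, ⟨0, hr⟩)⟩
  set σ' := cqStateS pXY ((fun a x y => (instrApply (V y) (ρ a x)).submatrix Prod.fst Prod.fst) :
      Fin r → Fin s → Fin m → Matrix (Fin dB' × Fin 1) (Fin dB' × Fin 1) ℂ)
    with hσ'
  set A2 : (Fin s × Fin r) × Fin m → Matrix (Fin dB') (Fin dB') ℂ :=
    fun q => ((pXY q.1.1 q.2 : ℝ) : ℂ) • instrApply (V q.2) (ρ q.1.2 q.1.1) with hA2
  have hA2psd : ∀ q, (A2 q).PosSemidef := fun q =>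
    posSemidef_ofReal_smul ((hp q.2).1 q.1.1) (instrApply_posSemidef _ (hAss.1 _ _))
  set B2 : Fin m → Matrix (Fin dB') (Fin dB') ℂ := fun y => ∑ k : Fin s × Fin r, A2 (k, y)
    with hB2
  have hB2psd : ∀ y, (B2 y).PosSemidef := by
    intro y
    rw [hB2]
    refine Finset.sum_induction _ _ (fun a b ha hb => ha.add hb) Matrix.PosSemidef.zero
      (fun k _ => hA2psd (k, y))
  set tval : (Fin s × Fin r) → Fin m → ℝ := fun k y => ((A2 (k, y)).trace).re with htval
  have htval0 : ∀ k y, 0 ≤ tval k y := fun k y => (posSemidef_trace_eq_re (hA2psd _)).2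
  have htvalC : ∀ k y, (A2 (k, y)).trace = ((tval k y : ℝ) : ℂ) :=
    fun k y => (posSemidef_trace_eq_re (hA2psd _)).1
  set tY : Fin m → ℝ := fun y => ∑ k, tval k y with htY
  -- the total state as block-diagonal matrix
  set e1 : ((Fin s × Fin r) × Fin dB' × Fin 1 × Fin m) ≃ (Fin dB' × ((Fin s × Fin r) × Fin m)) :=
    { toFun := fun q => (q.2.1, (q.1, q.2.2.2))
      invFun := fun p => (p.2.1, (p.1, ((0 : Fin 1), p.2.2)))
      left_inv := by
        rintro ⟨k, l, e, y⟩
        rw [Subsingleton.elim (0 : Fin 1) e]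
      right_inv := fun p => rfl } with he1
  have h_σ' : σ' = (Matrix.blockDiagonal (fun ky : (Fin s × Fin r) × Fin m => A2 ky)).submatrix
      e1 e1 := by
    ext q q'
    rw [Matrix.submatrix_apply, Matrix.blockDiagonal_apply]
    rw [hσ']
    show (if q.1 = q'.1 ∧ q.2.2.2 = q'.2.2.2 then
      (pXY q.1.1 q.2.2.2 : ℂ) * (instrApply (V q.2.2.2) (ρ q.1.2 q.1.1)).submatrix
        Prod.fst Prod.fst (q.2.1, q.2.2.1) (q'.2.1, q'.2.2.1) else 0) = _
    by_cases hcond : q.1 = q'.1 ∧ q.2.2.2 = q'.2.2.2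
    · rw [if_pos hcond]
      have hpair : (e1 q).2 = (e1 q').2 := by
        show (q.1, q.2.2.2) = (q'.1, q'.2.2.2)
        rw [Prod.ext_iff]
        exact ⟨hcond.1, hcond.2⟩
      rw [if_pos hpair]
      rw [hA2]
      simp only [Matrix.smul_apply, smul_eq_mul]
      rfl
    · rw [if_neg hcond]
      have hpair : ¬ ((e1 q).2 = (e1 q').2) := by
        intro hc
        apply hcond
        have : (q.1, q.2.2.2) = (q'.1, q'.2.2.2) := hc
        rw [Prod.ext_iff] at this
        exact this
      rw [if_neg hpair]
  have hH1 : vnEntropy σ' = ∑ ky : (Fin s × Fin r) × Fin m, vnEntropy (A2 ky) := by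
    rw [h_σ', vnEntropy_submatrix, vnEntropy_blockDiagonal _ (fun ky => (hA2psd ky).1)]
  -- the LM marginal
  set e2 : (Fin dB' × Fin 1 × Fin m) ≃ (Fin dB' × Fin m) :=
    { toFun := fun p => (p.1, p.2.2)
      invFun := fun p => (p.1, ((0 : Fin 1), p.2))
      left_inv := by
        rintro ⟨l, e, y⟩
        rw [Subsingleton.elim (0 : Fin 1) e]
      right_inv := fun p => rfl } with he2
  have h_LM : margLM σ' = (Matrix.blockDiagonal B2).submatrix e2 e2 := by
    ext p q
    rw [Matrix.submatrix_apply, Matrix.blockDiagonal_apply]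
    show (∑ k : Fin s × Fin r, σ' (k, p) (k, q)) = _
    have hterm : ∀ k : Fin s × Fin r, σ' (k, p) (k, q)
        = if p.2.2 = q.2.2 then A2 (k, p.2.2) p.1 q.1 else 0 := by
      intro k
      rw [hσ']
      show (if (k, p).1 = (k, q).1 ∧ p.2.2 = q.2.2 then
        (pXY k.1 p.2.2 : ℂ) * (instrApply (V p.2.2) (ρ k.2 k.1)).submatrix
          Prod.fst Prod.fst (p.1, p.2.1) (q.1, q.2.1) else 0) = _
      by_cases hy : p.2.2 = q.2.2
      · rw [if_pos ⟨rfl, hy⟩, if_pos hy, hA2]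
        simp only [Matrix.smul_apply, smul_eq_mul]
        rfl
      · rw [if_neg (fun hc => hy hc.2), if_neg hy]
    rw [Finset.sum_congr rfl fun k _ => hterm k]
    by_cases hy : p.2.2 = q.2.2
    · simp only [if_pos hy]
      show _ = if (e2 p).2 = (e2 q).2 then B2 (e2 p).2 (e2 p).1 (e2 q).1 else 0
      have : (e2 p).2 = p.2.2 := rfl
      rw [if_pos (show (e2 p).2 = (e2 q).2 from hy), hB2]
      simp only [Matrix.sum_apply]
      rfl
    · simp only [if_neg hy]
      rw [if_neg (show ¬ (e2 p).2 = (e2 q).2 from hy)]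
      simp
  have hH2 : vnEntropy (margLM σ') = ∑ y, vnEntropy (B2 y) := by
    rw [h_LM, vnEntropy_submatrix, vnEntropy_blockDiagonal _ (fun y => (hB2psd y).1)]
  -- the KM marginal
  have h_KM : margKM σ' = Matrix.diagonal
      (fun p : (Fin s × Fin r) × Fin 1 × Fin m => ((tval p.1 p.2.2 : ℝ) : ℂ)) := by
    ext p q
    show (∑ l : Fin dB', σ' (p.1, l, p.2) (q.1, l, q.2)) = _
    have hterm : ∀ l : Fin dB', σ' (p.1, l, p.2) (q.1, l, q.2)
        = if p.1 = q.1 ∧ p.2.2 = q.2.2 then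
            (pXY p.1.1 p.2.2 : ℂ) * instrApply (V p.2.2) (ρ p.1.2 p.1.1) l l else 0 := by
      intro l
      rw [hσ']
      rfl
    rw [Finset.sum_congr rfl fun l _ => hterm l]
    by_cases hcond : p.1 = q.1 ∧ p.2.2 = q.2.2
    · rw [Finset.sum_congr rfl fun l _ => if_pos hcond, ← Finset.mul_sum]
      have hpq : p = q := by
        obtain ⟨k, e, y⟩ := p
        obtain ⟨k', e', y'⟩ := q
        obtain ⟨h1, h2⟩ := hcond
        simp only at h1 h2
        rw [h1, h2, Subsingleton.elim e e']
      rw [hpq, Matrix.diagonal_apply_eq]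
      have : (∑ l, instrApply (V q.2.2) (ρ q.1.2 q.1.1) l l)
          = (instrApply (V q.2.2) (ρ q.1.2 q.1.1)).trace := rfl
      rw [this]
      have h2 := htvalC q.1 q.2.2
      rw [hA2, Matrix.trace_smul, smul_eq_mul] at h2
      rw [h2]
    · rw [Finset.sum_congr rfl fun l _ => if_neg hcond, Finset.sum_const_zero,
        Matrix.diagonal_apply_ne]
      · intro hc
        apply hcond
        rw [hc]
        exact ⟨rfl, rfl⟩
  have hH3 : vnEntropy (margKM σ') = ∑ y, ∑ k, entPhi (tval k y) := by
    rw [h_KM, vnEntropy_diagonal]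
    have hstep : ∑ p : (Fin s × Fin r) × Fin 1 × Fin m, entPhi (tval p.1 p.2.2)
        = ∑ k : Fin s × Fin r, ∑ w : Fin 1 × Fin m, entPhi (tval k w.2) :=
      Fintype.sum_prod_type (f := fun p : (Fin s × Fin r) × Fin 1 × Fin m =>
        entPhi (tval p.1 p.2.2))
    rw [hstep]
    have hstep2 : ∀ k : Fin s × Fin r, ∑ w : Fin 1 × Fin m, entPhi (tval k w.2)
        = ∑ y, entPhi (tval k y) := by
      intro k
      have := Fintype.sum_prod_type (f := fun w : Fin 1 × Fin m => entPhi (tval k w.2))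
      rw [this, Fin.sum_univ_one]
    rw [Finset.sum_congr rfl fun k _ => hstep2 k, Finset.sum_comm]
  -- the M marginal
  have h_M : margM σ' = Matrix.diagonal (fun p : Fin 1 × Fin m => ((tY p.2 : ℝ) : ℂ)) := by
    ext p q
    show (∑ k : Fin s × Fin r, ∑ l : Fin dB', σ' (k, l, p) (k, l, q)) = _
    have hterm : ∀ k l, σ' (k, l, p) (k, l, q)
        = if p.2 = q.2 then
            (pXY k.1 p.2 : ℂ) * instrApply (V p.2) (ρ k.2 k.1) l l else 0 := by
      intro k l
      rw [hσ']
      show (if (k,l,p).1 = (k,l,q).1 ∧ p.2 = q.2 then _ else 0) = _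
      by_cases hy : p.2 = q.2
      · rw [if_pos ⟨rfl, hy⟩, if_pos hy]
        rfl
      · rw [if_neg (fun hc => hy hc.2), if_neg hy]
    rw [Finset.sum_congr rfl fun k _ => Finset.sum_congr rfl fun l _ => hterm k l]
    by_cases hy : p.2 = q.2
    · simp only [if_pos hy]
      have hpq : p = q := by
        obtain ⟨e, y⟩ := p
        obtain ⟨e', y'⟩ := q
        simp only at hy
        rw [hy, Subsingleton.elim e e']
      rw [hpq, Matrix.diagonal_apply_eq]
      have hout : ∀ k : Fin s × Fin r,
          ∑ l, (pXY k.1 q.2 : ℂ) * instrApply (V q.2) (ρ k.2 k.1) l l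
            = ((tval k q.2 : ℝ) : ℂ) := by
        intro k
        rw [← Finset.mul_sum]
        have h2 := htvalC k q.2
        rw [hA2, Matrix.trace_smul, smul_eq_mul] at h2
        exact h2
      rw [Finset.sum_congr rfl fun k _ => hout k]
      rw [htY]
      push_cast
      rfl
    · simp only [if_neg hy]
      rw [Matrix.diagonal_apply_ne]
      · simp
      · intro hc
        apply hy
        rw [hc]
  have hH4 : vnEntropy (margM σ') = ∑ y, entPhi (tY y) := by
    rw [h_M, vnEntropy_diagonal]
    have := Fintype.sum_prod_type (f := fun w : Fin 1 × Fin m => entPhi (tY w.2))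
    rw [this, Fin.sum_univ_one]
  -- reshape the total entropy
  have hH1' : vnEntropy σ' = ∑ y, ∑ k, vnEntropy (A2 (k, y)) := by
    rw [hH1]
    have := Fintype.sum_prod_type (f := fun ky : (Fin s × Fin r) × Fin m => vnEntropy (A2 ky))
    rw [this, Finset.sum_comm]
  -- normalization
  have hq1 : ∑ y, tY y = 1 := by
    set x0 : Fin s := ⟨0, hs⟩ with hx0
    set σB : Matrix (Fin dB) (Fin dB) ℂ := ∑ a, ρ a x0 with hσB
    have htrinstr : ∀ a x y, (instrApply (V y) (ρ a x)).trace
        = (((instrApply (V y) (ρ a x)).trace.re : ℝ) : ℂ) :=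
      fun a x y => (posSemidef_trace_eq_re (instrApply_posSemidef _ (hAss.1 a x))).1
    have htval_eq : ∀ k y, (tval k y : ℂ)
        = (pXY k.1 y : ℂ) * (instrApply (V y) (ρ k.2 k.1)).trace := by
      intro k y
      rw [← htvalC k y, hA2, Matrix.trace_smul, smul_eq_mul]
    have hC : ((∑ y, tY y : ℝ) : ℂ) = ∑ y, ∑ x : Fin s, (pXY x y : ℂ)
        * (∑ a, instrApply (V y) (ρ a x)).trace := by
      push_cast
      refine Finset.sum_congr rfl fun y _ => ?_
      have hks : ∑ k : Fin s × Fin r, ((tval k y : ℝ) : ℂ)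
          = ∑ x : Fin s, ∑ a : Fin r, ((tval (x, a) y : ℝ) : ℂ) :=
        Fintype.sum_prod_type (f := fun k : Fin s × Fin r => ((tval k y : ℝ) : ℂ))
      rw [htY]
      push_cast
      rw [hks]
      refine Finset.sum_congr rfl fun x _ => ?_
      rw [Matrix.trace_sum, Finset.mul_sum]
      refine Finset.sum_congr rfl fun a _ => ?_
      exact htval_eq (x, a) y
    have hsum_a : ∀ x y, ∑ a, instrApply (V y) (ρ a x) = instrApply (V y) σB := by
      intro x y
      rw [← instrApply_sum, hσB, hAss.2.2 x x0]
    have hstep2 : ∑ y, ∑ x : Fin s, (pXY x y : ℂ) * (∑ a, instrApply (V y) (ρ a x)).trace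
        = ∑ y, (instrApply (V y) σB).trace := by
      refine Finset.sum_congr rfl fun y _ => ?_
      rw [Finset.sum_congr rfl fun x _ => by rw [hsum_a x y]]
      rw [← Finset.sum_mul]
      have : (∑ x : Fin s, (pXY x y : ℂ)) = 1 := by
        have h := (hp y).2
        rw [show (∑ x : Fin s, (pXY x y : ℂ)) = (((∑ x : Fin s, pXY x y : ℝ)) : ℂ) by
          push_cast; rfl, h, Complex.ofReal_one]
      rw [this, one_mul]
    have hstep3 : ∑ y, (instrApply (V y) σB).trace = σB.trace := by
      have hone : ∀ y, (instrApply (V y) σB).trace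
          = ((∑ u, (V y u)ᴴ * V y u) * σB).trace := by
        intro y
        unfold instrApply
        rw [Matrix.trace_sum, Matrix.sum_mul, Matrix.trace_sum]
        refine Finset.sum_congr rfl fun u _ => ?_
        rw [Matrix.trace_mul_comm, Matrix.mul_assoc]
      rw [Finset.sum_congr rfl fun y _ => hone y]
      have : ∑ y, ((∑ u, (V y u)ᴴ * V y u) * σB).trace
          = ((∑ y, ∑ u, (V y u)ᴴ * V y u) * σB).trace := by
        rw [Matrix.sum_mul, Matrix.trace_sum]
      rw [this, hV, Matrix.one_mul]
    have hstep4 : σB.trace = 1 := by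
      rw [hσB, Matrix.trace_sum]
      exact hAss.2.1 x0
    have : ((∑ y, tY y : ℝ) : ℂ) = 1 := by
      rw [hC, hstep2, hstep3, hstep4]
    exact_mod_cast this
  -- per-y inequalities and conclusion
  have htY0 : ∀ y, 0 ≤ tY y := fun y => Finset.sum_nonneg fun k _ => htval0 k y
  have hsub : ∀ y, vnEntropy (B2 y) ≤ ∑ k, vnEntropy (A2 (k, y)) := by
    intro y
    rw [hB2]
    exact vnEntropy_sum_le' _ (fun k => hA2psd (k, y))
  have hcls : ∀ y, ∑ k, entPhi (tval k y)
      ≤ entPhi (tY y) + tY y * Real.logb 2 ((s * r : ℕ) : ℝ) := by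
    intro y
    have := sum_entPhi_le (fun k => tval k y) (fun k => htval0 k y)
    have hcard : (Fintype.card (Fin s × Fin r) : ℝ) = ((s * r : ℕ) : ℝ) := by
      simp [Fintype.card_prod]
    rw [hcard] at this
    exact this
  rw [CMI, hH1', hH2, hH3, hH4]
  have hstep : (∑ y, ∑ k, entPhi (tval k y)) + (∑ y, vnEntropy (B2 y))
      - (∑ y, ∑ k, vnEntropy (A2 (k, y))) - (∑ y, entPhi (tY y))
      = ∑ y, ((∑ k, entPhi (tval k y)) + vnEntropy (B2 y)
          - (∑ k, vnEntropy (A2 (k, y))) - entPhi (tY y)) := by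
    rw [Finset.sum_sub_distrib, Finset.sum_sub_distrib, Finset.sum_add_distrib]
  rw [hstep]
  calc ∑ y, ((∑ k, entPhi (tval k y)) + vnEntropy (B2 y)
        - (∑ k, vnEntropy (A2 (k, y))) - entPhi (tY y))
      ≤ ∑ y, tY y * Real.logb 2 ((s * r : ℕ) : ℝ) := by
        refine Finset.sum_le_sum fun y _ => ?_
        have h1 := hsub y
        have h2 := hcls y
        linarith
    _ = Real.logb 2 ((s * r : ℕ) : ℝ) := by
        rw [← Finset.sum_mul, hq1, one_mul]

end BoundLemma

/-- Intrinsic steerability is never smaller than restricted intrinsic steerability. -/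
theorem restricted_le_intrinsic_steerability {r s dB : ℕ}
    (hr : 1 ≤ r) (hs : 1 ≤ s) (hdB : 1 ≤ dB)
    (ρ : Fin r → Fin s → Matrix (Fin dB) (Fin dB) ℂ)
    (hA : IsAssemblage ρ) :
    SR ρ ≤ IS ρ := by
  classical
  -- notation for the two sup-sets
  set S1 : Set ℝ := { v : ℝ | ∃ p : Fin s → ℝ, IsProbDist p ∧
    v = sInf { w : ℝ | ∃ dE : ℕ, 1 ≤ dE ∧
      ∃ ext : Fin r → Fin s → Matrix (Fin dB × Fin dE) (Fin dB × Fin dE) ℂ,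
        IsNSExt ρ ext ∧ w = CMI (cqStateR p ext) } } with hS1
  set S2 : Set ℝ := { v : ℝ | ∃ (m dB' nk : ℕ) (V : Fin m → Fin nk → Matrix (Fin dB') (Fin dB) ℂ)
      (pXY : Fin s → Fin m → ℝ), 1 ≤ m ∧ 1 ≤ dB' ∧
      (∑ y, ∑ u, (V y u)ᴴ * V y u) = (1 : Matrix (Fin dB) (Fin dB) ℂ) ∧
      (∀ y, IsProbDist fun x => pXY x y) ∧
      v = sInf { w : ℝ | ∃ dE : ℕ, 1 ≤ dE ∧
        ∃ ext : Fin r → Fin s → Fin m → Matrix (Fin dB' × Fin dE) (Fin dB' × Fin dE) ℂ,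
          (∀ a x y, (ext a x y).PosSemidef) ∧
          (∀ a x y, ptrace2 (ext a x y) = instrApply (V y) (ρ a x)) ∧
          (∀ (x x' : Fin s) (y : Fin m), ∑ a, ext a x y = ∑ a, ext a x' y) ∧
          w = CMI (cqStateS pXY ext) } } with hS2
  have hSR : SR ρ = sSup S1 := rfl
  have hIS : IS ρ = sSup S2 := rfl
  -- the identity instrument
  set V1 : Fin 1 → Fin 1 → Matrix (Fin dB) (Fin dB) ℂ := fun _ _ => 1 with hV1
  have hinstr_id : ∀ (y : Fin 1) (σ : Matrix (Fin dB) (Fin dB) ℂ), instrApply (V1 y) σ = σ := by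
    intro y σ
    simp [instrApply, hV1]
  have hV1complete : (∑ y, ∑ u, (V1 y u)ᴴ * V1 y u) = (1 : Matrix (Fin dB) (Fin dB) ℂ) := by
    simp [hV1]
  -- equivalence dropping the trivial Fin 1 factor
  set eM : ∀ dE : ℕ, (Fin dE × Fin 1) ≃ Fin dE := fun dE =>
    { toFun := fun w => w.1
      invFun := fun e => (e, (0 : Fin 1))
      left_inv := by
        rintro ⟨e, u⟩
        rw [Subsingleton.elim (0 : Fin 1) u]
      right_inv := fun e => rfl } with heM
  -- relating the two cq states
  have hstate : ∀ (p : Fin s → ℝ) (dE : ℕ)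
      (ext : Fin r → Fin s → Matrix (Fin dB × Fin dE) (Fin dB × Fin dE) ℂ),
      cqStateS (fun x (_ : Fin 1) => p x) (fun a x (_ : Fin 1) => ext a x)
        = (cqStateR p ext).submatrix
          (Equiv.prodCongr (Equiv.refl (Fin s × Fin r))
            (Equiv.prodCongr (Equiv.refl (Fin dB)) (eM dE)))
          (Equiv.prodCongr (Equiv.refl (Fin s × Fin r))
            (Equiv.prodCongr (Equiv.refl (Fin dB)) (eM dE))) := by
    intro p dE ext
    ext q q'
    rw [Matrix.submatrix_apply]
    show (if q.1 = q'.1 ∧ q.2.2.2 = q'.2.2.2 then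
        (p q.1.1 : ℂ) * ext q.1.2 q.1.1 (q.2.1, q.2.2.1) (q'.2.1, q'.2.2.1) else 0)
      = (if q.1 = q'.1 then
        (p q.1.1 : ℂ) * ext q.1.2 q.1.1 (q.2.1, q.2.2.1) (q'.2.1, q'.2.2.1) else 0)
    by_cases h : q.1 = q'.1
    · rw [if_pos ⟨h, Subsingleton.elim _ _⟩, if_pos h]
    · rw [if_neg (fun hc => h hc.1), if_neg h]
  have hCMIeq : ∀ (p : Fin s → ℝ) (dE : ℕ)
      (ext : Fin r → Fin s → Matrix (Fin dB × Fin dE) (Fin dB × Fin dE) ℂ),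
      CMI (cqStateS (fun x (_ : Fin 1) => p x) (fun a x (_ : Fin 1) => ext a x))
        = CMI (cqStateR p ext) := by
    intro p dE ext
    rw [hstate p dE ext]
    exact CMI_submatrix (Equiv.refl _) (Equiv.refl _) (eM dE) (cqStateR p ext)
  -- S1 ⊆ S2
  have hsubset : S1 ⊆ S2 := by
    rintro v ⟨p, hpd, hv⟩
    refine ⟨1, dB, 1, V1, fun x _ => p x, le_refl 1, hdB, hV1complete, fun _ => hpd, ?_⟩
    rw [hv]
    congr 1
    ext w
    constructor
    · rintro ⟨dE, hdE, ext, hNS, hw⟩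
      refine ⟨dE, hdE, fun a x _ => ext a x, fun a x y => hNS.1 a x, ?_, ?_, ?_⟩
      · intro a x y
        rw [hinstr_id y (ρ a x)]
        exact hNS.2.1 a x
      · intro x x' y
        exact hNS.2.2 x x'
      · rw [hw, hCMIeq p dE ext]
    · rintro ⟨dE, hdE, ext', hpsd, hptr, hns, hw⟩
      refine ⟨dE, hdE, fun a x => ext' a x 0, ⟨fun a x => hpsd a x 0, fun a x => ?_,
        fun x x' => hns x x' 0⟩, ?_⟩
      · rw [hptr a x 0, hinstr_id 0 (ρ a x)]
      · have hext : ext' = fun a x (_ : Fin 1) => ext' a x 0 := by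
          funext a x y
          rw [Subsingleton.elim y (0 : Fin 1)]
        rw [hw, hext, hCMIeq p dE (fun a x => ext' a x 0)]
  -- S1 is nonempty
  have hS1ne : S1.Nonempty := by
    refine ⟨_, ⟨fun _ => (s : ℝ)⁻¹, ⟨fun _ => by positivity, ?_⟩, rfl⟩⟩
    rw [Finset.sum_const, Finset.card_univ, Fintype.card_fin, nsmul_eq_mul]
    rw [mul_inv_cancel₀ (Nat.cast_ne_zero.mpr (by omega : s ≠ 0) : (s : ℝ) ≠ 0)]
  -- S2 is bounded above
  have hC0 : (0 : ℝ) ≤ Real.logb 2 ((s * r : ℕ) : ℝ) := by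
    apply Real.logb_nonneg (by norm_num)
    have : (1 : ℕ) ≤ s * r := Nat.one_le_iff_ne_zero.mpr (by positivity)
    exact_mod_cast this
  have hbdd : BddAbove S2 := by
    refine ⟨Real.logb 2 ((s * r : ℕ) : ℝ), ?_⟩
    rintro v ⟨m, dB', nk, V, pXY, hm, hdB', hVc, hpd, hv⟩
    set ext₀ : Fin r → Fin s → Fin m → Matrix (Fin dB' × Fin 1) (Fin dB' × Fin 1) ℂ :=
      fun a x y => (instrApply (V y) (ρ a x)).submatrix Prod.fst Prod.fst with hext₀
    have hNSinstr : ∀ (x x' : Fin s) (y : Fin m),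
        ∑ a, instrApply (V y) (ρ a x) = ∑ a, instrApply (V y) (ρ a x') := by
      intro x x' y
      rw [← instrApply_sum, ← instrApply_sum, hA.2.2 x x']
    have hmem : CMI (cqStateS pXY ext₀) ∈ { w : ℝ | ∃ dE : ℕ, 1 ≤ dE ∧
        ∃ ext : Fin r → Fin s → Fin m → Matrix (Fin dB' × Fin dE) (Fin dB' × Fin dE) ℂ,
          (∀ a x y, (ext a x y).PosSemidef) ∧
          (∀ a x y, ptrace2 (ext a x y) = instrApply (V y) (ρ a x)) ∧
          (∀ (x x' : Fin s) (y : Fin m), ∑ a, ext a x y = ∑ a, ext a x' y) ∧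
          w = CMI (cqStateS pXY ext) } := by
      refine ⟨1, le_refl 1, ext₀, ?_, ?_, ?_, rfl⟩
      · intro a x y
        exact (instrApply_posSemidef _ (hA.1 a x)).submatrix Prod.fst
      · intro a x y
        ext i i'
        show (∑ j : Fin 1, ext₀ a x y (i, j) (i', j)) = instrApply (V y) (ρ a x) i i'
        rw [hext₀]
        simp
      · intro x x' y
        ext pp qq
        rw [Matrix.sum_apply, Matrix.sum_apply]
        have h1 := congrFun (congrFun (hNSinstr x x' y) pp.1) qq.1
        simp only [Matrix.sum_apply] at h1
        simpa [hext₀] using h1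
    have hbound : CMI (cqStateS pXY ext₀) ≤ Real.logb 2 ((s * r : ℕ) : ℝ) := by
      rw [hext₀]
      exact cmi_instr_bound hr hs ρ hA V pXY hVc hpd
    rw [hv]
    by_cases hbb : BddBelow { w : ℝ | ∃ dE : ℕ, 1 ≤ dE ∧
        ∃ ext : Fin r → Fin s → Fin m → Matrix (Fin dB' × Fin dE) (Fin dB' × Fin dE) ℂ,
          (∀ a x y, (ext a x y).PosSemidef) ∧
          (∀ a x y, ptrace2 (ext a x y) = instrApply (V y) (ρ a x)) ∧
          (∀ (x x' : Fin s) (y : Fin m), ∑ a, ext a x y = ∑ a, ext a x' y) ∧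
          w = CMI (cqStateS pXY ext) }
    · exact le_trans (csInf_le hbb hmem) hbound
    · rw [csInf_of_not_bddBelow hbb, Real.sInf_empty]
      exact hC0
  rw [hSR, hIS]
  exact csSup_le_csSup hbdd hS1ne hsubset
end
end
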